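/- arXiv:1302.5618 — 5 statements merged into one kernel-verified Lean document; each statement's English description precedes it below -/
import Mathlib

section
/- Let x ∈ V and let y ∈ V be special. Then for every w ∈ W there exists ℓ ∈ X_{x,y}^+ such that the translation t(ℓ) lies in the double coset W_y w W_x; in other words, the translations t(ℓ) with ℓ ∈ X_{x,y}^+ exhaust the double coset space W_y\W/W_x. -/
namespace Stmt0Aux

variable {V : Type*} [AddCommGroup V] [Module ℝ V]

/-- A permutation that acts linearly, preserves the lattice `Q`, moves `z` by a lattice
vector, and acts on `Φ` by duality. -/
structure Good (Φ : Set (Module.Dual ℝ V)) (Q : AddSubgroup V) (z : V)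
    (g : Equiv.Perm V) : Prop where
  add : ∀ a b : V, g (a + b) = g a + g b
  smul : ∀ (c : ℝ) (a : V), g (c • a) = c • g a
  qmem : ∀ ℓ ∈ Q, g ℓ ∈ Q
  zmem : z - g z ∈ Q
  dual : ∀ α ∈ Φ, ∃ β ∈ Φ, ∀ v : V, α (g v) = β v

namespace Good

variable {Φ : Set (Module.Dual ℝ V)} {Q : AddSubgroup V} {z : V} {g h : Equiv.Perm V}

lemma sub (hg : Good Φ Q z g) (a b : V) : g (a - b) = g a - g b := by
  have h := hg.add (a - b) b
  rw [sub_add_cancel] at h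
  rw [eq_sub_iff_add_eq, ← h]

lemma zero (hg : Good Φ Q z g) : g 0 = 0 := by
  have := hg.smul 0 0; simpa using this

lemma neg (hg : Good Φ Q z g) (a : V) : g (-a) = - g a := by
  have := hg.sub 0 a
  rw [hg.zero] at this
  simpa using this

lemma one : Good Φ Q z (1 : Equiv.Perm V) where
  add := fun _ _ => rfl
  smul := fun _ _ => rfl
  qmem := fun _ h => h
  zmem := by simpa using (zero_mem Q)
  dual := fun α hα => ⟨α, hα, fun _ => rfl⟩

lemma mul (hg : Good Φ Q z g) (hh : Good Φ Q z h) : Good Φ Q z (g * h) where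
  add a b := by simp [Equiv.Perm.mul_apply, hh.add, hg.add]
  smul c a := by simp [Equiv.Perm.mul_apply, hh.smul, hg.smul]
  qmem ℓ hl := by simpa [Equiv.Perm.mul_apply] using hg.qmem _ (hh.qmem ℓ hl)
  zmem := by
    have e : z - (g * h) z = (z - g z) + g (z - h z) := by
      rw [Equiv.Perm.mul_apply, hg.sub]; abel
    rw [e]; exact add_mem hg.zmem (hg.qmem _ hh.zmem)
  dual α hα := by
    obtain ⟨β, hβ, hβe⟩ := hg.dual α hα
    obtain ⟨γ, hγ, hγe⟩ := hh.dual β hβ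
    exact ⟨γ, hγ, fun v => by rw [Equiv.Perm.mul_apply, hβe, hγe]⟩

end Good

lemma Qint (Φ : Set (Module.Dual ℝ V)) (coroot : Module.Dual ℝ V → V)
    (hcrys : ∀ α ∈ Φ, ∀ β ∈ Φ, ∃ n : ℤ, β (coroot α) = (n : ℝ)) :
    ∀ ℓ ∈ AddSubgroup.closure (coroot '' Φ), ∀ α ∈ Φ, ∃ n : ℤ, α ℓ = (n : ℝ) := by
  intro ℓ hℓ
  induction hℓ using AddSubgroup.closure_induction with
  | mem v hv =>
      obtain ⟨β, hβ, rfl⟩ := hv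
      intro α hα; exact hcrys β hβ α hα
  | zero => intro α _; exact ⟨0, by simp⟩
  | add a b _ _ pa pb =>
      intro α hα
      obtain ⟨n, hn⟩ := pa α hα
      obtain ⟨k, hk⟩ := pb α hα
      exact ⟨n + k, by rw [map_add, hn, hk]; push_cast; ring⟩
  | neg a _ pa =>
      intro α hα
      obtain ⟨n, hn⟩ := pa α hα
      exact ⟨-n, by rw [map_neg, hn]; push_cast; ring⟩

end Stmt0Aux

namespace Stmt0Aux

variable {V : Type*} [AddCommGroup V] [Module ℝ V]

lemma master (Φ : Set (Module.Dual ℝ V)) (coroot : Module.Dual ℝ V → V)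
    (hpair : ∀ α ∈ Φ, α (coroot α) = 2)
    (hrefl : ∀ α ∈ Φ, ∀ β ∈ Φ, β - β (coroot α) • α ∈ Φ)
    (s : Module.Dual ℝ V → Equiv.Perm V)
    (hs : ∀ α ∈ Φ, ∀ v : V, s α v = v - α v • coroot α)
    (hQint : ∀ ℓ ∈ AddSubgroup.closure (coroot '' Φ), ∀ α ∈ Φ, ∃ n : ℤ, α ℓ = (n : ℝ))
    (A : Set (Module.Dual ℝ V)) (hA : A ⊆ Φ) (z : V)
    (hz : ∀ α ∈ A, ∃ n : ℤ, α z = (n : ℝ)) :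
    ∀ g ∈ Subgroup.closure (s '' A),
      Good Φ (AddSubgroup.closure (coroot '' Φ)) z g ∧
      Good Φ (AddSubgroup.closure (coroot '' Φ)) z g⁻¹ := by
  set Q : AddSubgroup V := AddSubgroup.closure (coroot '' Φ) with hQdef
  have hsm : ∀ α ∈ Φ, ∀ ℓ ∈ Q, α ℓ • coroot α ∈ Q := by
    intro α hα ℓ hℓ
    obtain ⟨n, hn⟩ := hQint ℓ hℓ α hα
    rw [hn, Int.cast_smul_eq_zsmul]
    exact zsmul_mem (AddSubgroup.subset_closure (Set.mem_image_of_mem coroot hα)) n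
  have hbase : ∀ α ∈ A, Good Φ Q z (s α) := by
    intro α hαA
    have hα := hA hαA
    refine ⟨?_, ?_, ?_, ?_, ?_⟩
    · intro a b
      rw [hs α hα, hs α hα, hs α hα, map_add]
      module
    · intro c a
      rw [hs α hα, hs α hα, map_smul, smul_eq_mul]
      module
    · intro ℓ hℓ
      rw [hs α hα]
      exact sub_mem hℓ (hsm α hα ℓ hℓ)
    · obtain ⟨n, hn⟩ := hz α hαA
      rw [hs α hα, sub_sub_cancel, hn, Int.cast_smul_eq_zsmul]
      exact zsmul_mem (AddSubgroup.subset_closure (Set.mem_image_of_mem coroot hα)) n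
    · intro β hβ
      refine ⟨β - β (coroot α) • α, hrefl α hα β hβ, fun v => ?_⟩
      rw [hs α hα]
      simp [map_sub, map_smul, smul_eq_mul]
      ring
  have hinv : ∀ α ∈ A, (s α)⁻¹ = s α := by
    intro α hαA
    have hα := hA hαA
    have h2 : ∀ v, s α (s α v) = v := by
      intro v
      rw [hs α hα, hs α hα, map_sub, map_smul, hpair α hα, smul_eq_mul]
      module
    have hmul : s α * s α = 1 := by
      ext v; rw [Equiv.Perm.mul_apply, h2]; rfl
    exact inv_eq_of_mul_eq_one_right hmul
  intro g hg
  induction hg using Subgroup.closure_induction with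
  | mem g hgk =>
      obtain ⟨α, hαA, rfl⟩ := hgk
      exact ⟨hbase α hαA, by rw [hinv α hαA]; exact hbase α hαA⟩
  | one => exact ⟨Good.one, by rw [inv_one]; exact Good.one⟩
  | mul a b _ _ pa pb =>
      exact ⟨pa.1.mul pb.1, by rw [mul_inv_rev]; exact pb.2.mul pa.2⟩
  | inv a _ pa => exact ⟨pa.2, by rw [inv_inv]; exact pa.1⟩

end Stmt0Aux

namespace Stmt0Aux

variable {V : Type*} [AddCommGroup V] [Module ℝ V]

lemma W0_finite [FiniteDimensional ℝ V] (Φ : Set (Module.Dual ℝ V)) (hfin : Φ.Finite)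
    (hspan : Submodule.span ℝ Φ = ⊤) (s : Module.Dual ℝ V → Equiv.Perm V)
    (hdual : ∀ g ∈ Subgroup.closure (s '' Φ), ∀ α ∈ Φ, ∃ β ∈ Φ, ∀ v : V, α (g⁻¹ v) = β v) :
    ((Subgroup.closure (s '' Φ) : Subgroup (Equiv.Perm V)) : Set (Equiv.Perm V)).Finite := by
  classical
  haveI := hfin.to_subtype
  set S : Set (Equiv.Perm V) := (Subgroup.closure (s '' Φ) : Set (Equiv.Perm V)) with hS
  set F : Equiv.Perm V → (Φ → V → ℝ) := fun g a v => (a : Module.Dual ℝ V) (g⁻¹ v) with hF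
  have himg : F '' S ⊆
      Set.range (fun (f : Φ → Φ) (a : Φ) (v : V) => ((f a : Module.Dual ℝ V) v)) := by
    rintro _ ⟨g, hg, rfl⟩
    choose β hβΦ hβ using hdual g hg
    refine ⟨fun a => ⟨β a a.2, hβΦ a a.2⟩, ?_⟩
    funext a v
    exact (hβ a a.2 v).symm
  have hfin2 : (F '' S).Finite := (Set.finite_range _).subset himg
  refine Set.Finite.of_finite_image hfin2 ?_
  intro g hg g' hg' he
  have heq : ∀ v : V, g⁻¹ v = g'⁻¹ v := by
    intro v
    have hall : ∀ φ : Module.Dual ℝ V, φ (g⁻¹ v - g'⁻¹ v) = 0 := by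
      have hker : ∀ φ ∈ Submodule.span ℝ Φ, φ (g⁻¹ v) = φ (g'⁻¹ v) := by
        intro φ hφ
        induction hφ using Submodule.span_induction with
        | mem ψ hψ => exact congrFun (congrFun he ⟨ψ, hψ⟩) v
        | zero => simp
        | add φ₁ φ₂ _ _ p₁ p₂ => simp only [LinearMap.add_apply, p₁, p₂]
        | smul c φ₁ _ p₁ => simp only [LinearMap.smul_apply, p₁]
      intro φ
      have := hker φ (by rw [hspan]; trivial)
      rw [map_sub, this, sub_self]
    exact sub_eq_zero.mp ((Module.forall_dual_apply_eq_zero_iff ℝ _).mp hall)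
  exact inv_injective (Equiv.ext heq)

lemma exists_form [FiniteDimensional ℝ V] (H : Subgroup (Equiv.Perm V))
    (hfinH : (H : Set (Equiv.Perm V)).Finite)
    (hadd : ∀ g ∈ H, ∀ a b : V, g (a + b) = g a + g b)
    (hsmul : ∀ g ∈ H, ∀ (c : ℝ) (a : V), g (c • a) = c • g a) :
    ∃ B : V → V → ℝ,
      (∀ v a b, B v (a + b) = B v a + B v b) ∧
      (∀ v (c : ℝ) a, B v (c • a) = c * B v a) ∧
      (∀ v w, B v w = B w v) ∧
      (∀ g ∈ H, ∀ v w, B (g v) (g w) = B v w) ∧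
      (∀ v : V, v ≠ 0 → 0 < B v v) := by
  classical
  set b := Module.finBasis ℝ V with hb
  set B0 : V → V → ℝ := fun v w => ∑ i, b.repr v i * b.repr w i with hB0
  have hB0add : ∀ v a c, B0 v (a + c) = B0 v a + B0 v c := by
    intro v a c
    simp only [hB0, map_add, Finsupp.add_apply, mul_add]
    rw [Finset.sum_add_distrib]
  have hB0smul : ∀ v (c : ℝ) a, B0 v (c • a) = c * B0 v a := by
    intro v c a
    simp only [hB0, map_smul, Finsupp.smul_apply, smul_eq_mul, Finset.mul_sum]
    congr 1; funext i; ring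
  have hB0sym : ∀ v w, B0 v w = B0 w v := by
    intro v w; simp only [hB0]; congr 1; funext i; ring
  have hB0nonneg : ∀ v, 0 ≤ B0 v v :=
    fun v => Finset.sum_nonneg fun i _ => mul_self_nonneg _
  have hB0pos : ∀ v : V, v ≠ 0 → 0 < B0 v v := by
    intro v hv
    have hrepr : b.repr v ≠ 0 := fun h => hv (by
      have := congrArg b.repr.symm h; simpa using this)
    obtain ⟨i, hi⟩ := Finsupp.ne_iff.mp hrepr
    refine Finset.sum_pos' (fun j _ => mul_self_nonneg _) ⟨i, Finset.mem_univ i, ?_⟩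
    have hne : b.repr v i ≠ 0 := by simpa using hi
    exact mul_self_pos.mpr hne
  set Hfin : Finset (Equiv.Perm V) := hfinH.toFinset with hHfin
  have hmemH : ∀ g : Equiv.Perm V, g ∈ Hfin ↔ g ∈ H := by
    intro g; rw [hHfin, Set.Finite.mem_toFinset]; rfl
  refine ⟨fun v w => ∑ g ∈ Hfin, B0 (g v) (g w), ?_, ?_, ?_, ?_, ?_⟩
  · intro v a c
    rw [← Finset.sum_add_distrib]
    refine Finset.sum_congr rfl fun g hg => ?_
    rw [hadd g ((hmemH g).mp hg), hB0add]
  · intro v c a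
    rw [Finset.mul_sum]
    refine Finset.sum_congr rfl fun g hg => ?_
    rw [hsmul g ((hmemH g).mp hg), hB0smul]
  · intro v w
    exact Finset.sum_congr rfl fun g _ => hB0sym _ _
  · intro h hh v w
    refine Finset.sum_equiv (Equiv.mulRight h) ?_ ?_
    · intro g
      simp only [Equiv.coe_mulRight, hmemH]
      exact ⟨fun hg => mul_mem hg hh, fun hg => by
        have := mul_mem hg (inv_mem hh); simpa using this⟩
    · intro g hg
      simp [Equiv.coe_mulRight, Equiv.Perm.mul_apply]
  · intro v hv
    have h1 : (1 : Equiv.Perm V) ∈ Hfin := (hmemH 1).mpr (one_mem H)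
    have hle : B0 v v ≤ ∑ g ∈ Hfin, B0 (g v) (g v) := by
      have := Finset.single_le_sum (f := fun g : Equiv.Perm V => B0 (g v) (g v))
        (fun g _ => hB0nonneg _) h1
      simpa using this
    exact lt_of_lt_of_le (hB0pos v hv) hle

end Stmt0Aux

namespace Stmt0Aux

variable {V : Type*} [AddCommGroup V] [Module ℝ V]

lemma decomp (Φ : Set (Module.Dual ℝ V)) (Q : AddSubgroup V) (z : V)
    (s : Module.Dual ℝ V → Equiv.Perm V)
    (hW0 : ∀ u ∈ Subgroup.closure (s '' Φ), Good Φ Q z u) :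
    ∀ w ∈ Subgroup.closure
        (s '' Φ ∪ (fun ℓ : V => Equiv.addRight ℓ) '' (Q : Set V)),
      ∃ m ∈ Q, ∃ u ∈ Subgroup.closure (s '' Φ), w = Equiv.addRight m * u := by
  intro w hw
  induction hw using Subgroup.closure_induction with
  | mem g hgk =>
      rcases hgk with h | h
      · exact ⟨0, zero_mem Q, g, Subgroup.subset_closure h, by simp⟩
      · obtain ⟨ℓ, hℓ, rfl⟩ := h
        exact ⟨ℓ, hℓ, 1, one_mem _, by simp⟩
  | one => exact ⟨0, zero_mem Q, 1, one_mem _, by simp⟩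
  | mul a b _ _ pa pb =>
      obtain ⟨m, hm, u, hu, rfl⟩ := pa
      obtain ⟨m', hm', u', hu', rfl⟩ := pb
      have Gu := hW0 u hu
      refine ⟨m + u m', add_mem hm (Gu.qmem m' hm'), u * u', mul_mem hu hu', ?_⟩
      ext v
      simp only [Equiv.Perm.mul_apply, Equiv.coe_addRight, Gu.add]
      abel
  | inv a _ pa =>
      obtain ⟨m, hm, u, hu, rfl⟩ := pa
      have Gui := hW0 u⁻¹ (inv_mem hu)
      refine ⟨-(u⁻¹ m), neg_mem (Gui.qmem m hm), u⁻¹, inv_mem hu, ?_⟩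
      rw [mul_inv_rev, Equiv.neg_addRight]
      ext v
      simp only [Equiv.Perm.mul_apply, Equiv.coe_addRight, Gui.add, Gui.neg]

lemma conj_mem (Φ A : Set (Module.Dual ℝ V)) (hA : A ⊆ Φ)
    (coroot : Module.Dual ℝ V → V)
    (s : Module.Dual ℝ V → Equiv.Perm V)
    (hs : ∀ α ∈ Φ, ∀ v : V, s α v = v - α v • coroot α)
    (r : Module.Dual ℝ V → V → Equiv.Perm V)
    (hr : ∀ α ∈ Φ, ∀ z v : V, r α z v = v - (α v - α z) • coroot α)
    (z : V) (P : Module.Dual ℝ V → Prop) (hP : ∀ α ∈ A, P α) :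
    ∀ u ∈ Subgroup.closure (s '' A),
      Equiv.addRight z * u * (Equiv.addRight z)⁻¹ ∈
        Subgroup.closure {g : Equiv.Perm V | ∃ α ∈ Φ, P α ∧ g = r α z} := by
  intro u hu
  induction hu using Subgroup.closure_induction with
  | mem g hgk =>
      obtain ⟨α, hαA, rfl⟩ := hgk
      apply Subgroup.subset_closure
      refine ⟨α, hA hαA, hP α hαA, ?_⟩
      ext v
      rw [Equiv.Perm.mul_apply, Equiv.Perm.mul_apply, Equiv.neg_addRight,
        Equiv.coe_addRight, Equiv.coe_addRight, hs α (hA hαA), hr α (hA hαA),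
        map_add, map_neg]
      module
  | one =>
      have : Equiv.addRight z * 1 * (Equiv.addRight z)⁻¹ = 1 := by group
      rw [this]; exact one_mem _
  | mul a b _ _ pa pb =>
      have : Equiv.addRight z * (a * b) * (Equiv.addRight z)⁻¹ =
          (Equiv.addRight z * a * (Equiv.addRight z)⁻¹) *
          (Equiv.addRight z * b * (Equiv.addRight z)⁻¹) := by group
      rw [this]; exact mul_mem pa pb
  | inv a _ pa =>
      have : Equiv.addRight z * a⁻¹ * (Equiv.addRight z)⁻¹ =
          (Equiv.addRight z * a * (Equiv.addRight z)⁻¹)⁻¹ := by group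
      rw [this]; exact inv_mem pa

end Stmt0Aux


/-- Let `Φ ⊂ V*` be a finite reduced crystallographic root system spanning `V*`, with
coroot lattice `Q`, finite Weyl group `W₀` generated by the reflections `s α`, and affine
Weyl group `W` generated by `W₀` together with the translations `t(ℓ) = Equiv.addRight ℓ`
for `ℓ ∈ Q`.  Fix a positive system `Pos ⊆ Φ`.  Let `x ∈ V` and let `y ∈ V` be special.
Then for every `w ∈ W` there exists `ℓ ∈ X_{x,y}^+` (i.e. `ℓ ∈ Q` with
`α(ℓ) ≥ α(y − x)` for all `α ∈ Φ_x^{lin,+}`) such that the translation `t(ℓ)` lies in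
the double coset `W_y w W_x`. -/
theorem stmt_0 (V : Type*) [AddCommGroup V] [Module ℝ V] [FiniteDimensional ℝ V]
    (Φ : Set (Module.Dual ℝ V)) (hfin : Φ.Finite) (h0 : (0 : Module.Dual ℝ V) ∉ Φ)
    (hspan : Submodule.span ℝ Φ = ⊤)
    (coroot : Module.Dual ℝ V → V)
    (hpair : ∀ α ∈ Φ, α (coroot α) = 2)
    (hreflco : ∀ α ∈ Φ, ∀ β ∈ Φ, coroot β - α (coroot β) • coroot α ∈ coroot '' Φ)
    (hrefl : ∀ α ∈ Φ, ∀ β ∈ Φ, β - β (coroot α) • α ∈ Φ)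
    (hcrys : ∀ α ∈ Φ, ∀ β ∈ Φ, ∃ n : ℤ, β (coroot α) = (n : ℝ))
    (hred : ∀ α ∈ Φ, ∀ c : ℝ, c • α ∈ Φ → c = 1 ∨ c = -1)
    -- the linear reflections `s α : v ↦ v − α(v) α^∨` for `α ∈ Φ`
    (s : Module.Dual ℝ V → Equiv.Perm V)
    (hs : ∀ α ∈ Φ, ∀ v : V, s α v = v - α v • coroot α)
    -- the affine reflections `r α z : v ↦ v − (α(v) − α(z)) α^∨` for `α ∈ Φ`
    (r : Module.Dual ℝ V → V → Equiv.Perm V)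
    (hr : ∀ α ∈ Φ, ∀ z v : V, r α z v = v - (α v - α z) • coroot α)
    -- a positive system `Pos = Φ^+ ⊆ Φ`
    (Pos : Set (Module.Dual ℝ V))
    (hPos : ∃ v0 : V, (∀ α ∈ Φ, α v0 ≠ 0) ∧ Pos = {α ∈ Φ | 0 < α v0})
    (x y : V)
    -- `y` is special
    (hy : ∀ α ∈ Φ, ∃ n : ℤ, α y = (n : ℝ)) :
    ∀ w ∈ Subgroup.closure
        (s '' Φ ∪ (fun ℓ : V => Equiv.addRight ℓ) ''
          ((AddSubgroup.closure (coroot '' Φ) : AddSubgroup V) : Set V)),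
      ∃ ℓ : V, ℓ ∈ AddSubgroup.closure (coroot '' Φ) ∧
        (∀ α ∈ Pos, (∃ n : ℤ, α x = (n : ℝ)) → α (y - x) ≤ α ℓ) ∧
        ∃ wy ∈ Subgroup.closure
            {g : Equiv.Perm V | ∃ α ∈ Φ, (∃ n : ℤ, α y = (n : ℝ)) ∧ g = r α y},
          ∃ wx ∈ Subgroup.closure
            {g : Equiv.Perm V | ∃ α ∈ Φ, (∃ n : ℤ, α x = (n : ℝ)) ∧ g = r α x},
            Equiv.addRight ℓ = wy * w * wx := by
  classical
  intro w hw
  have hQint := Stmt0Aux.Qint Φ coroot hcrys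
  have hmaster := Stmt0Aux.master Φ coroot hpair hrefl s hs hQint
  have hW0 := hmaster Φ subset_rfl 0 (fun α _ => ⟨0, by simp⟩)
  have hWy := hmaster Φ subset_rfl y hy
  set Φx : Set (Module.Dual ℝ V) := {α ∈ Φ | ∃ n : ℤ, α x = (n : ℝ)} with hΦxdef
  have hWx := hmaster Φx (Set.sep_subset _ _) x (fun α hα => hα.2)
  obtain ⟨m, hm, u, hu, rfl⟩ :=
    Stmt0Aux.decomp Φ (AddSubgroup.closure (coroot '' Φ)) 0 s
      (fun u hu => (hW0 u hu).1) w hw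
  have hfinW0 := Stmt0Aux.W0_finite Φ hfin hspan s (fun g hg => ((hW0 g hg).2).dual)
  obtain ⟨B, hBadd, hBsmul, hBsym, hBinv, hBpos⟩ :=
    Stmt0Aux.exists_form (Subgroup.closure (s '' Φ)) hfinW0
      (fun g hg => (hW0 g hg).1.add) (fun g hg => (hW0 g hg).1.smul)
  obtain ⟨v0, hv0ne, hPosEq⟩ := hPos
  have hlam : ∀ β ∈ Φ, 0 < β v0 → 0 < B v0 (coroot β) := by
    intro β hβ hβpos
    have hsβW0 : s β ∈ Subgroup.closure (s '' Φ) :=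
      Subgroup.subset_closure (Set.mem_image_of_mem s hβ)
    have hc2 : β (coroot β) = 2 := hpair β hβ
    set c := coroot β with hcdef
    set v' := v0 - (β v0 / 2) • c with hv'
    have hβv' : β v' = 0 := by
      rw [hv', map_sub, map_smul, hc2, smul_eq_mul]; ring
    have h1 : s β v' = v' := by rw [hs β hβ, hβv', zero_smul, sub_zero]
    have h2 : s β c = -c := by rw [hs β hβ, hc2]; module
    have h3 : B v' c = 0 := by
      have hinv := hBinv (s β) hsβW0 v' c
      rw [h1, h2] at hinv
      have hneg : B v' (-c) = - B v' c := by
        have h := hBsmul v' (-1) c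
        rw [neg_one_smul] at h
        rw [h]; ring
      rw [hneg] at hinv; linarith
    have h4 : 0 < B c c := hBpos c (fun h => by rw [h, map_zero] at hc2; norm_num at hc2)
    have h5 : B v0 c = B v' c + (β v0 / 2) * B c c := by
      have hv0e : v0 = v' + (β v0 / 2) • c := by rw [hv']; abel
      calc B v0 c = B c v0 := hBsym _ _
        _ = B c (v' + (β v0 / 2) • c) := by rw [← hv0e]
        _ = B c v' + (β v0 / 2) * B c c := by rw [hBadd, hBsmul]
        _ = B v' c + (β v0 / 2) * B c c := by rw [hBsym c v']
    rw [h5, h3, zero_add]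
    exact mul_pos (by linarith) h4
  have hHxle : Subgroup.closure (s '' Φx) ≤ Subgroup.closure (s '' Φ) :=
    Subgroup.closure_mono (Set.image_mono (Set.sep_subset _ _))
  set p := x + u⁻¹ m - u⁻¹ y with hpdef
  set O := (fun g : Equiv.Perm V => g p) ''
    ((Subgroup.closure (s '' Φx) : Subgroup (Equiv.Perm V)) : Set (Equiv.Perm V)) with hOdef
  have hOfin : O.Finite := (hfinW0.subset (fun g hg => hHxle hg)).image _
  have hOne : O.Nonempty := ⟨p, 1, one_mem _, by simp⟩
  obtain ⟨q, hqO, hqmax⟩ := Set.exists_max_image O (fun v => B v0 v) hOfin hOne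
  obtain ⟨g', hg'Hx, hq⟩ := hqO
  have hq' : g' p = q := hq
  have hkey : ∀ α ∈ Pos, (∃ n : ℤ, α x = (n : ℝ)) → 0 ≤ α q := by
    intro α hαPos hαint
    have hαΦ : α ∈ Φ := by rw [hPosEq] at hαPos; exact hαPos.1
    have hαpos : 0 < α v0 := by rw [hPosEq] at hαPos; exact hαPos.2
    have hαx : α ∈ Φx := ⟨hαΦ, hαint⟩
    have hsmem : s α ∈ Subgroup.closure (s '' Φx) :=
      Subgroup.subset_closure (Set.mem_image_of_mem s hαx)
    have hOmem : s α q ∈ O := ⟨s α * g', mul_mem hsmem hg'Hx, by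
      show (s α * g') p = s α q
      rw [Equiv.Perm.mul_apply, hq']⟩
    have hle := hqmax _ hOmem
    have hBe : B v0 (s α q) = B v0 q - α q * B v0 (coroot α) := by
      have he : s α q = q + (-(α q)) • coroot α := by rw [hs α hαΦ]; module
      rw [he, hBadd, hBsmul]; ring
    rw [hBe] at hle
    have h0 : 0 ≤ α q * B v0 (coroot α) := by linarith
    nlinarith [hlam α hαΦ hαpos]
  have Gu := (hW0 u hu).1
  have Gui := (hW0 u⁻¹ (inv_mem hu)).1
  have Gg' := (hWx g' hg'Hx).1
  have Gg'i := (hWx g' hg'Hx).2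
  have Gyu := (hWy (g' * u⁻¹) (mul_mem (hHxle hg'Hx) (inv_mem hu))).1
  refine ⟨y - x + q, ?_, ?_, ?_⟩
  · have hexp : y - x + q = (y - (g' * u⁻¹) y) + (g' x - x) + g' (u⁻¹ m) := by
      rw [← hq', hpdef, Gg'.sub, Gg'.add, Equiv.Perm.mul_apply]
      abel
    rw [hexp]
    refine add_mem (add_mem Gyu.zmem ?_) (Gg'.qmem _ (Gui.qmem m hm))
    have h := neg_mem Gg'.zmem
    rwa [neg_sub] at h
  · intro α hαPos hαint
    rw [map_add α (y - x) q]
    have := hkey α hαPos hαint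
    linarith
  · refine ⟨Equiv.addRight y * (g' * u⁻¹) * (Equiv.addRight y)⁻¹,
      Stmt0Aux.conj_mem Φ Φ subset_rfl coroot s hs r hr y
        (fun α => ∃ n : ℤ, α y = (n : ℝ)) hy
        (g' * u⁻¹) (mul_mem (hHxle hg'Hx) (inv_mem hu)),
      Equiv.addRight x * g'⁻¹ * (Equiv.addRight x)⁻¹,
      Stmt0Aux.conj_mem Φ Φx (Set.sep_subset _ _) coroot s hs r hr x
        (fun α => ∃ n : ℤ, α x = (n : ℝ)) (fun α hα => hα.2)
        g'⁻¹ (inv_mem hg'Hx), ?_⟩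
    ext v
    rw [← hq']
    simp only [Equiv.Perm.mul_apply, Equiv.coe_addRight, Equiv.neg_addRight,
      Gu.add, Gui.add, Gg'.add, Gui.neg, Gg'.neg, (show ∀ (f : Equiv.Perm V) (a : V), f⁻¹ (f a) = a from fun f a => f.symm_apply_apply a),
      (show ∀ (f : Equiv.Perm V) (a : V), f (f⁻¹ a) = a from fun f a => f.apply_symm_apply a)]
    have hg'p : g' p = g' x + g' (u⁻¹ m) - g' (u⁻¹ y) := by
      rw [hpdef, Gg'.sub, Gg'.add]
    rw [hg'p]
    abel
end

section
/- Let x ∈ V and let y ∈ V be special. If ℓ, ℓ' ∈ X_{x,y}^+ are such that there exist w_y ∈ W_y and w_x ∈ W_x with t(ℓ') = w_y ∘ t(ℓ) ∘ w_x, then ℓ = ℓ'. Hence distinct elements of X_{x,y}^+ give translations lying in distinct (W_y, W_x)-double cosets of W. -/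
namespace Stmt1Aux

variable {V : Type*} [AddCommGroup V] [Module ℝ V]

/-- B-orthogonal reflection in the vector `u`. -/
noncomputable def srefl (B : V →ₗ[ℝ] V →ₗ[ℝ] ℝ) (u : V) : Module.End ℝ V :=
  LinearMap.id - (2 / B u u) • ((B.flip u).smulRight u)

lemma srefl_apply (B : V →ₗ[ℝ] V →ₗ[ℝ] ℝ) (u v : V) :
    srefl B u v = v - (2 / B u u * B v u) • u := by
  simp [srefl, LinearMap.sub_apply, LinearMap.smul_apply, LinearMap.smulRight_apply,
    LinearMap.flip_apply, smul_smul]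

variable (B : V →ₗ[ℝ] V →ₗ[ℝ] ℝ)

lemma B_sub_left (v w u : V) : B (v - w) u = B v u - B w u := by
  simp [map_sub]

lemma B_smul_left (c : ℝ) (v u : V) : B (c • v) u = c * B v u := by
  simp [map_smul]

lemma srefl_self (u : V) (hu : B u u ≠ 0) : srefl B u u = -u := by
  rw [srefl_apply]
  rw [div_mul_cancel₀ _ hu]
  module

lemma B_srefl_right (u v w : V) (hsym : ∀ a b, B a b = B b a) (hu : B u u ≠ 0) :
    B (srefl B u v) u = - B v u := by
  rw [srefl_apply, map_sub, LinearMap.sub_apply]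
  rw [B_smul_left]
  field_simp
  ring

lemma srefl_invol_apply (u : V) (hsym : ∀ a b, B a b = B b a) (hu : B u u ≠ 0) (v : V) :
    srefl B u (srefl B u v) = v := by
  rw [srefl_apply B u (srefl B u v), B_srefl_right B u v u hsym hu]
  · rw [srefl_apply]
    module

lemma srefl_invol (u : V) (hsym : ∀ a b, B a b = B b a) (hu : B u u ≠ 0) :
    srefl B u * srefl B u = 1 := by
  apply LinearMap.ext
  intro v
  exact srefl_invol_apply B u hsym hu v

lemma srefl_isom (u : V) (hsym : ∀ a b, B a b = B b a) (hu : B u u ≠ 0) (v w : V) :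
    B (srefl B u v) (srefl B u w) = B v w := by
  rw [srefl_apply, srefl_apply]
  simp only [map_sub, map_smul, LinearMap.sub_apply, LinearMap.smul_apply, smul_eq_mul]
  have huw : B u w = B w u := hsym u w
  rw [huw]
  field_simp
  ring

lemma srefl_neg (u : V) : srefl B (-u) = srefl B u := by
  apply LinearMap.ext
  intro v
  rw [srefl_apply, srefl_apply]
  have h1 : B (-u) (-u) = B u u := by simp
  have h2 : B v (-u) = -(B v u) := by simp
  rw [h1, h2]
  simp only [mul_neg, neg_smul, smul_neg, neg_neg]



/-- Word of reflections: leftmost letter applied last. -/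
noncomputable def wfn (B : V →ₗ[ℝ] V →ₗ[ℝ] ℝ) (L : List V) : Module.End ℝ V :=
  (L.map (srefl B)).prod

@[simp] lemma wfn_nil : wfn B ([] : List V) = 1 := rfl

@[simp] lemma wfn_singleton (a : V) : wfn B [a] = srefl B a := by simp [wfn]

@[simp] lemma wfn_cons (a : V) (L : List V) : wfn B (a :: L) = srefl B a * wfn B L := by
  simp [wfn]

lemma wfn_append (L M : List V) : wfn B (L ++ M) = wfn B L * wfn B M := by
  simp [wfn]

section words

lemma wfn_rev_left (hsym : ∀ a b : V, B a b = B b a) (L : List V) (hL : ∀ u ∈ L, B u u ≠ 0) :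
    wfn B L.reverse * wfn B L = 1 := by
  induction L with
  | nil => simp
  | cons a M ih =>
    have ha : B a a ≠ 0 := hL a (by simp)
    have ihM : wfn B M.reverse * wfn B M = 1 := ih (fun u hu => hL u (by simp [hu]))
    simp only [List.reverse_cons, wfn_append, wfn_cons, wfn_nil, mul_one]
    rw [mul_assoc, ← mul_assoc (srefl B a), srefl_invol B a hsym ha, one_mul, ihM]

lemma wfn_rev_right (hsym : ∀ a b : V, B a b = B b a) (L : List V) (hL : ∀ u ∈ L, B u u ≠ 0) :
    wfn B L * wfn B L.reverse = 1 := by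
  have := wfn_rev_left B hsym L.reverse (fun u hu => hL u (by simpa using hu))
  simpa using this

lemma wfn_isom (hsym : ∀ a b : V, B a b = B b a) (L : List V) (hL : ∀ u ∈ L, B u u ≠ 0) (v w : V) :
    B (wfn B L v) (wfn B L w) = B v w := by
  induction L with
  | nil => simp [Module.End.one_apply]
  | cons a M ih =>
    have ha : B a a ≠ 0 := hL a (by simp)
    have ihM := ih (fun u hu => hL u (by simp [hu]))
    rw [wfn_cons]
    simp only [Module.End.mul_apply]
    rw [srefl_isom B a hsym ha, ihM]

end words

open scoped Classical

/-- Bundle of hypotheses: `R` is a finite reduced "root vector" system w.r.t. the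
inner product `B`, with regular vector `v0`. -/
structure RS (B : V →ₗ[ℝ] V →ₗ[ℝ] ℝ) (R : Finset V) (v0 : V) : Prop where
  sym : ∀ a b : V, B a b = B b a
  posdef : ∀ v : V, v ≠ 0 → 0 < B v v
  ne : ∀ u ∈ R, u ≠ (0 : V)
  clos : ∀ u ∈ R, ∀ b ∈ R, srefl B u b ∈ R
  reg : ∀ u ∈ R, B v0 u ≠ 0
  red : ∀ u ∈ R, ∀ b ∈ R, ∀ t : ℝ, b = t • u → t = 1 ∨ t = -1

variable {B : V →ₗ[ℝ] V →ₗ[ℝ] ℝ} {R : Finset V} {v0 : V}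

namespace RS

lemma Buu_pos (h : RS B R v0) {u : V} (hu : u ∈ R) : 0 < B u u := h.posdef u (h.ne u hu)

lemma Buu_ne (h : RS B R v0) {u : V} (hu : u ∈ R) : B u u ≠ 0 := ne_of_gt (h.Buu_pos hu)

lemma neg_mem (h : RS B R v0) {u : V} (hu : u ∈ R) : -u ∈ R := by
  have := h.clos u hu u hu
  rwa [srefl_self B u (h.Buu_ne hu)] at this

lemma wfn_mem (h : RS B R v0) {L : List V} (hL : ∀ u ∈ L, u ∈ R) {b : V} (hb : b ∈ R) :
    wfn B L b ∈ R := by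
  induction L with
  | nil => simpa [Module.End.one_apply] using hb
  | cons a M ih =>
    rw [wfn_cons]
    simp only [Module.End.mul_apply]
    exact h.clos a (hL a (by simp)) _ (ih (fun u hu => hL u (by simp [hu])))

lemma wfn_ne (h : RS B R v0) {L : List V} (hL : ∀ u ∈ L, u ∈ R) : ∀ u ∈ L, B u u ≠ 0 :=
  fun u hu => h.Buu_ne (hL u hu)

end RS

/-- positive roots -/
noncomputable def rpos (B : V →ₗ[ℝ] V →ₗ[ℝ] ℝ) (v0 : V) (R : Finset V) : Finset V :=
  R.filter (fun u => 0 < B v0 u)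

lemma mem_rpos {u : V} : u ∈ rpos B v0 R ↔ u ∈ R ∧ 0 < B v0 u := Finset.mem_filter

lemma rpos_subset : rpos B v0 R ⊆ R := Finset.filter_subset _ _

lemma RS.pos_or_neg (h : RS B R v0) {u : V} (hu : u ∈ R) :
    u ∈ rpos B v0 R ∨ -u ∈ rpos B v0 R := by
  rcases lt_or_gt_of_ne (h.reg u hu) with hlt | hgt
  · right
    rw [mem_rpos]
    refine ⟨h.neg_mem hu, by simpa using hlt⟩
  · left
    exact mem_rpos.2 ⟨hu, hgt⟩

/-- membership in the convex cone generated by a finite set -/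
def InCone (Δ : Finset V) (v : V) : Prop :=
  ∃ c : V → ℝ, (∀ x, 0 ≤ c x) ∧ v = ∑ x ∈ Δ, c x • x

lemma incone_mem {Δ : Finset V} {x : V} (hx : x ∈ Δ) : InCone Δ x := by
  refine ⟨fun y => if y = x then 1 else 0, fun y => by positivity, ?_⟩
  have hc : ∀ y ∈ Δ, (if y = x then (1:ℝ) else 0) • y = if y = x then y else 0 := by
    intro y _
    split <;> simp
  rw [Finset.sum_congr rfl hc, Finset.sum_ite_eq' Δ x (fun y => y), if_pos hx]

lemma incone_zero (Δ : Finset V) : InCone Δ 0 :=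
  ⟨fun _ => 0, fun _ => le_refl _, by simp⟩

lemma incone_add {Δ : Finset V} {v w : V} (hv : InCone Δ v) (hw : InCone Δ w) :
    InCone Δ (v + w) := by
  obtain ⟨c, hc, rfl⟩ := hv
  obtain ⟨d, hd, rfl⟩ := hw
  exact ⟨fun x => c x + d x, fun x => add_nonneg (hc x) (hd x), by
    rw [← Finset.sum_add_distrib]
    congr 1
    funext x
    rw [add_smul]⟩

lemma incone_smul {Δ : Finset V} {v : V} {t : ℝ} (ht : 0 ≤ t) (hv : InCone Δ v) :
    InCone Δ (t • v) := by
  obtain ⟨c, hc, rfl⟩ := hv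
  exact ⟨fun x => t * c x, fun x => mul_nonneg ht (hc x), by
    rw [Finset.smul_sum]
    congr 1
    funext x
    rw [smul_smul]⟩

lemma incone_sum {Δ : Finset V} {ι : Type*} (s : Finset ι) (f : ι → V)
    (hf : ∀ i ∈ s, InCone Δ (f i)) : InCone Δ (∑ i ∈ s, f i) := by
  induction s using Finset.induction_on with
  | empty => simpa using incone_zero Δ
  | insert _ _ hnotmem ih =>
    rw [Finset.sum_insert hnotmem]
    exact incone_add (hf _ (by simp)) (ih (fun i hi => hf i (by simp [hi])))

lemma incone_trans {Δ Δ' : Finset V} (hΔ : ∀ d ∈ Δ, InCone Δ' d) {v : V}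
    (hv : InCone Δ v) : InCone Δ' v := by
  obtain ⟨c, hc, rfl⟩ := hv
  exact incone_sum Δ _ (fun d hd => incone_smul (hc d) (hΔ d hd))

lemma incone_B_nonneg {Δ : Finset V} (hΔ : Δ ⊆ rpos B v0 R) {v : V} (hv : InCone Δ v) :
    0 ≤ B v0 v := by
  obtain ⟨c, hc, rfl⟩ := hv
  rw [map_sum]
  apply Finset.sum_nonneg
  intro x hx
  rw [map_smul, smul_eq_mul]
  exact mul_nonneg (hc x) (le_of_lt (mem_rpos.1 (hΔ hx)).2)

section SimpleSystem

variable {Δ : Finset V}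

lemma key_comb (h : RS B R v0) (hΔsub : Δ ⊆ rpos B v0 R)
    (hGen : ∀ b ∈ rpos B v0 R, InCone Δ b)
    (hmin : ∀ S ⊆ rpos B v0 R, (∀ b ∈ rpos B v0 R, InCone S b) → Δ.card ≤ S.card)
    {a : V} (ha : a ∈ Δ) {t : ℝ} (ht : 0 < t) {g : V → ℝ} (hg : ∀ d, 0 ≤ g d)
    (heq : t • a = ∑ d ∈ Δ, g d • d)
    {d0 : V} (hd0 : d0 ∈ Δ.erase a) (hgd0 : 0 < g d0) : False := by
  have hsplit : ∑ d ∈ Δ, g d • d = g a • a + ∑ d ∈ Δ.erase a, g d • d :=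
    (Finset.add_sum_erase Δ _ ha).symm
  rw [hsplit] at heq
  rcases lt_or_ge (g a) t with hlt | hge
  · have hkey : (t - g a) • a = ∑ d ∈ Δ.erase a, g d • d := by
      rw [sub_smul, heq]
      abel
    have htne : t - g a ≠ 0 := by linarith
    have hainc : InCone (Δ.erase a) a := by
      refine ⟨fun d => (t - g a)⁻¹ * g d,
        fun d => mul_nonneg (inv_nonneg.2 (by linarith)) (hg d), ?_⟩
      calc a = (t - g a)⁻¹ • ((t - g a) • a) := by
              rw [smul_smul, inv_mul_cancel₀ htne, one_smul]
        _ = (t - g a)⁻¹ • ∑ d ∈ Δ.erase a, g d • d := by rw [hkey]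
        _ = ∑ d ∈ Δ.erase a, ((t - g a)⁻¹ * g d) • d := by
              rw [Finset.smul_sum]
              refine Finset.sum_congr rfl (fun d _ => ?_)
              rw [smul_smul]
    have hGen' : ∀ b ∈ rpos B v0 R, InCone (Δ.erase a) b := by
      intro b hb
      refine incone_trans ?_ (hGen b hb)
      intro d hd
      by_cases hda : d = a
      · subst hda
        exact hainc
      · exact incone_mem (Finset.mem_erase.2 ⟨hda, hd⟩)
    have hle := hmin (Δ.erase a)
      (Finset.Subset.trans (Finset.erase_subset _ _) hΔsub) hGen'
    have hcard := Finset.card_erase_of_mem ha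
    have hpos : 0 < Δ.card := Finset.card_pos.2 ⟨a, ha⟩
    omega
  · have hkey : (0:V) = (g a - t) • a + ∑ d ∈ Δ.erase a, g d • d := by
      have h2 : g a • a + (∑ d ∈ Δ.erase a, g d • d) - t • a = 0 := by
        rw [← heq]
        exact sub_self _
      calc (0:V) = g a • a + (∑ d ∈ Δ.erase a, g d • d) - t • a := h2.symm
        _ = (g a - t) • a + ∑ d ∈ Δ.erase a, g d • d := by rw [sub_smul]; abel
    have hs : (0:ℝ) = (g a - t) * B v0 a + ∑ d ∈ Δ.erase a, g d * B v0 d := by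
      have h2 := congrArg (fun v => B v0 v) hkey
      simpa [map_add, map_sum, map_smul, smul_eq_mul] using h2
    have hterm : 0 < g d0 * B v0 d0 :=
      mul_pos hgd0 (mem_rpos.1 (hΔsub (Finset.mem_of_mem_erase hd0))).2
    have hsum : g d0 * B v0 d0 ≤ ∑ d ∈ Δ.erase a, g d * B v0 d :=
      Finset.single_le_sum (fun d hd => mul_nonneg (hg d)
        (le_of_lt (mem_rpos.1 (hΔsub (Finset.mem_of_mem_erase hd))).2)) hd0
    have h1 : 0 ≤ (g a - t) * B v0 a :=
      mul_nonneg (by linarith) (le_of_lt (mem_rpos.1 (hΔsub ha)).2)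
    linarith

lemma obtuse (h : RS B R v0) (hΔsub : Δ ⊆ rpos B v0 R)
    (hGen : ∀ b ∈ rpos B v0 R, InCone Δ b)
    (hmin : ∀ S ⊆ rpos B v0 R, (∀ b ∈ rpos B v0 R, InCone S b) → Δ.card ≤ S.card)
    {a b : V} (ha : a ∈ Δ) (hb : b ∈ Δ) (hab : a ≠ b) : B a b ≤ 0 := by
  by_contra hpos
  push_neg at hpos
  have haR : a ∈ R := rpos_subset (hΔsub ha)
  have hbR : b ∈ R := rpos_subset (hΔsub hb)
  set μ : ℝ := 2 / B a a * B b a with hμdef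
  have hμ : 0 < μ := by
    have h1 : 0 < B a a := h.Buu_pos haR
    have h2 : 0 < B b a := by rw [h.sym b a]; exact hpos
    positivity
  have hsb : srefl B a b = b - μ • a := srefl_apply B a b
  have hsbR : srefl B a b ∈ R := h.clos a haR b hbR
  rcases h.pos_or_neg hsbR with hp | hn
  · obtain ⟨c, hc, hcv⟩ := hGen _ hp
    set g : V → ℝ := fun d => c d + (if d = a then μ else 0) with hgdef
    have hg : ∀ d, 0 ≤ g d := by
      intro d
      simp only [hgdef]
      split <;> [linarith [hc d, hμ.le]; simpa using hc d]
    have heq : (1:ℝ) • b = ∑ d ∈ Δ, g d • d := by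
      have hsum : ∑ d ∈ Δ, g d • d
          = (∑ d ∈ Δ, c d • d) + ∑ d ∈ Δ, (if d = a then μ else 0) • d := by
        rw [← Finset.sum_add_distrib]
        refine Finset.sum_congr rfl (fun d _ => ?_)
        rw [hgdef, add_smul]
      have hite : ∑ d ∈ Δ, (if d = a then μ else 0) • d = μ • a := by
        have hc2 : ∀ d ∈ Δ, (if d = a then μ else 0) • d = if d = a then μ • d else 0 := by
          intro d _
          split <;> simp
        rw [Finset.sum_congr rfl hc2, Finset.sum_ite_eq' Δ a (fun d => μ • d), if_pos ha]
      rw [hsum, hite, ← hcv, one_smul, hsb]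
      abel
    exact key_comb h hΔsub hGen hmin hb one_pos hg heq
      (Finset.mem_erase.2 ⟨hab, ha⟩)
      (by have := hc a; simp [hgdef]; linarith)
  · obtain ⟨c, hc, hcv⟩ := hGen _ hn
    set g : V → ℝ := fun d => c d + (if d = b then 1 else 0) with hgdef
    have hg : ∀ d, 0 ≤ g d := by
      intro d
      simp only [hgdef]
      split <;> [linarith [hc d]; simpa using hc d]
    have heq : μ • a = ∑ d ∈ Δ, g d • d := by
      have hsum : ∑ d ∈ Δ, g d • d
          = (∑ d ∈ Δ, c d • d) + ∑ d ∈ Δ, (if d = b then (1:ℝ) else 0) • d := by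
        rw [← Finset.sum_add_distrib]
        refine Finset.sum_congr rfl (fun d _ => ?_)
        rw [hgdef, add_smul]
      have hite : ∑ d ∈ Δ, (if d = b then (1:ℝ) else 0) • d = b := by
        have hc2 : ∀ d ∈ Δ, (if d = b then (1:ℝ) else 0) • d = if d = b then d else 0 := by
          intro d _
          split <;> simp
        rw [Finset.sum_congr rfl hc2, Finset.sum_ite_eq' Δ b (fun d => d), if_pos hb]
      rw [hsum, hite, ← hcv]
      rw [hsb]
      abel
    exact key_comb h hΔsub hGen hmin ha hμ hg heq
      (Finset.mem_erase.2 ⟨(Ne.symm hab), hb⟩)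
      (by have := hc b; simp [hgdef]; linarith)

lemma indep (h : RS B R v0) (hΔsub : Δ ⊆ rpos B v0 R)
    (hGen : ∀ b ∈ rpos B v0 R, InCone Δ b)
    (hmin : ∀ S ⊆ rpos B v0 R, (∀ b ∈ rpos B v0 R, InCone S b) → Δ.card ≤ S.card)
    {c : V → ℝ} (hc : ∑ d ∈ Δ, c d • d = 0) : ∀ d ∈ Δ, c d = 0 := by
  classical
  set P := Δ.filter (fun d => 0 ≤ c d) with hP
  set N := Δ.filter (fun d => ¬ 0 ≤ c d) with hN
  set u := ∑ d ∈ P, c d • d with hu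
  have hPN : (∑ d ∈ P, c d • d) + ∑ d ∈ N, c d • d = 0 := by
    rw [hP, hN, Finset.sum_filter_add_sum_filter_not]
    exact hc
  have huN : u = ∑ d ∈ N, (- c d) • d := by
    rw [hu]
    have : ∑ d ∈ N, (- c d) • d = - ∑ d ∈ N, c d • d := by
      rw [← Finset.sum_neg_distrib]
      refine Finset.sum_congr rfl (fun d _ => ?_)
      rw [neg_smul]
    rw [this]
    exact eq_neg_of_add_eq_zero_left hPN
  have hcP : ∀ d ∈ P, 0 ≤ c d := fun d hd => (Finset.mem_filter.1 hd).2
  have hcN : ∀ e ∈ N, c e < 0 := fun e he => not_le.1 (Finset.mem_filter.1 he).2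
  have hPΔ : P ⊆ Δ := Finset.filter_subset _ _
  have hNΔ : N ⊆ Δ := Finset.filter_subset _ _
  have hBu : B u u = ∑ d ∈ P, ∑ e ∈ N, c d * ((- c e) * B d e) := by
    nth_rewrite 1 [hu]
    nth_rewrite 1 [huN]
    simp only [map_sum, map_smul, LinearMap.sum_apply, LinearMap.smul_apply, smul_eq_mul]
    simp only [Finset.mul_sum]
    rw [Finset.sum_comm]
    exact Finset.sum_congr rfl fun d _ => Finset.sum_congr rfl fun e _ => by ring
  have hBuu : B u u ≤ 0 := by
    rw [hBu]
    refine Finset.sum_nonpos fun d hd => ?_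
    refine Finset.sum_nonpos fun e he => ?_
    have hde : d ≠ e := by
      intro hdee
      subst hdee
      exact hcN d he |>.not_ge (hcP d hd)
    exact mul_nonpos_of_nonneg_of_nonpos (hcP d hd)
      (mul_nonpos_of_nonneg_of_nonpos (by linarith [hcN e he])
        (obtuse h hΔsub hGen hmin (hPΔ hd) (hNΔ he) hde))
  have hu0 : u = 0 := by
    by_contra hne
    exact absurd hBuu (not_le.2 (h.posdef u hne))
  have hsumP : ∑ d ∈ P, c d * B v0 d = 0 := by
    have h2 := congrArg (fun v => B v0 v) hu0
    simp only [hu, map_sum, map_smul, smul_eq_mul, map_zero] at h2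
    exact h2
  have hPzero : ∀ d ∈ P, c d = 0 := by
    intro d hd
    have hterm := (Finset.sum_eq_zero_iff_of_nonneg (fun d hd =>
      mul_nonneg (hcP d hd) (le_of_lt (mem_rpos.1 (hΔsub (hPΔ hd))).2))).1 hsumP d hd
    have hBpos : 0 < B v0 d := (mem_rpos.1 (hΔsub (hPΔ hd))).2
    rcases mul_eq_zero.1 hterm with h1 | h2
    · exact h1
    · exact absurd h2 (ne_of_gt hBpos)
  have hsumN : ∑ e ∈ N, (- c e) * B v0 e = 0 := by
    have h2 := congrArg (fun v => B v0 v) (huN ▸ hu0)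
    simp only [map_sum, map_smul, smul_eq_mul, map_zero] at h2
    exact h2
  have hNempty : ∀ e ∈ N, False := by
    intro e he
    have hterm := (Finset.sum_eq_zero_iff_of_nonneg (fun e he =>
      mul_nonneg (by linarith [hcN e he]) (le_of_lt (mem_rpos.1 (hΔsub (hNΔ he))).2))).1 hsumN e he
    have hBpos : 0 < B v0 e := (mem_rpos.1 (hΔsub (hNΔ he))).2
    rcases mul_eq_zero.1 hterm with h1 | h2
    · linarith [hcN e he]
    · exact absurd h2 (ne_of_gt hBpos)
  intro d hd
  by_cases hcd : 0 ≤ c d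
  · exact hPzero d (Finset.mem_filter.2 ⟨hd, hcd⟩)
  · exact absurd (Finset.mem_filter.2 ⟨hd, hcd⟩) (fun hmem => hNempty d hmem)

lemma sum_ite_single {Δ : Finset V} {a : V} (ha : a ∈ Δ) (μ : ℝ) :
    ∑ d ∈ Δ, (if d = a then μ else 0) • d = μ • a := by
  classical
  have hc2 : ∀ d ∈ Δ, (if d = a then μ else 0) • d = if d = a then μ • d else 0 := by
    intro d _
    split <;> simp
  rw [Finset.sum_congr rfl hc2, Finset.sum_ite_eq' Δ a (fun d => μ • d), if_pos ha]

lemma simple_pos (h : RS B R v0) (hΔsub : Δ ⊆ rpos B v0 R)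
    (hGen : ∀ b ∈ rpos B v0 R, InCone Δ b)
    (hmin : ∀ S ⊆ rpos B v0 R, (∀ b ∈ rpos B v0 R, InCone S b) → Δ.card ≤ S.card)
    {a b : V} (ha : a ∈ Δ) (hb : b ∈ rpos B v0 R) (hba : b ≠ a) :
    srefl B a b ∈ rpos B v0 R := by
  classical
  have haR : a ∈ R := rpos_subset (hΔsub ha)
  have hbR : b ∈ R := rpos_subset hb
  have hsbR : srefl B a b ∈ R := h.clos a haR b hbR
  rcases h.pos_or_neg hsbR with hp | hn
  · exact hp
  · exfalso
    obtain ⟨c, hc, hcv⟩ := hGen b hb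
    obtain ⟨e, he, hev⟩ := hGen _ hn
    set μ : ℝ := 2 / B a a * B b a with hμdef
    have hsum : ∑ d ∈ Δ, (c d + e d) • d = μ • a := by
      have h1 : ∑ d ∈ Δ, (c d + e d) • d
          = (∑ d ∈ Δ, c d • d) + ∑ d ∈ Δ, e d • d := by
        rw [← Finset.sum_add_distrib]
        exact Finset.sum_congr rfl fun d _ => add_smul _ _ _
      rw [h1, ← hcv, ← hev, srefl_apply]
      abel
    have hzero : ∑ d ∈ Δ, ((c d + e d) - (if d = a then μ else 0)) • d = 0 := by
      have h1 : ∑ d ∈ Δ, ((c d + e d) - (if d = a then μ else 0)) • d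
          = (∑ d ∈ Δ, (c d + e d) • d) - ∑ d ∈ Δ, (if d = a then μ else 0) • d := by
        rw [← Finset.sum_sub_distrib]
        exact Finset.sum_congr rfl fun d _ => sub_smul _ _ _
      rw [h1, hsum, sum_ite_single ha, sub_self]
    have hcoef := indep h hΔsub hGen hmin hzero
    have hoff : ∀ d ∈ Δ.erase a, c d • d = 0 := by
      intro d hd
      obtain ⟨hda, hdΔ⟩ := Finset.mem_erase.1 hd
      have := hcoef d hdΔ
      rw [if_neg hda, sub_zero] at this
      have hcd : c d = 0 := by linarith [hc d, he d]
      rw [hcd, zero_smul]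
    have hba2 : b = c a • a := by
      conv_lhs => rw [hcv]
      rw [← Finset.add_sum_erase Δ _ ha, Finset.sum_eq_zero hoff, add_zero]
    rcases h.red a haR b hbR (c a) hba2 with h1 | h1
    · rw [h1, one_smul] at hba2
      exact hba hba2
    · have hbpos : 0 < B v0 b := (mem_rpos.1 hb).2
      have hapos : 0 < B v0 a := (mem_rpos.1 (hΔsub ha)).2
      rw [h1] at hba2
      rw [hba2] at hbpos
      rw [map_smul, smul_eq_mul] at hbpos
      linarith

lemma srefl_selfadj' {B : V →ₗ[ℝ] V →ₗ[ℝ] ℝ} (hsym : ∀ a b : V, B a b = B b a)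
    {u : V} (hu : B u u ≠ 0) (v w : V) :
    B v (srefl B u w) = B (srefl B u v) w := by
  conv_lhs => rw [← srefl_invol_apply B u hsym hu v]
  exact srefl_isom B u hsym hu (srefl B u v) w

lemma srefl_selfadj (h : RS B R v0) {u : V} (hu : u ∈ R) (v w : V) :
    B v (srefl B u w) = B (srefl B u v) w :=
  srefl_selfadj' h.sym (h.Buu_ne hu) v w

lemma srefl_conj (h : RS B R v0) {u w : V} (hu : u ∈ R) (hw : w ∈ R) :
    srefl B (srefl B u w) = srefl B u * srefl B w * srefl B u := by
  apply LinearMap.ext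
  intro v
  have hBw' : B (srefl B u w) (srefl B u w) = B w w :=
    srefl_isom B u h.sym (h.Buu_ne hu) w w
  rw [Module.End.mul_apply, Module.End.mul_apply]
  rw [srefl_apply B (srefl B u w) v, hBw', srefl_selfadj h hu]
  rw [srefl_apply B w (srefl B u v)]
  rw [map_sub, map_smul]
  rw [srefl_invol_apply B u h.sym (h.Buu_ne hu) v]

lemma wfn_conj (h : RS B R v0) {L : List V} (hL : ∀ u ∈ L, u ∈ R)
    {x : V} (hx : x ∈ R) :
    srefl B (wfn B L x) = wfn B L * srefl B x * wfn B L.reverse := by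
  induction L with
  | nil => simp [Module.End.one_apply]
  | cons a M ih =>
    have haR : a ∈ R := hL a (by simp)
    have hMR : ∀ u ∈ M, u ∈ R := fun u hu => hL u (by simp [hu])
    have hwM : wfn B M x ∈ R := h.wfn_mem hMR hx
    rw [wfn_cons, List.reverse_cons, wfn_append, wfn_singleton]
    rw [Module.End.mul_apply]
    rw [srefl_conj h haR hwM, ih hMR]
    simp only [mul_assoc]

lemma descent (h : RS B R v0) (hΔsub : Δ ⊆ rpos B v0 R)
    (hGen : ∀ b ∈ rpos B v0 R, InCone Δ b)
    (hmin : ∀ S ⊆ rpos B v0 R, (∀ b ∈ rpos B v0 R, InCone S b) → Δ.card ≤ S.card)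
    {b : V} (hb : b ∈ rpos B v0 R) (hbΔ : b ∉ Δ) :
    ∃ d ∈ Δ, srefl B d b ∈ rpos B v0 R ∧ B v0 (srefl B d b) < B v0 b := by
  classical
  obtain ⟨c, hc, hcv⟩ := hGen b hb
  have hbR : b ∈ R := rpos_subset hb
  have hBbb : 0 < B b b := h.Buu_pos hbR
  have hexp : B b b = ∑ d ∈ Δ, c d * B d b := by
    nth_rewrite 1 [hcv]
    simp only [map_sum, map_smul, LinearMap.sum_apply, LinearMap.smul_apply, smul_eq_mul]
  have hex : ∃ d ∈ Δ, 0 < c d * B d b := by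
    by_contra hno
    push_neg at hno
    have : B b b ≤ 0 := by
      rw [hexp]
      exact Finset.sum_nonpos hno
    linarith
  obtain ⟨d, hdΔ, hdpos⟩ := hex
  have hcd : 0 < c d := by
    rcases (hc d).lt_or_eq with h1 | h1
    · exact h1
    · exfalso
      rw [← h1, zero_mul] at hdpos
      exact lt_irrefl _ hdpos
  have hBdb : 0 < B d b := by
    nlinarith
  have hbd : b ≠ d := fun hbd => hbΔ (hbd ▸ hdΔ)
  refine ⟨d, hdΔ, simple_pos h hΔsub hGen hmin hdΔ hb hbd, ?_⟩
  rw [srefl_apply, map_sub, map_smul, smul_eq_mul]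
  have hκ : 0 < 2 / B d d * B b d := by
    have := h.Buu_pos (rpos_subset (hΔsub hdΔ))
    have hbd2 : 0 < B b d := by rw [h.sym b d]; exact hBdb
    positivity
  have hv0d : 0 < B v0 d := (mem_rpos.1 (hΔsub hdΔ)).2
  nlinarith

lemma gen_word (h : RS B R v0) (hΔsub : Δ ⊆ rpos B v0 R)
    (hGen : ∀ b ∈ rpos B v0 R, InCone Δ b)
    (hmin : ∀ S ⊆ rpos B v0 R, (∀ b ∈ rpos B v0 R, InCone S b) → Δ.card ≤ S.card) :
    ∀ (k : ℕ) (b : V), b ∈ rpos B v0 R →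
      ((rpos B v0 R).filter (fun c' => B v0 c' < B v0 b)).card ≤ k →
      ∃ L : List V, (∀ u ∈ L, u ∈ Δ) ∧ srefl B b = wfn B L := by
  classical
  have main : ∀ (k : ℕ) (b : V), b ∈ rpos B v0 R → b ∉ Δ →
      ((rpos B v0 R).filter (fun c' => B v0 c' < B v0 b)).card ≤ k + 1 →
      (∀ (b' : V), b' ∈ rpos B v0 R →
        ((rpos B v0 R).filter (fun c' => B v0 c' < B v0 b')).card ≤ k →
        ∃ L : List V, (∀ u ∈ L, u ∈ Δ) ∧ srefl B b' = wfn B L) →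
      ∃ L : List V, (∀ u ∈ L, u ∈ Δ) ∧ srefl B b = wfn B L := by
    intro k b hb hbΔ hcard ih
    obtain ⟨d, hdΔ, hb'pos, hb'lt⟩ := descent h hΔsub hGen hmin hb hbΔ
    set b' := srefl B d b with hb'def
    have hdR : d ∈ R := rpos_subset (hΔsub hdΔ)
    have hsub : (rpos B v0 R).filter (fun c' => B v0 c' < B v0 b')
        ⊆ ((rpos B v0 R).filter (fun c' => B v0 c' < B v0 b)).erase b' := by
      intro cc hcc
      obtain ⟨hcc1, hcc2⟩ := Finset.mem_filter.1 hcc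
      refine Finset.mem_erase.2 ⟨?_, Finset.mem_filter.2 ⟨hcc1, by linarith⟩⟩
      intro hccb
      rw [hccb] at hcc2
      exact lt_irrefl _ hcc2
    have hb'mem : b' ∈ (rpos B v0 R).filter (fun c' => B v0 c' < B v0 b) :=
      Finset.mem_filter.2 ⟨hb'pos, hb'lt⟩
    have hcard' : ((rpos B v0 R).filter (fun c' => B v0 c' < B v0 b')).card ≤ k := by
      have h1 := Finset.card_le_card hsub
      have h2 := Finset.card_erase_of_mem hb'mem
      have h3 : 0 < ((rpos B v0 R).filter (fun c' => B v0 c' < B v0 b)).card :=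
        Finset.card_pos.2 ⟨b', hb'mem⟩
      omega
    obtain ⟨L', hL', hwL'⟩ := ih b' hb'pos hcard'
    refine ⟨d :: (L' ++ [d]), ?_, ?_⟩
    · intro u hu
      rcases List.mem_cons.1 hu with h1 | h1
      · rw [h1]; exact hdΔ
      · rcases List.mem_append.1 h1 with h2 | h2
        · exact hL' u h2
        · rw [List.mem_singleton.1 h2]; exact hdΔ
    · have hinv : srefl B d b' = b :=
        srefl_invol_apply B d h.sym (h.Buu_ne hdR) b
      have hb'R : b' ∈ R := rpos_subset hb'pos
      calc srefl B b = srefl B (srefl B d b') := by rw [hinv]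
        _ = srefl B d * srefl B b' * srefl B d := srefl_conj h hdR hb'R
        _ = srefl B d * wfn B L' * srefl B d := by rw [hwL']
        _ = wfn B (d :: (L' ++ [d])) := by
            rw [wfn_cons, wfn_append, wfn_singleton, mul_assoc]
  intro k
  induction k with
  | zero =>
    intro b hb hcard
    by_cases hbΔ : b ∈ Δ
    · exact ⟨[b], by simp [hbΔ], by simp⟩
    · exfalso
      obtain ⟨d, hdΔ, hb'pos, hb'lt⟩ := descent h hΔsub hGen hmin hb hbΔ
      have hb'mem : srefl B d b ∈ (rpos B v0 R).filter (fun c' => B v0 c' < B v0 b) :=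
        Finset.mem_filter.2 ⟨hb'pos, hb'lt⟩
      have := Finset.card_pos.2 ⟨_, hb'mem⟩
      omega
  | succ k ih =>
    intro b hb hcard
    by_cases hbΔ : b ∈ Δ
    · exact ⟨[b], by simp [hbΔ], by simp⟩
    · exact main k b hb hbΔ hcard ih

/-- the set of positive roots sent to negative ones -/
noncomputable def bad (B : V →ₗ[ℝ] V →ₗ[ℝ] ℝ) (v0 : V) (R : Finset V)
    (w : Module.End ℝ V) : Finset V :=
  (rpos B v0 R).filter (fun u => B v0 (w u) < 0)

lemma neg_mem_rpos (h : RS B R v0) {u : V} (hu : u ∈ R) (hneg : B v0 u < 0) :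
    -u ∈ rpos B v0 R :=
  mem_rpos.2 ⟨h.neg_mem hu, by simpa using hneg⟩

lemma srefl_ne_of_rpos (h : RS B R v0) {a u : V} (ha : a ∈ rpos B v0 R)
    (hu : u ∈ rpos B v0 R) : srefl B a u ≠ a := by
  intro heq
  have haR : a ∈ R := rpos_subset ha
  have h4 : u = -a := by
    have h3 := congrArg (fun z => srefl B a z) heq
    rw [srefl_invol_apply B a h.sym (h.Buu_ne haR), srefl_self B a (h.Buu_ne haR)] at h3
    exact h3
  have h1 : 0 < B v0 u := (mem_rpos.1 hu).2
  have h2 : 0 < B v0 a := (mem_rpos.1 ha).2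
  rw [h4, map_neg] at h1
  linarith

lemma card_bad_erase (h : RS B R v0) (hΔsub : Δ ⊆ rpos B v0 R)
    (hGen : ∀ b ∈ rpos B v0 R, InCone Δ b)
    (hmin : ∀ S ⊆ rpos B v0 R, (∀ b ∈ rpos B v0 R, InCone S b) → Δ.card ≤ S.card)
    {a : V} (ha : a ∈ Δ) (w : Module.End ℝ V) :
    ((bad B v0 R (w * srefl B a)).erase a).card = ((bad B v0 R w).erase a).card := by
  classical
  have haR : a ∈ R := rpos_subset (hΔsub ha)
  have hstep : ∀ u, u ∈ (bad B v0 R (w * srefl B a)).erase a →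
      srefl B a u ∈ (bad B v0 R w).erase a := by
    intro u hu
    obtain ⟨hua, hubad⟩ := Finset.mem_erase.1 hu
    obtain ⟨hurp, huneg⟩ := Finset.mem_filter.1 hubad
    have hsu : srefl B a u ∈ rpos B v0 R := simple_pos h hΔsub hGen hmin ha hurp hua
    refine Finset.mem_erase.2 ⟨srefl_ne_of_rpos h (hΔsub ha) hurp, ?_⟩
    refine Finset.mem_filter.2 ⟨hsu, ?_⟩
    rw [Module.End.mul_apply] at huneg
    exact huneg
  have hstep' : ∀ u, u ∈ (bad B v0 R w).erase a →
      srefl B a u ∈ (bad B v0 R (w * srefl B a)).erase a := by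
    intro u hu
    obtain ⟨hua, hubad⟩ := Finset.mem_erase.1 hu
    obtain ⟨hurp, huneg⟩ := Finset.mem_filter.1 hubad
    have hsu : srefl B a u ∈ rpos B v0 R := simple_pos h hΔsub hGen hmin ha hurp hua
    refine Finset.mem_erase.2 ⟨srefl_ne_of_rpos h (hΔsub ha) hurp, ?_⟩
    refine Finset.mem_filter.2 ⟨hsu, ?_⟩
    rw [Module.End.mul_apply, srefl_invol_apply B a h.sym (h.Buu_ne haR)]
    exact huneg
  refine Finset.card_bij' (fun u _ => srefl B a u) (fun u _ => srefl B a u)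
    hstep hstep' ?_ ?_
  · intro u _
    exact srefl_invol_apply B a h.sym (h.Buu_ne haR) u
  · intro u _
    exact srefl_invol_apply B a h.sym (h.Buu_ne haR) u

lemma card_bad_mul_of_neg (h : RS B R v0) (hΔsub : Δ ⊆ rpos B v0 R)
    (hGen : ∀ b ∈ rpos B v0 R, InCone Δ b)
    (hmin : ∀ S ⊆ rpos B v0 R, (∀ b ∈ rpos B v0 R, InCone S b) → Δ.card ≤ S.card)
    {a : V} (ha : a ∈ Δ) {L : List V} (hL : ∀ u ∈ L, u ∈ R)
    (hneg : B v0 (wfn B L a) < 0) :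
    (bad B v0 R (wfn B L * srefl B a)).card + 1 = (bad B v0 R (wfn B L)).card := by
  classical
  have haR : a ∈ R := rpos_subset (hΔsub ha)
  have hamem : a ∈ bad B v0 R (wfn B L) :=
    Finset.mem_filter.2 ⟨hΔsub ha, hneg⟩
  have hanot : a ∉ bad B v0 R (wfn B L * srefl B a) := by
    intro hmem
    have := (Finset.mem_filter.1 hmem).2
    rw [Module.End.mul_apply, srefl_self B a (h.Buu_ne haR), map_neg, map_neg] at this
    linarith
  have h1 : (bad B v0 R (wfn B L * srefl B a)).card
      = ((bad B v0 R (wfn B L * srefl B a)).erase a).card := by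
    rw [Finset.erase_eq_of_notMem hanot]
  have h2 := card_bad_erase h hΔsub hGen hmin ha (wfn B L)
  have h3 := Finset.card_erase_of_mem hamem
  have h4 : 0 < (bad B v0 R (wfn B L)).card := Finset.card_pos.2 ⟨a, hamem⟩
  omega

lemma wfn_pos_of_simple_pos (h : RS B R v0) (hΔsub : Δ ⊆ rpos B v0 R)
    (hGen : ∀ b ∈ rpos B v0 R, InCone Δ b)
    {L : List V} (hL : ∀ u ∈ L, u ∈ R)
    (hpos : ∀ a ∈ Δ, 0 < B v0 (wfn B L a)) :
    ∀ b ∈ rpos B v0 R, 0 < B v0 (wfn B L b) := by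
  intro b hb
  obtain ⟨c, hc, hcv⟩ := hGen b hb
  have hbR : b ∈ R := rpos_subset hb
  have hwbR : wfn B L b ∈ R := h.wfn_mem hL hbR
  have hnonneg : 0 ≤ B v0 (wfn B L b) := by
    rw [hcv, map_sum]
    simp only [map_smul]
    rw [map_sum]
    refine Finset.sum_nonneg fun d hd => ?_
    rw [map_smul, smul_eq_mul]
    exact mul_nonneg (hc d) (le_of_lt (hpos d hd))
  rcases lt_or_eq_of_le hnonneg with h1 | h1
  · exact h1
  · exact absurd h1.symm (h.reg _ hwbR)

lemma exchange (h : RS B R v0) (hΔsub : Δ ⊆ rpos B v0 R)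
    (hGen : ∀ b ∈ rpos B v0 R, InCone Δ b)
    (hmin : ∀ S ⊆ rpos B v0 R, (∀ b ∈ rpos B v0 R, InCone S b) → Δ.card ≤ S.card) :
    ∀ (L : List V), (∀ u ∈ L, u ∈ Δ) → ∀ x ∈ rpos B v0 R,
      B v0 (wfn B L x) < 0 →
      ∃ L' : List V, (∀ u ∈ L', u ∈ Δ) ∧ L'.length + 1 = L.length ∧
        wfn B L * srefl B x = wfn B L' := by
  intro L
  induction L with
  | nil =>
    intro _ x hx hneg
    exfalso
    simp only [wfn_nil, Module.End.one_apply] at hneg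
    linarith [(mem_rpos.1 hx).2]
  | cons a M ih =>
    intro hL x hx hneg
    have haΔ : a ∈ Δ := hL a (by simp)
    have hMΔ : ∀ u ∈ M, u ∈ Δ := fun u hu => hL u (by simp [hu])
    have hMR : ∀ u ∈ M, u ∈ R := fun u hu => rpos_subset (hΔsub (hMΔ u hu))
    have hxR : x ∈ R := rpos_subset hx
    have hcR : wfn B M x ∈ R := h.wfn_mem hMR hxR
    rcases lt_or_gt_of_ne (h.reg _ hcR) with hcneg | hcpos
    · -- B v0 (wfn M x) < 0 : use ih
      obtain ⟨M', hM', hlen, hw⟩ := ih hMΔ x hx hcneg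
      refine ⟨a :: M', fun u hu => ?_, ?_, ?_⟩
      · rcases List.mem_cons.1 hu with h1 | h1
        · rw [h1]; exact haΔ
        · exact hM' u h1
      · simp only [List.length_cons]
        omega
      · rw [wfn_cons, mul_assoc, hw, wfn_cons]
    · -- wfn M x positive, so it must equal a
      have hcrp : wfn B M x ∈ rpos B v0 R := mem_rpos.2 ⟨hcR, hcpos⟩
      have hca : wfn B M x = a := by
        by_contra hne
        have := simple_pos h hΔsub hGen hmin haΔ hcrp hne
        have h2 := (mem_rpos.1 this).2
        rw [wfn_cons, Module.End.mul_apply] at hneg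
        linarith
      refine ⟨M, hMΔ, by simp, ?_⟩
      have hconj : srefl B (wfn B M x) = wfn B M * srefl B x * wfn B M.reverse :=
        wfn_conj h hMR hxR
      rw [hca] at hconj
      rw [wfn_cons, hconj]
      have hrev : wfn B M.reverse * wfn B M = 1 :=
        wfn_rev_left B h.sym M (h.wfn_ne hMR)
      have hxx : srefl B x * srefl B x = 1 := srefl_invol B x h.sym (h.Buu_ne hxR)
      calc wfn B M * srefl B x * wfn B M.reverse * (wfn B M * srefl B x)
          = wfn B M * srefl B x * (wfn B M.reverse * wfn B M) * srefl B x := by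
            simp only [mul_assoc]
        _ = wfn B M * (srefl B x * srefl B x) := by rw [hrev, mul_one]; simp only [mul_assoc]
        _ = wfn B M := by rw [hxx, mul_one]

lemma nzero_id (h : RS B R v0) (hΔsub : Δ ⊆ rpos B v0 R)
    (hGen : ∀ b ∈ rpos B v0 R, InCone Δ b)
    (hmin : ∀ S ⊆ rpos B v0 R, (∀ b ∈ rpos B v0 R, InCone S b) → Δ.card ≤ S.card) :
    ∀ (k : ℕ) (L : List V), (∀ u ∈ L, u ∈ Δ) → L.length ≤ k →
      (bad B v0 R (wfn B L)).card = 0 → wfn B L = 1 := by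
  classical
  intro k
  induction k with
  | zero =>
    intro L _ hlen _
    rw [List.length_eq_zero_iff.1 (Nat.le_zero.1 hlen)]
    simp
  | succ k ih =>
    intro L hL hlen hbad
    match L with
    | [] => simp
    | a :: M =>
      have haΔ : a ∈ Δ := hL a (by simp)
      have haR : a ∈ R := rpos_subset (hΔsub haΔ)
      have hMΔ : ∀ u ∈ M, u ∈ Δ := fun u hu => hL u (by simp [hu])
      have hMR : ∀ u ∈ M, u ∈ R := fun u hu => rpos_subset (hΔsub (hMΔ u hu))
      have hMrevR : ∀ u ∈ M.reverse, u ∈ R := fun u hu => hMR u (List.mem_reverse.1 hu)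
      set uvec := wfn B M.reverse (-a) with huvec
      have huR : uvec ∈ R := h.wfn_mem hMrevR (h.neg_mem haR)
      have hMu : wfn B M uvec = -a := by
        have hcomp : wfn B M * wfn B M.reverse = 1 :=
          wfn_rev_right B h.sym M (h.wfn_ne hMR)
        have := congrArg (fun f : Module.End ℝ V => f (-a)) hcomp
        simp only [Module.End.mul_apply, Module.End.one_apply] at this
        exact this
      have hnegBa : B v0 (-a) < 0 := by
        have : 0 < B v0 a := (mem_rpos.1 (hΔsub haΔ)).2
        rw [map_neg]
        linarith
      rcases h.pos_or_neg huR with hurp | hurn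
      · -- exchange
        obtain ⟨M'', hM'', hlen'', hw''⟩ :=
          exchange h hΔsub hGen hmin M hMΔ uvec hurp (by rw [hMu]; exact hnegBa)
        have hconj : srefl B (wfn B M uvec) = wfn B M * srefl B uvec * wfn B M.reverse :=
          wfn_conj h hMR huR
        rw [hMu, srefl_neg] at hconj
        have hkey : wfn B (a :: M) = wfn B M'' := by
          rw [wfn_cons, hconj]
          have hrev : wfn B M.reverse * wfn B M = 1 :=
            wfn_rev_left B h.sym M (h.wfn_ne hMR)
          calc wfn B M * srefl B uvec * wfn B M.reverse * wfn B M
              = wfn B M * srefl B uvec * (wfn B M.reverse * wfn B M) := by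
                simp only [mul_assoc]
            _ = wfn B M * srefl B uvec := by rw [hrev, mul_one]
            _ = wfn B M'' := hw''
        rw [hkey]
        refine ih M'' hM'' ?_ ?_
        · have : (a :: M).length ≤ k + 1 := hlen
          simp only [List.length_cons] at this
          omega
        · rw [← hkey]
          exact hbad
      · -- contradiction: -uvec is a positive root sent to a negative root
        exfalso
        have hwneg : wfn B (a :: M) (-uvec) = -a := by
          have h5 : (srefl B a) a = -a := srefl_self B a (h.Buu_ne haR)
          simp [wfn_cons, Module.End.mul_apply, map_neg, hMu, h5]
        have hmem : -uvec ∈ bad B v0 R (wfn B (a :: M)) := by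
          refine Finset.mem_filter.2 ⟨hurn, ?_⟩
          rw [hwneg]
          exact hnegBa
        have := Finset.card_pos.2 ⟨_, hmem⟩
        omega

lemma main_ind (h : RS B R v0) (hΔsub : Δ ⊆ rpos B v0 R)
    (hGen : ∀ b ∈ rpos B v0 R, InCone Δ b)
    (hmin : ∀ S ⊆ rpos B v0 R, (∀ b ∈ rpos B v0 R, InCone S b) → Δ.card ≤ S.card) :
    ∀ (N : ℕ) (L : List V), (∀ u ∈ L, u ∈ Δ) →
      (bad B v0 R (wfn B L)).card ≤ N →
      ∀ p q : V, (∀ u ∈ rpos B v0 R, 0 ≤ B p u) → (∀ u ∈ rpos B v0 R, 0 ≤ B q u) →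
      wfn B L p = q → p = q := by
  classical
  intro N
  induction N with
  | zero =>
    intro L hL hbad p q hp hq hw
    have hLR : ∀ u ∈ L, u ∈ R := fun u hu => rpos_subset (hΔsub (hL u hu))
    have hnopos : ∀ a ∈ Δ, 0 < B v0 (wfn B L a) := by
      intro a ha
      have haR : a ∈ R := rpos_subset (hΔsub ha)
      have hwaR : wfn B L a ∈ R := h.wfn_mem hLR haR
      rcases lt_or_gt_of_ne (h.reg _ hwaR) with h1 | h1
      · exfalso
        have hmem : a ∈ bad B v0 R (wfn B L) := Finset.mem_filter.2 ⟨hΔsub ha, h1⟩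
        have := Finset.card_pos.2 ⟨_, hmem⟩
        omega
      · exact h1
    have hid : wfn B L = 1 := by
      refine nzero_id h hΔsub hGen hmin L.length L hL le_rfl ?_
      have hempty : bad B v0 R (wfn B L) = ∅ := by
        refine Finset.filter_eq_empty_iff.2 ?_
        intro u hu
        have := wfn_pos_of_simple_pos h hΔsub hGen hLR hnopos u hu
        linarith
      rw [hempty]
      rfl
    rw [hid] at hw
    simpa using hw
  | succ N ih =>
    intro L hL hbad p q hp hq hw
    have hLR : ∀ u ∈ L, u ∈ R := fun u hu => rpos_subset (hΔsub (hL u hu))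
    by_cases hex : ∃ a ∈ Δ, B v0 (wfn B L a) < 0
    · obtain ⟨a, haΔ, haneg⟩ := hex
      have haR : a ∈ R := rpos_subset (hΔsub haΔ)
      have hwaR : wfn B L a ∈ R := h.wfn_mem hLR haR
      have hBpa : B p a = 0 := by
        have h1 : 0 ≤ B p a := hp a (hΔsub haΔ)
        have h2 : -(wfn B L a) ∈ rpos B v0 R := neg_mem_rpos h hwaR haneg
        have h3 : 0 ≤ B q (-(wfn B L a)) := hq _ h2
        rw [map_neg] at h3
        have h4 : B q (wfn B L a) = B p a := by
          rw [← hw]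
          exact wfn_isom B h.sym L (h.wfn_ne hLR) p a
        linarith
      have hfix : srefl B a p = p := by
        rw [srefl_apply]
        have : B p a = 0 := hBpa
        rw [this, mul_zero, zero_smul, sub_zero]
      have hw' : wfn B (L ++ [a]) p = q := by
        rw [wfn_append, wfn_singleton, Module.End.mul_apply, hfix]
        exact hw
      have hcount := card_bad_mul_of_neg h hΔsub hGen hmin haΔ hLR haneg
      have hbad' : (bad B v0 R (wfn B (L ++ [a]))).card ≤ N := by
        rw [wfn_append, wfn_singleton]
        omega
      refine ih (L ++ [a]) ?_ hbad' p q hp hq hw'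
      intro u hu
      rcases List.mem_append.1 hu with h1 | h1
      · exact hL u h1
      · rw [List.mem_singleton.1 h1]
        exact haΔ
    · push_neg at hex
      have hnopos : ∀ a ∈ Δ, 0 < B v0 (wfn B L a) := by
        intro a ha
        have haR : a ∈ R := rpos_subset (hΔsub ha)
        have hwaR : wfn B L a ∈ R := h.wfn_mem hLR haR
        rcases lt_or_gt_of_ne (h.reg _ hwaR) with h1 | h1
        · exact absurd h1 (not_lt.2 (hex a ha))
        · exact h1
      have hid : wfn B L = 1 := by
        refine nzero_id h hΔsub hGen hmin L.length L hL le_rfl ?_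
        have hempty : bad B v0 R (wfn B L) = ∅ := by
          refine Finset.filter_eq_empty_iff.2 ?_
          intro u hu
          have := wfn_pos_of_simple_pos h hΔsub hGen hLR hnopos u hu
          linarith
        rw [hempty]
        rfl
      rw [hid] at hw
      simpa using hw

end SimpleSystem

/-- The core uniqueness theorem: two dominant vectors in the same orbit of the
group generated by the reflections in the roots are equal. -/
theorem core (h : RS B R v0) {L : List V} (hL : ∀ u ∈ L, u ∈ R) {p q : V}
    (hp : ∀ u ∈ rpos B v0 R, 0 ≤ B p u) (hq : ∀ u ∈ rpos B v0 R, 0 ≤ B q u)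
    (hpq : wfn B L p = q) : p = q := by
  classical
  set 𝒮 := (rpos B v0 R).powerset.filter
    (fun S => ∀ b ∈ rpos B v0 R, InCone S b) with h𝒮def
  have h𝒮 : rpos B v0 R ∈ 𝒮 := by
    refine Finset.mem_filter.2 ⟨Finset.mem_powerset_self _, ?_⟩
    intro b hb
    exact incone_mem hb
  obtain ⟨Δ, hΔ𝒮, hΔmin⟩ := Finset.exists_min_image 𝒮 Finset.card ⟨_, h𝒮⟩
  obtain ⟨hΔpow, hGen⟩ := Finset.mem_filter.1 hΔ𝒮
  have hΔsub : Δ ⊆ rpos B v0 R := Finset.mem_powerset.1 hΔpow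
  have hmin : ∀ S ⊆ rpos B v0 R, (∀ b ∈ rpos B v0 R, InCone S b) → Δ.card ≤ S.card := by
    intro S hS hGenS
    exact hΔmin S (Finset.mem_filter.2 ⟨Finset.mem_powerset.2 hS, hGenS⟩)
  -- convert L to a word in simple reflections
  have hconv : ∀ (L' : List V), (∀ u ∈ L', u ∈ R) →
      ∃ M : List V, (∀ u ∈ M, u ∈ Δ) ∧ wfn B L' = wfn B M := by
    intro L'
    induction L' with
    | nil => exact fun _ => ⟨[], by simp, by simp⟩
    | cons a L'' ih =>
      intro hL'
      have haR : a ∈ R := hL' a (by simp)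
      obtain ⟨M'', hM'', hwM''⟩ := ih (fun u hu => hL' u (by simp [hu]))
      have hposcase : ∃ b ∈ rpos B v0 R, srefl B a = srefl B b := by
        rcases h.pos_or_neg haR with h1 | h1
        · exact ⟨a, h1, rfl⟩
        · exact ⟨-a, h1, (srefl_neg B a).symm⟩
      obtain ⟨b, hb, hab⟩ := hposcase
      obtain ⟨Mb, hMb, hwMb⟩ := gen_word h hΔsub hGen hmin
        (((rpos B v0 R).filter (fun c' => B v0 c' < B v0 b)).card) b hb le_rfl
      refine ⟨Mb ++ M'', ?_, ?_⟩
      · intro u hu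
        rcases List.mem_append.1 hu with h1 | h1
        · exact hMb u h1
        · exact hM'' u h1
      · rw [wfn_cons, hab, hwMb, wfn_append, hwM'']
  obtain ⟨M, hM, hwM⟩ := hconv L hL
  rw [hwM] at hpq
  exact main_ind h hΔsub hGen hmin ((bad B v0 R (wfn B M)).card) M hM le_rfl p q hp hq hpq

end Stmt1Aux

namespace Stmt1Aux

variable {V : Type*} [AddCommGroup V] [Module ℝ V]

/-- The linear reflection attached to a root `β` and coroot assignment `co`. -/
noncomputable def sE (co : Module.Dual ℝ V → V) (β : Module.Dual ℝ V) : Module.End ℝ V :=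
  LinearMap.id - β.smulRight (co β)

lemma sE_apply (co : Module.Dual ℝ V → V) (β : Module.Dual ℝ V) (v : V) :
    sE co β v = v - β v • co β := by
  simp [sE, LinearMap.sub_apply, LinearMap.smulRight_apply]

/-- Word in the linear reflections. -/
noncomputable def wE (co : Module.Dual ℝ V → V) (L : List (Module.Dual ℝ V)) :
    Module.End ℝ V :=
  (L.map (sE co)).prod

@[simp] lemma wE_nil (co : Module.Dual ℝ V → V) : wE co ([] : List (Module.Dual ℝ V)) = 1 := rfl

@[simp] lemma wE_cons (co : Module.Dual ℝ V → V) (a : Module.Dual ℝ V)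
    (L : List (Module.Dual ℝ V)) : wE co (a :: L) = sE co a * wE co L := by
  simp [wE]

@[simp] lemma wE_singleton (co : Module.Dual ℝ V → V) (a : Module.Dual ℝ V) :
    wE co [a] = sE co a := by simp [wE]

lemma wE_append (co : Module.Dual ℝ V → V) (L M : List (Module.Dual ℝ V)) :
    wE co (L ++ M) = wE co L * wE co M := by
  simp [wE]

lemma sE_invol (co : Module.Dual ℝ V → V) {β : Module.Dual ℝ V} (hβ : β (co β) = 2) :
    sE co β * sE co β = 1 := by
  apply LinearMap.ext
  intro v
  rw [Module.End.mul_apply, Module.End.one_apply, sE_apply, sE_apply, map_sub, map_smul,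
    smul_eq_mul, hβ]
  module

lemma wE_rev_left (co : Module.Dual ℝ V → V) (L : List (Module.Dual ℝ V))
    (hL : ∀ β ∈ L, β (co β) = 2) : wE co L.reverse * wE co L = 1 := by
  induction L with
  | nil => simp
  | cons a M ih =>
    have ha : a (co a) = 2 := hL a (by simp)
    have ihM : wE co M.reverse * wE co M = 1 := ih (fun u hu => hL u (by simp [hu]))
    simp only [List.reverse_cons, wE_append, wE_cons, wE_nil, mul_one, wE_singleton]
    rw [mul_assoc, ← mul_assoc (sE co a), sE_invol co ha, one_mul, ihM]

lemma wE_rev_right (co : Module.Dual ℝ V → V) (L : List (Module.Dual ℝ V))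
    (hL : ∀ β ∈ L, β (co β) = 2) : wE co L * wE co L.reverse = 1 := by
  have := wE_rev_left co L.reverse (fun u hu => hL u (by simpa using hu))
  simpa using this

/-- Representation of elements of the affine reflection subgroup fixing `x₀`. -/
lemma rep {Φ : Set (Module.Dual ℝ V)} (co : Module.Dual ℝ V → V)
    (hpair : ∀ α ∈ Φ, α (co α) = 2)
    (r : Module.Dual ℝ V → V → Equiv.Perm V)
    (hr : ∀ α ∈ Φ, ∀ z v : V, r α z v = v - (α v - α z) • co α)
    (x₀ : V) (C : Module.Dual ℝ V → Prop) :
    ∀ g ∈ Subgroup.closure {g : Equiv.Perm V | ∃ α ∈ Φ, C α ∧ g = r α x₀},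
      ∃ L : List (Module.Dual ℝ V), (∀ α ∈ L, α ∈ Φ ∧ C α) ∧
        ∀ v : V, g v = x₀ + wE co L (v - x₀) := by
  intro g hg
  induction hg using Subgroup.closure_induction with
  | mem g hgen =>
    obtain ⟨α, hα, hCα, rfl⟩ := hgen
    refine ⟨[α], by simp [hα, hCα], ?_⟩
    intro v
    rw [hr α hα x₀ v]
    simp only [wE_singleton, sE_apply, map_sub, sub_smul]
    abel
  | one =>
    refine ⟨[], by simp, ?_⟩
    intro v
    simp [Module.End.one_apply]
  | mul g₁ g₂ hg₁ hg₂ ih₁ ih₂ =>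
    obtain ⟨L₁, hL₁, hrep₁⟩ := ih₁
    obtain ⟨L₂, hL₂, hrep₂⟩ := ih₂
    refine ⟨L₁ ++ L₂, ?_, ?_⟩
    · intro α hα
      rcases List.mem_append.1 hα with h1 | h1
      · exact hL₁ α h1
      · exact hL₂ α h1
    · intro v
      rw [Equiv.Perm.mul_apply, hrep₂ v, hrep₁, wE_append, Module.End.mul_apply]
      congr 1
      congr 1
      abel
  | inv g hgmem ih =>
    obtain ⟨L, hL, hrep⟩ := ih
    refine ⟨L.reverse, fun α hα => hL α (List.mem_reverse.1 hα), ?_⟩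
    intro v
    have hpairL : ∀ β ∈ L, β (co β) = 2 := fun β hβ => hpair β (hL β hβ).1
    have hginv : g (x₀ + wE co L.reverse (v - x₀)) = v := by
      rw [hrep]
      have h1 : x₀ + wE co L.reverse (v - x₀) - x₀ = wE co L.reverse (v - x₀) := by abel
      rw [h1]
      have h2 : wE co L (wE co L.reverse (v - x₀)) = v - x₀ := by
        have := congrArg (fun f : Module.End ℝ V => f (v - x₀)) (wE_rev_right co L hpairL)
        simpa [Module.End.mul_apply, Module.End.one_apply] using this
      rw [h2]
      abel
    conv_lhs => rw [← hginv]
    exact Equiv.symm_apply_apply g _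

end Stmt1Aux

namespace Stmt1Aux

variable {V : Type*} [AddCommGroup V] [Module ℝ V]

/-- The canonical invariant bilinear form attached to a finite set of roots. -/
noncomputable def Bform (Φfin : Finset (Module.Dual ℝ V)) : V →ₗ[ℝ] V →ₗ[ℝ] ℝ :=
  LinearMap.mk₂ ℝ (fun v w => ∑ α ∈ Φfin, α v * α w)
    (by intro m₁ m₂ n; rw [← Finset.sum_add_distrib]
        exact Finset.sum_congr rfl fun α _ => by rw [map_add]; ring)
    (by intro c m n; rw [Finset.smul_sum]
        exact Finset.sum_congr rfl fun α _ => by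
          rw [map_smul, smul_eq_mul, smul_eq_mul]; ring)
    (by intro m n₁ n₂; rw [← Finset.sum_add_distrib]
        exact Finset.sum_congr rfl fun α _ => by rw [map_add]; ring)
    (by intro c m n; rw [Finset.smul_sum]
        exact Finset.sum_congr rfl fun α _ => by
          rw [map_smul, smul_eq_mul, smul_eq_mul]; ring)

lemma Bform_apply (Φfin : Finset (Module.Dual ℝ V)) (v w : V) :
    Bform Φfin v w = ∑ α ∈ Φfin, α v * α w := rfl

lemma Bform_symm (Φfin : Finset (Module.Dual ℝ V)) (v w : V) :
    Bform Φfin v w = Bform Φfin w v := by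
  rw [Bform_apply, Bform_apply]
  exact Finset.sum_congr rfl fun α _ => by ring

lemma Bform_posdef (Φfin : Finset (Module.Dual ℝ V))
    (hsep : ∀ v : V, v ≠ 0 → ∃ α ∈ Φfin, α v ≠ 0) (v : V) (hv : v ≠ 0) :
    0 < Bform Φfin v v := by
  obtain ⟨α, hα, hαv⟩ := hsep v hv
  rw [Bform_apply]
  refine Finset.sum_pos' (fun β _ => mul_self_nonneg _) ⟨α, hα, ?_⟩
  exact mul_self_pos.2 hαv

end Stmt1Aux

namespace Stmt1Aux

variable {V : Type*} [AddCommGroup V] [Module ℝ V]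

lemma dual_comp_sE (co : Module.Dual ℝ V → V) (β α : Module.Dual ℝ V) (v : V) :
    α (sE co β v) = (α - α (co β) • β) v := by
  rw [sE_apply, map_sub, map_smul, smul_eq_mul]
  simp only [LinearMap.sub_apply, LinearMap.smul_apply, smul_eq_mul]
  ring

lemma Bform_inv (Φfin : Finset (Module.Dual ℝ V)) (co : Module.Dual ℝ V → V)
    {β : Module.Dual ℝ V} (hpair2 : β (co β) = 2)
    (hclosed : ∀ α ∈ Φfin, α - α (co β) • β ∈ Φfin) (v w : V) :
    Bform Φfin (sE co β v) (sE co β w) = Bform Φfin v w := by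
  rw [Bform_apply, Bform_apply]
  have hinv : ∀ α ∈ Φfin,
      (α - α (co β) • β) - ((α - α (co β) • β) (co β)) • β = α := by
    intro α _
    have h1 : (α - α (co β) • β) (co β) = - α (co β) := by
      simp only [LinearMap.sub_apply, LinearMap.smul_apply, smul_eq_mul, hpair2]
      ring
    rw [h1]
    module
  refine Finset.sum_nbij' (fun α => α - α (co β) • β) (fun α => α - α (co β) • β)
    hclosed hclosed hinv hinv ?_
  intro α _
  rw [dual_comp_sE, dual_comp_sE]

lemma FORM (Φfin : Finset (Module.Dual ℝ V)) (co : Module.Dual ℝ V → V)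
    {β : Module.Dual ℝ V} (hpair2 : β (co β) = 2)
    (hclosed : ∀ α ∈ Φfin, α - α (co β) • β ∈ Φfin) (v : V) :
    β v * Bform Φfin (co β) (co β) = 2 * Bform Φfin v (co β) := by
  have hsc : sE co β (co β) = -(co β) := by
    rw [sE_apply, hpair2]
    module
  have h1 := Bform_inv Φfin co hpair2 hclosed v (co β)
  rw [hsc, map_neg] at h1
  have h2 : Bform Φfin (sE co β v) (co β)
      = Bform Φfin v (co β) - β v * Bform Φfin (co β) (co β) := by
    rw [sE_apply, map_sub, LinearMap.sub_apply, map_smul, LinearMap.smul_apply, smul_eq_mul]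
  rw [h2] at h1
  linarith

end Stmt1Aux
open Stmt1Aux in
/-- Let `Φ ⊂ V*` be a finite reduced crystallographic root system spanning `V*`, with
coroot lattice `Q` and affine Weyl group acting on `V`.  Fix a positive system `Pos ⊆ Φ`,
let `x ∈ V` and let `y ∈ V` be special.  If `ℓ, ℓ' ∈ X_{x,y}^+` are such that there exist
`w_y ∈ W_y` and `w_x ∈ W_x` with `t(ℓ') = w_y ∘ t(ℓ) ∘ w_x`, then `ℓ = ℓ'`; hence
distinct elements of `X_{x,y}^+` give translations lying in distinct
`(W_y, W_x)`-double cosets. -/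
theorem stmt_1 (V : Type*) [AddCommGroup V] [Module ℝ V] [FiniteDimensional ℝ V]
    (Φ : Set (Module.Dual ℝ V)) (hfin : Φ.Finite) (h0 : (0 : Module.Dual ℝ V) ∉ Φ)
    (hspan : Submodule.span ℝ Φ = ⊤)
    (coroot : Module.Dual ℝ V → V)
    (hpair : ∀ α ∈ Φ, α (coroot α) = 2)
    (hreflco : ∀ α ∈ Φ, ∀ β ∈ Φ, coroot β - α (coroot β) • coroot α ∈ coroot '' Φ)
    (hrefl : ∀ α ∈ Φ, ∀ β ∈ Φ, β - β (coroot α) • α ∈ Φ)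
    (hcrys : ∀ α ∈ Φ, ∀ β ∈ Φ, ∃ n : ℤ, β (coroot α) = (n : ℝ))
    (hred : ∀ α ∈ Φ, ∀ c : ℝ, c • α ∈ Φ → c = 1 ∨ c = -1)
    -- the linear reflections `s α : v ↦ v − α(v) α^∨` for `α ∈ Φ`
    (s : Module.Dual ℝ V → Equiv.Perm V)
    (hs : ∀ α ∈ Φ, ∀ v : V, s α v = v - α v • coroot α)
    -- the affine reflections `r α z : v ↦ v − (α(v) − α(z)) α^∨` for `α ∈ Φ`
    (r : Module.Dual ℝ V → V → Equiv.Perm V)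
    (hr : ∀ α ∈ Φ, ∀ z v : V, r α z v = v - (α v - α z) • coroot α)
    -- a positive system `Pos = Φ^+ ⊆ Φ`
    (Pos : Set (Module.Dual ℝ V))
    (hPos : ∃ v0 : V, (∀ α ∈ Φ, α v0 ≠ 0) ∧ Pos = {α ∈ Φ | 0 < α v0})
    (x y : V)
    -- `y` is special
    (hy : ∀ α ∈ Φ, ∃ n : ℤ, α y = (n : ℝ)) :
    ∀ ℓ ℓ' : V,
      (ℓ ∈ AddSubgroup.closure (coroot '' Φ) ∧
        ∀ α ∈ Pos, (∃ n : ℤ, α x = (n : ℝ)) → α (y - x) ≤ α ℓ) →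
      (ℓ' ∈ AddSubgroup.closure (coroot '' Φ) ∧
        ∀ α ∈ Pos, (∃ n : ℤ, α x = (n : ℝ)) → α (y - x) ≤ α ℓ') →
      (∃ wy ∈ Subgroup.closure
          {g : Equiv.Perm V | ∃ α ∈ Φ, (∃ n : ℤ, α y = (n : ℝ)) ∧ g = r α y},
        ∃ wx ∈ Subgroup.closure
          {g : Equiv.Perm V | ∃ α ∈ Φ, (∃ n : ℤ, α x = (n : ℝ)) ∧ g = r α x},
          Equiv.addRight ℓ' = wy * Equiv.addRight ℓ * wx) →
      ℓ = ℓ' := by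
  classical
  intro ℓ ℓ' hℓ hℓ' hdc
  obtain ⟨wy, hwy, wx, hwx, hEq⟩ := hdc
  set Φfin := hfin.toFinset with hΦfin
  have hmemΦfin : ∀ α, α ∈ Φfin ↔ α ∈ Φ := fun α => hfin.mem_toFinset
  set Bf := Bform Φfin with hBf
  have hsym : ∀ a b : V, Bf a b = Bf b a := Bform_symm Φfin
  have hsep : ∀ v : V, v ≠ 0 → ∃ α ∈ Φfin, α v ≠ 0 := by
    intro v hv
    by_contra hno
    push_neg at hno
    apply hv
    have hall : ∀ φ : Module.Dual ℝ V, φ v = 0 := by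
      intro φ
      have hφ : φ ∈ Submodule.span ℝ Φ := by rw [hspan]; exact Submodule.mem_top
      induction hφ using Submodule.span_induction with
      | mem f hf => exact hno f ((hmemΦfin f).2 hf)
      | zero => simp
      | add f g _ _ hf hg => simp [LinearMap.add_apply, hf, hg]
      | smul c f _ hf => simp [LinearMap.smul_apply, hf]
    exact (Module.forall_dual_apply_eq_zero_iff ℝ v).1 hall
  have hposdef : ∀ v : V, v ≠ 0 → 0 < Bf v v := Bform_posdef Φfin hsep
  have hclosed : ∀ β ∈ Φ, ∀ α ∈ Φfin, α - α (coroot β) • β ∈ Φfin := by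
    intro β hβ α hα
    rw [hmemΦfin] at hα ⊢
    exact hrefl β hβ α hα
  have hform : ∀ β ∈ Φ, ∀ v : V,
      β v * Bf (coroot β) (coroot β) = 2 * Bf v (coroot β) :=
    fun β hβ v => FORM Φfin coroot (hpair β hβ) (hclosed β hβ) v
  have hcne : ∀ β ∈ Φ, coroot β ≠ 0 := by
    intro β hβ h0'
    have h2 := hpair β hβ
    rw [h0', map_zero] at h2
    norm_num at h2
  have hccpos : ∀ β ∈ Φ, 0 < Bf (coroot β) (coroot β) :=
    fun β hβ => hposdef _ (hcne β hβ)
  have hbridge : ∀ β ∈ Φ, sE coroot β = srefl Bf (coroot β) := by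
    intro β hβ
    apply LinearMap.ext
    intro v
    rw [sE_apply, srefl_apply]
    have hcc := hccpos β hβ
    have hco : β v = 2 / Bf (coroot β) (coroot β) * Bf v (coroot β) := by
      rw [eq_comm, div_mul_eq_mul_div, div_eq_iff (ne_of_gt hcc)]
      linarith [hform β hβ v]
    rw [hco]
  set Ψfin := Φfin.filter (fun α => ∃ n : ℤ, α x = (n : ℝ)) with hΨ
  set Rr := Ψfin.image coroot with hRrdef
  obtain ⟨v0, hv0reg, hPosEq⟩ := hPos
  have hmemΨ : ∀ β ∈ Ψfin, β ∈ Φ ∧ ∃ n : ℤ, β x = (n : ℝ) := by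
    intro β hβ
    obtain ⟨h1, h2⟩ := Finset.mem_filter.1 hβ
    exact ⟨(hmemΦfin β).1 h1, h2⟩
  have hRmem : ∀ u ∈ Rr, ∃ β ∈ Ψfin, coroot β = u := by
    intro u hu
    obtain ⟨β, hβ, rfl⟩ := Finset.mem_image.1 hu
    exact ⟨β, hβ, rfl⟩
  -- the RS structure
  have hRS : RS Bf Rr v0 := by
    refine ⟨hsym, hposdef, ?_, ?_, ?_, ?_⟩
    · intro u hu
      obtain ⟨β, hβ, rfl⟩ := hRmem u hu
      exact hcne β (hmemΨ β hβ).1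
    · -- closure under reflections
      intro u hu b hb
      obtain ⟨γ, hγΨ, rfl⟩ := hRmem u hu
      obtain ⟨β, hβΨ, rfl⟩ := hRmem b hb
      obtain ⟨hγΦ, hγint⟩ := hmemΨ γ hγΨ
      obtain ⟨hβΦ, hβint⟩ := hmemΨ β hβΨ
      set δ := β - β (coroot γ) • γ with hδdef
      have hδΦ : δ ∈ Φ := hrefl γ hγΦ β hβΦ
      have hδΨ : δ ∈ Ψfin := by
        refine Finset.mem_filter.2 ⟨(hmemΦfin δ).2 hδΦ, ?_⟩
        obtain ⟨nβ, hnβ⟩ := hβint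
        obtain ⟨nγ, hnγ⟩ := hγint
        obtain ⟨nc, hnc⟩ := hcrys γ hγΦ β hβΦ
        refine ⟨nβ - nc * nγ, ?_⟩
        rw [hδdef]
        simp only [LinearMap.sub_apply, LinearMap.smul_apply, smul_eq_mul]
        rw [hnβ, hnγ, hnc]
        push_cast
        ring
      have hγ2 : γ (coroot γ) = 2 := hpair γ hγΦ
      have hBγne : Bf (coroot γ) (coroot γ) ≠ 0 := ne_of_gt (hccpos γ hγΦ)
      set u' := sE coroot γ (coroot β) with hu'def
      have hδv : ∀ v : V, δ v = β (sE coroot γ v) := by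
        intro v
        rw [dual_comp_sE]
      have hisom : Bf u' u' = Bf (coroot β) (coroot β) := by
        rw [hu'def, hbridge γ hγΦ]
        exact srefl_isom Bf (coroot γ) hsym hBγne _ _
      have hδform1 : ∀ v : V,
          δ v * Bf (coroot β) (coroot β) = 2 * Bf v u' := by
        intro v
        have h3 : Bf (sE coroot γ v) (coroot β) = Bf v u' := by
          rw [hu'def, hbridge γ hγΦ]
          exact (srefl_selfadj' hsym hBγne v (coroot β)).symm
        calc δ v * Bf (coroot β) (coroot β)
            = β (sE coroot γ v) * Bf (coroot β) (coroot β) := by rw [hδv]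
          _ = 2 * Bf (sE coroot γ v) (coroot β) := hform β hβΦ _
          _ = 2 * Bf v u' := by rw [h3]
      have hδform2 : ∀ v : V,
          δ v * Bf (coroot δ) (coroot δ) = 2 * Bf v (coroot δ) := hform δ hδΦ
      have hw0 : ∀ v : V, Bf v (Bf (coroot δ) (coroot δ) • u'
          - Bf (coroot β) (coroot β) • coroot δ) = 0 := by
        intro v
        rw [map_sub, map_smul, map_smul, smul_eq_mul, smul_eq_mul]
        have e1 := hδform1 v
        have e2 := hδform2 v
        linear_combination (- Bf (coroot δ) (coroot δ) / 2) * e1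
          + (Bf (coroot β) (coroot β) / 2) * e2
      have hvec : Bf (coroot δ) (coroot δ) • u'
          = Bf (coroot β) (coroot β) • coroot δ := by
        by_contra hne0
        have hne1 : Bf (coroot δ) (coroot δ) • u'
            - Bf (coroot β) (coroot β) • coroot δ ≠ 0 := sub_ne_zero.2 hne0
        exact absurd (hw0 _) (ne_of_gt (hposdef _ hne1))
      have hs2 : sE coroot γ (sE coroot γ (coroot β)) = coroot β := by
        have := congrArg (fun f : Module.End ℝ V => f (coroot β)) (sE_invol coroot hγ2)
        simpa [Module.End.mul_apply, Module.End.one_apply] using this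
      have hδu' : δ u' = 2 := by
        rw [hδv u', hu'def, hs2]
        exact hpair β hβΦ
      have hδcδ : δ (coroot δ) = 2 := hpair δ hδΦ
      have hBeq : Bf (coroot δ) (coroot δ) = Bf (coroot β) (coroot β) := by
        have h9 := congrArg δ hvec
        rw [map_smul, map_smul, smul_eq_mul, smul_eq_mul, hδu', hδcδ] at h9
        linarith
      have hfinal : u' = coroot δ := by
        have h10 : Bf (coroot δ) (coroot δ) • u'
            = Bf (coroot δ) (coroot δ) • coroot δ := by
          rw [hvec, hBeq]
        exact smul_right_injective V (ne_of_gt (hccpos δ hδΦ)) h10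
      have hfinal' : sE coroot γ (coroot β) = coroot δ := by
        rw [← hu'def]
        exact hfinal
      rw [← hbridge γ hγΦ, hfinal']
      exact Finset.mem_image.2 ⟨δ, hδΨ, rfl⟩
    · -- regularity
      intro u hu
      obtain ⟨β, hβΨ, rfl⟩ := hRmem u hu
      have hβΦ := (hmemΨ β hβΨ).1
      intro h0'
      have h2 := hform β hβΦ v0
      rw [h0', mul_zero] at h2
      exact absurd h2 (mul_ne_zero (hv0reg β hβΦ) (ne_of_gt (hccpos β hβΦ)))
    · -- reducedness
      intro u hu b hb t hbt
      obtain ⟨γ, hγΨ, rfl⟩ := hRmem u hu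
      obtain ⟨β, hβΨ, rfl⟩ := hRmem b hb
      have hγΦ := (hmemΨ γ hγΨ).1
      have hβΦ := (hmemΨ β hβΨ).1
      have ht0 : t ≠ 0 := by
        intro ht
        rw [ht, zero_smul] at hbt
        exact hcne β hβΦ hbt
      have hBuune : Bf (coroot γ) (coroot γ) ≠ 0 := ne_of_gt (hccpos γ hγΦ)
      have hfun : γ = t • β := by
        apply LinearMap.ext
        intro v
        have e1 := hform γ hγΦ v
        have e2 := hform β hβΦ v
        rw [hbt] at e2
        simp only [map_smul, LinearMap.smul_apply, smul_eq_mul] at e2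
        have h7 : t * (γ v * Bf (coroot γ) (coroot γ))
            = t * (t * (β v * Bf (coroot γ) (coroot γ))) := by
          linear_combination t * e1 - e2
        have h8 := mul_left_cancel₀ ht0 h7
        have h9 : γ v * Bf (coroot γ) (coroot γ)
            = (t * β v) * Bf (coroot γ) (coroot γ) := by
          linear_combination h8
        have := mul_right_cancel₀ hBuune h9
        simpa [LinearMap.smul_apply, smul_eq_mul] using this
      have : t • β ∈ Φ := by
        rw [← hfun]
        exact hγΦ
      exact hred β hβΦ t this
  -- dominance transfer
  have hdom : ∀ m : V, (∀ α ∈ Pos, (∃ n : ℤ, α x = (n : ℝ)) → α (y - x) ≤ α m) →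
      ∀ u ∈ rpos Bf v0 Rr, 0 ≤ Bf (m - (y - x)) u := by
    intro m hm u hu
    obtain ⟨hur, hupos⟩ := mem_rpos.1 hu
    obtain ⟨β, hβΨ, rfl⟩ := hRmem u hur
    obtain ⟨hβΦ, hβint⟩ := hmemΨ β hβΨ
    have hβv0 : 0 < β v0 := by
      have h2 := hform β hβΦ v0
      nlinarith [hccpos β hβΦ]
    have hβPos : β ∈ Pos := by
      rw [hPosEq]
      exact ⟨hβΦ, hβv0⟩
    have hle := hm β hβPos hβint
    have hβp : 0 ≤ β (m - (y - x)) := by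
      rw [map_sub]
      linarith
    nlinarith [hform β hβΦ (m - (y - x)), hccpos β hβΦ]
  -- affine reduction
  obtain ⟨Ly, hLy, hrepy⟩ := rep coroot hpair r hr y (fun α => ∃ n : ℤ, α y = (n : ℝ)) wy hwy
  obtain ⟨Lx, hLx, hrepx⟩ := rep coroot hpair r hr x (fun α => ∃ n : ℤ, α x = (n : ℝ)) wx hwx
  set Ay := wE coroot Ly with hAydef
  set Ax := wE coroot Lx with hAxdef
  have hEqv : ∀ v : V, v + ℓ' = y + Ay ((x + Ax (v - x)) + ℓ - y) := by
    intro v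
    have h1 := congrArg (fun g : Equiv.Perm V => g v) hEq
    simp only [Equiv.Perm.mul_apply, Equiv.coe_addRight] at h1
    rw [hrepx v, hrepy] at h1
    exact h1
  have heqx : x + ℓ' = y + Ay (x + ℓ - y) := by
    have h1 := hEqv x
    rw [sub_self, map_zero, add_zero] at h1
    exact h1
  have hAyAx : ∀ u : V, Ay (Ax u) = u := by
    intro u
    have h1 := hEqv (x + u)
    rw [add_sub_cancel_left] at h1
    have h2 : (x + Ax u) + ℓ - y = Ax u + (x + ℓ - y) := by abel
    rw [h2, map_add] at h1
    have h3 : x + u + ℓ' = (x + ℓ') + u := by abel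
    rw [h3, heqx] at h1
    rw [add_assoc] at h1
    have h5 := add_left_cancel h1
    rw [add_comm (Ay (Ax u)) (Ay (x + ℓ - y))] at h5
    exact (add_left_cancel h5).symm
  have hpairLx : ∀ β ∈ Lx, β (coroot β) = 2 := fun β hβ => hpair β (hLx β hβ).1
  have hAxrev : ∀ u : V, Ax (wE coroot Lx.reverse u) = u := by
    intro u
    have := congrArg (fun f : Module.End ℝ V => f u) (wE_rev_right coroot Lx hpairLx)
    simpa [Module.End.mul_apply, Module.End.one_apply] using this
  have hAyrev : ∀ u : V, Ay u = wE coroot Lx.reverse u := by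
    intro u
    calc Ay u = Ay (Ax (wE coroot Lx.reverse u)) := by rw [hAxrev]
      _ = wE coroot Lx.reverse u := hAyAx _
  have hq : ℓ' - (y - x) = wE coroot Lx.reverse (ℓ - (y - x)) := by
    have h7 : ℓ' - (y - x) = Ay (x + ℓ - y) := by
      have h8 : ℓ' - (y - x) = (x + ℓ') - y := by abel
      rw [h8, heqx]
      abel
    rw [h7, hAyrev]
    congr 1
    abel
  -- bridge to wfn
  have hwords : ∀ (M : List (Module.Dual ℝ V)), (∀ α ∈ M, α ∈ Φ) →
      wE coroot M = wfn Bf (M.map coroot) := by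
    intro M
    induction M with
    | nil => intro _; rfl
    | cons a M' ih =>
      intro hM
      rw [List.map_cons, wE_cons, wfn_cons, hbridge a (hM a (by simp)),
        ih (fun α hα => hM α (by simp [hα]))]
  have hLxrevΦ : ∀ α ∈ Lx.reverse, α ∈ Φ := fun α hα => (hLx α (List.mem_reverse.1 hα)).1
  have hmemR : ∀ u ∈ (Lx.reverse.map coroot), u ∈ Rr := by
    intro u hu
    obtain ⟨α, hα, rfl⟩ := List.mem_map.1 hu
    have hα' := hLx α (List.mem_reverse.1 hα)
    exact Finset.mem_image.2 ⟨α, Finset.mem_filter.2 ⟨(hmemΦfin α).2 hα'.1, hα'.2⟩, rfl⟩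
  have hpq : wfn Bf (Lx.reverse.map coroot) (ℓ - (y - x)) = ℓ' - (y - x) := by
    rw [← hwords Lx.reverse hLxrevΦ]
    exact hq.symm
  have hfinal := core hRS hmemR (hdom ℓ hℓ.2) (hdom ℓ' hℓ'.2) hpq
  have := congrArg (fun w : V => w + (y - x)) hfinal
  simpa using this
end

section
/- Let x ∈ V, let y ∈ V be special, and set Υ_x = {w ∈ W₀ : wD ⊆ D_x}. Then int(X_{x,y}^+) is the union over w ∈ Υ_x of the sets X_{x,y}^+ ∩ (y − x + wD), and these sets are pairwise disjoint for distinct w, w' ∈ Υ_x. -/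
open scoped Classical

theorem Equiv.Perm.apply_inv_self {α : Type*} (f : Equiv.Perm α) (x : α) : f (f⁻¹ x) = x :=
  f.apply_symm_apply x

theorem Equiv.Perm.inv_apply_self {α : Type*} (f : Equiv.Perm α) (x : α) : f⁻¹ (f x) = x :=
  f.symm_apply_apply x

structure RSSetup (V : Type*) [AddCommGroup V] [Module ℝ V] [FiniteDimensional ℝ V] where
  Φ : Set (Module.Dual ℝ V)
  hfin : Φ.Finite
  h0 : (0 : Module.Dual ℝ V) ∉ Φ
  hspan : Submodule.span ℝ Φ = ⊤
  coroot : Module.Dual ℝ V → V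
  hpair : ∀ α ∈ Φ, α (coroot α) = 2
  hrefl : ∀ α ∈ Φ, ∀ β ∈ Φ, β - β (coroot α) • α ∈ Φ
  hcrys : ∀ α ∈ Φ, ∀ β ∈ Φ, ∃ n : ℤ, β (coroot α) = (n : ℝ)
  hred : ∀ α ∈ Φ, ∀ c : ℝ, c • α ∈ Φ → c = 1 ∨ c = -1
  s : Module.Dual ℝ V → Equiv.Perm V
  hs : ∀ α ∈ Φ, ∀ v : V, s α v = v - α v • coroot α
  v0 : V
  hv0 : ∀ α ∈ Φ, α v0 ≠ 0
  Pos : Set (Module.Dual ℝ V)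
  hPosdef : Pos = {α ∈ Φ | 0 < α v0}

namespace RSSetup

variable {V : Type*} [AddCommGroup V] [Module ℝ V] [FiniteDimensional ℝ V] (S : RSSetup V)

lemma neg_mem {α : Module.Dual ℝ V} (hα : α ∈ S.Φ) : -α ∈ S.Φ := by
  have := S.hrefl α hα α hα
  rwa [S.hpair α hα, show α - (2:ℝ) • α = -α by module] at this

lemma pos_sub : S.Pos ⊆ S.Φ := by rw [S.hPosdef]; exact Set.sep_subset _ _

lemma pos_v0 {α : Module.Dual ℝ V} (hα : α ∈ S.Pos) : 0 < α S.v0 := by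
  rw [S.hPosdef] at hα; exact hα.2

lemma mem_pos {α : Module.Dual ℝ V} (hα : α ∈ S.Φ) (h : 0 < α S.v0) : α ∈ S.Pos := by
  rw [S.hPosdef]; exact ⟨hα, h⟩

lemma pos_or_neg {α : Module.Dual ℝ V} (hα : α ∈ S.Φ) : α ∈ S.Pos ∨ -α ∈ S.Pos := by
  rcases lt_trichotomy (α S.v0) 0 with h | h | h
  · right; exact S.mem_pos (S.neg_mem hα) (by simpa using h)
  · exact absurd h (S.hv0 α hα)
  · left; exact S.mem_pos hα h

lemma not_pos_neg {α : Module.Dual ℝ V} (h1 : α ∈ S.Pos) (h2 : -α ∈ S.Pos) : False := by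
  have := S.pos_v0 h1; have := S.pos_v0 h2
  simp only [LinearMap.neg_apply] at *; linarith

/-- the invariant bilinear form -/
noncomputable def B (v w : V) : ℝ := ∑ α ∈ S.hfin.toFinset, α v * α w

lemma B_comm (v w : V) : S.B v w = S.B w v := by
  unfold B; exact Finset.sum_congr rfl fun α _ => mul_comm _ _

lemma B_add_left (u v w : V) : S.B (u + v) w = S.B u w + S.B v w := by
  unfold B; rw [← Finset.sum_add_distrib]
  exact Finset.sum_congr rfl fun α _ => by rw [map_add]; ring

lemma B_smul_left (c : ℝ) (v w : V) : S.B (c • v) w = c * S.B v w := by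
  unfold B; rw [Finset.mul_sum]
  exact Finset.sum_congr rfl fun α _ => by rw [map_smul]; simp [smul_eq_mul]; ring

lemma B_neg_left (v w : V) : S.B (-v) w = -S.B v w := by
  have := S.B_smul_left (-1) v w; simpa using this

lemma B_sub_left (u v w : V) : S.B (u - v) w = S.B u w - S.B v w := by
  rw [sub_eq_add_neg, S.B_add_left, S.B_neg_left]; ring

lemma B_add_right (u v w : V) : S.B u (v + w) = S.B u v + S.B u w := by
  rw [S.B_comm, S.B_add_left, S.B_comm v u, S.B_comm w u]

lemma B_smul_right (c : ℝ) (v w : V) : S.B v (c • w) = c * S.B v w := by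
  rw [S.B_comm, S.B_smul_left, S.B_comm]

lemma B_sub_right (u v w : V) : S.B u (v - w) = S.B u v - S.B u w := by
  rw [S.B_comm, S.B_sub_left, S.B_comm v u, S.B_comm w u]

lemma B_neg_right (v w : V) : S.B v (-w) = -S.B v w := by
  rw [S.B_comm, S.B_neg_left, S.B_comm]

lemma B_nonneg (v : V) : 0 ≤ S.B v v :=
  Finset.sum_nonneg fun α _ => mul_self_nonneg _

lemma exists_ne_zero {v : V} (hv : v ≠ 0) : ∃ α ∈ S.Φ, α v ≠ 0 := by
  by_contra h
  push_neg at h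
  apply hv
  rw [← Module.forall_dual_apply_eq_zero_iff ℝ v]
  intro φ
  have hφ : φ ∈ Submodule.span ℝ S.Φ := S.hspan ▸ Submodule.mem_top
  induction hφ using Submodule.span_induction with
  | mem x hx => exact h x hx
  | zero => simp
  | add x y _ _ hx hy => simp [hx, hy]
  | smul c x _ hx => simp [hx]

lemma B_pos {v : V} (hv : v ≠ 0) : 0 < S.B v v := by
  rcases S.exists_ne_zero hv with ⟨α, hα, hαv⟩
  have h1 : 0 < α v * α v := mul_self_pos.2 hαv
  have hmem : α ∈ S.hfin.toFinset := S.hfin.mem_toFinset.2 hα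
  calc (0:ℝ) < α v * α v := h1
    _ ≤ ∑ β ∈ S.hfin.toFinset, β v * β v :=
      Finset.single_le_sum (fun β _ => mul_self_nonneg (β v)) hmem

lemma eq_zero_of_B_self_eq_zero {v : V} (h : S.B v v = 0) : v = 0 := by
  by_contra hv
  exact absurd h (S.B_pos hv).ne'

/-! ### reflection basics -/

lemma dual_s {α β : Module.Dual ℝ V} (hα : α ∈ S.Φ) (v : V) :
    β (S.s α v) = (β - β (S.coroot α) • α) v := by
  rw [S.hs α hα v]
  simp [map_sub, map_smul, smul_eq_mul]
  ring

lemma dual_s_mem {α β : Module.Dual ℝ V} (hα : α ∈ S.Φ) (hβ : β ∈ S.Φ) :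
    β - β (S.coroot α) • α ∈ S.Φ := S.hrefl α hα β hβ

lemma s_invol {α : Module.Dual ℝ V} (hα : α ∈ S.Φ) (v : V) : S.s α (S.s α v) = v := by
  rw [S.hs α hα, S.hs α hα v]
  simp only [map_sub, map_smul, S.hpair α hα, smul_eq_mul]
  module

lemma s_mul_self {α : Module.Dual ℝ V} (hα : α ∈ S.Φ) : S.s α * S.s α = 1 := by
  ext v; exact S.s_invol hα v

lemma s_inv {α : Module.Dual ℝ V} (hα : α ∈ S.Φ) : (S.s α)⁻¹ = S.s α :=
  inv_eq_of_mul_eq_one_right (S.s_mul_self hα)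

/-- the dual involution `β ↦ β ∘ s_α` on `Φ` -/
lemma dual_t_invol {α β : Module.Dual ℝ V} (hα : α ∈ S.Φ) :
    (β - β (S.coroot α) • α) - (β - β (S.coroot α) • α) (S.coroot α) • α = β := by
  have h2 := S.hpair α hα
  simp only [LinearMap.sub_apply, LinearMap.smul_apply, smul_eq_mul, h2]
  module

lemma B_s_invariant {α : Module.Dual ℝ V} (hα : α ∈ S.Φ) (v w : V) :
    S.B (S.s α v) (S.s α w) = S.B v w := by
  unfold B
  rw [Finset.sum_nbij' (i := fun β => β - β (S.coroot α) • α)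
    (j := fun β => β - β (S.coroot α) • α)]
  · intro β hβ
    exact S.hfin.mem_toFinset.2 (S.dual_s_mem hα (S.hfin.mem_toFinset.1 hβ))
  · intro β hβ
    exact S.hfin.mem_toFinset.2 (S.dual_s_mem hα (S.hfin.mem_toFinset.1 hβ))
  · intro β _; exact S.dual_t_invol hα
  · intro β _; exact S.dual_t_invol hα
  · intro β _
    rw [S.dual_s hα v, S.dual_s hα w]

lemma coroot_ne_zero {α : Module.Dual ℝ V} (hα : α ∈ S.Φ) : S.coroot α ≠ 0 := by
  intro h
  have := S.hpair α hα
  rw [h, map_zero] at this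
  norm_num at this

lemma B_coroot_pos {α : Module.Dual ℝ V} (hα : α ∈ S.Φ) :
    0 < S.B (S.coroot α) (S.coroot α) := S.B_pos (S.coroot_ne_zero hα)

/-- key formula: `α v * |α^∨|² = 2 B(v, α^∨)` -/
lemma key {α : Module.Dual ℝ V} (hα : α ∈ S.Φ) (v : V) :
    α v * S.B (S.coroot α) (S.coroot α) = 2 * S.B v (S.coroot α) := by
  have h := S.B_s_invariant hα v (S.coroot α)
  have hsc : S.s α (S.coroot α) = -(S.coroot α) := by
    rw [S.hs α hα, S.hpair α hα]; module
  rw [hsc, S.hs α hα v, S.B_neg_right, S.B_sub_left, S.B_smul_left] at h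
  linarith [h]

lemma coroot_unique {γ : Module.Dual ℝ V} (hγ : γ ∈ S.Φ) (c : V)
    (hc : 0 < S.B c c) (h : ∀ v, γ v * S.B c c = 2 * S.B v c) : c = S.coroot γ := by
  set c' := S.coroot γ with hc'
  have hc'p : 0 < S.B c' c' := S.B_coroot_pos hγ
  have hkey : ∀ v, γ v * S.B c' c' = 2 * S.B v c' := fun v => S.key hγ v
  -- B(v, c/Bcc - c'/Bc'c') = 0 for all v
  have hdiff : ∀ v, S.B v ((S.B c c)⁻¹ • c - (S.B c' c')⁻¹ • c') = 0 := by
    intro v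
    rw [S.B_sub_right, S.B_smul_right, S.B_smul_right]
    have h1 := h v; have h2 := hkey v
    field_simp
    nlinarith [h1, h2]
  have hz : (S.B c c)⁻¹ • c - (S.B c' c')⁻¹ • c' = 0 := by
    apply S.eq_zero_of_B_self_eq_zero
    have := hdiff ((S.B c c)⁻¹ • c - (S.B c' c')⁻¹ • c')
    rwa [S.B_comm] at this
  have hct : c = (S.B c c * (S.B c' c')⁻¹) • c' := by
    have : (S.B c c)⁻¹ • c = (S.B c' c')⁻¹ • c' := by
      rwa [sub_eq_zero] at hz
    calc c = S.B c c • (S.B c c)⁻¹ • c := by rw [smul_smul]; field_simp; rw [one_smul]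
      _ = S.B c c • (S.B c' c')⁻¹ • c' := by rw [this]
      _ = (S.B c c * (S.B c' c')⁻¹) • c' := by rw [smul_smul]
  set t := S.B c c * (S.B c' c')⁻¹ with ht
  have htpos : 0 < t := mul_pos hc (inv_pos.2 hc'p)
  -- plug in
  have hBcc : S.B c c = t^2 * S.B c' c' := by
    rw [hct, S.B_smul_left, S.B_smul_right]; ring
  -- get t = 1 from: γ v * t² Bc'c' = 2 t B(v,c') = t γ v Bc'c'
  obtain ⟨v, hγv⟩ : ∃ v, γ v ≠ 0 := by
    by_contra hcon; push_neg at hcon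
    exact S.h0 (by { have : γ = 0 := LinearMap.ext fun v => hcon v; rwa [this] at hγ })
  have h1 := h v
  rw [hBcc, hct, S.B_smul_right] at h1
  have h2 := hkey v
  have hne : γ v * S.B c' c' ≠ 0 := mul_ne_zero hγv hc'p.ne'
  have e1 : t ^ 2 * (γ v * S.B c' c') = t * (γ v * S.B c' c') := by
    linear_combination h1 - t * h2
  have e2 : t ^ 2 = t := mul_right_cancel₀ hne e1
  have ht1 : t = 1 := by nlinarith [htpos, e2]
  rw [hct, ht1, one_smul]

lemma coroot_neg {γ : Module.Dual ℝ V} (hγ : γ ∈ S.Φ) :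
    S.coroot (-γ) = -(S.coroot γ) := by
  symm
  apply S.coroot_unique (S.neg_mem hγ)
  · rw [S.B_neg_left, S.B_neg_right]
    simpa using S.B_coroot_pos hγ
  · intro v
    have hk := S.key hγ v
    simp only [LinearMap.neg_apply, S.B_neg_left, S.B_neg_right]
    linarith

lemma s_neg {γ : Module.Dual ℝ V} (hγ : γ ∈ S.Φ) : S.s (-γ) = S.s γ := by
  apply Equiv.ext
  intro v
  rw [S.hs γ hγ v, S.hs (-γ) (S.neg_mem hγ) v, S.coroot_neg hγ]
  simp

/-! ### the Weyl group -/

/-- the property of being a "Weyl group element": linear, preserves roots dually both ways,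
and preserves `B`. -/
def IsW (w : Equiv.Perm V) : Prop :=
  (∀ a b : V, w (a + b) = w a + w b) ∧
  (∀ (c : ℝ) (a : V), w (c • a) = c • w a) ∧
  (∀ β ∈ S.Φ, ∃ γ ∈ S.Φ, ∀ v, γ v = β (w v)) ∧
  (∀ β ∈ S.Φ, ∃ γ ∈ S.Φ, ∀ v, γ v = β (w⁻¹ v)) ∧
  (∀ v v', S.B (w v) (w v') = S.B v v')

lemma isW_one : S.IsW 1 := by
  refine ⟨fun a b => rfl, fun c a => rfl, fun β hβ => ⟨β, hβ, fun v => rfl⟩,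
    fun β hβ => ⟨β, hβ, fun v => rfl⟩, fun v v' => rfl⟩

lemma isW_s {α : Module.Dual ℝ V} (hα : α ∈ S.Φ) : S.IsW (S.s α) := by
  refine ⟨?_, ?_, ?_, ?_, fun v v' => S.B_s_invariant hα v v'⟩
  · intro a b; rw [S.hs α hα, S.hs α hα, S.hs α hα, map_add]; module
  · intro c a
    rw [S.hs α hα, S.hs α hα, map_smul, smul_sub, smul_smul, smul_eq_mul]
  · intro β hβ
    exact ⟨β - β (S.coroot α) • α, S.dual_s_mem hα hβ, fun v => (S.dual_s hα v).symm⟩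
  · intro β hβ
    rw [S.s_inv hα]
    exact ⟨β - β (S.coroot α) • α, S.dual_s_mem hα hβ, fun v => (S.dual_s hα v).symm⟩

lemma isW_mul {w w' : Equiv.Perm V} (h : S.IsW w) (h' : S.IsW w') : S.IsW (w * w') := by
  obtain ⟨ha, hsm, hf, hb, hB⟩ := h
  obtain ⟨ha', hsm', hf', hb', hB'⟩ := h'
  refine ⟨?_, ?_, ?_, ?_, ?_⟩
  · intro a b; simp only [Equiv.Perm.mul_apply, ha', ha]
  · intro c a; simp only [Equiv.Perm.mul_apply, hsm', hsm]
  · intro β hβ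
    obtain ⟨γ, hγ, hγe⟩ := hf β hβ
    obtain ⟨γ', hγ', hγe'⟩ := hf' γ hγ
    exact ⟨γ', hγ', fun v => by rw [hγe', hγe, Equiv.Perm.mul_apply]⟩
  · intro β hβ
    obtain ⟨γ, hγ, hγe⟩ := hb' β hβ
    obtain ⟨γ', hγ', hγe'⟩ := hb γ hγ
    refine ⟨γ', hγ', fun v => by rw [hγe', hγe, mul_inv_rev, Equiv.Perm.mul_apply]⟩
  · intro v v'; simp only [Equiv.Perm.mul_apply, hB, hB']

lemma isW_inv {w : Equiv.Perm V} (h : S.IsW w) : S.IsW w⁻¹ := by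
  obtain ⟨ha, hsm, hf, hb, hB⟩ := h
  have hinj : Function.Injective w := w.injective
  refine ⟨?_, ?_, ?_, ?_, ?_⟩
  · intro a b
    apply hinj
    rw [ha]
    simp only [Equiv.Perm.apply_inv_self]
  · intro c a
    apply hinj
    rw [hsm]
    simp only [Equiv.Perm.apply_inv_self]
  · exact hb
  · intro β hβ; rw [inv_inv]; exact hf β hβ
  · intro v v'
    have := hB (w⁻¹ v) (w⁻¹ v')
    simp only [Equiv.Perm.apply_inv_self] at this
    exact this.symm

lemma isW_of_mem {w : Equiv.Perm V} (hw : w ∈ Subgroup.closure (S.s '' S.Φ)) : S.IsW w := by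
  induction hw using Subgroup.closure_induction with
  | mem g hg => obtain ⟨α, hα, rfl⟩ := hg; exact S.isW_s hα
  | one => exact S.isW_one
  | mul a b _ _ ha hb => exact S.isW_mul ha hb
  | inv a _ ha => exact S.isW_inv ha

/-- conjugation formula: if `γ = β ∘ u` then `s γ = u⁻¹ s β u` and coroots transform. -/
lemma coroot_conj {u : Equiv.Perm V} (hu : u ∈ Subgroup.closure (S.s '' S.Φ))
    {β γ : Module.Dual ℝ V} (hβ : β ∈ S.Φ) (hγ : γ ∈ S.Φ)
    (he : ∀ v, γ v = β (u v)) : S.coroot γ = u⁻¹ (S.coroot β) := by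
  obtain ⟨ha, hsm, hf, hb, hB⟩ := S.isW_of_mem hu
  symm
  apply S.coroot_unique hγ
  · have := hB (u⁻¹ (S.coroot β)) (u⁻¹ (S.coroot β))
    simp only [Equiv.Perm.apply_inv_self] at this
    rw [← this]
    exact S.B_coroot_pos hβ
  · intro v
    have h1 : S.B (u⁻¹ (S.coroot β)) (u⁻¹ (S.coroot β)) = S.B (S.coroot β) (S.coroot β) := by
      have := hB (u⁻¹ (S.coroot β)) (u⁻¹ (S.coroot β))
      simp only [Equiv.Perm.apply_inv_self] at this
      exact this.symm
    have h2 : S.B v (u⁻¹ (S.coroot β)) = S.B (u v) (S.coroot β) := by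
      have := hB v (u⁻¹ (S.coroot β))
      rw [Equiv.Perm.apply_inv_self] at this
      linarith [this]
    rw [h1, h2, he v]
    exact S.key hβ (u v)

lemma s_conj {u : Equiv.Perm V} (hu : u ∈ Subgroup.closure (S.s '' S.Φ))
    {β γ : Module.Dual ℝ V} (hβ : β ∈ S.Φ) (hγ : γ ∈ S.Φ)
    (he : ∀ v, γ v = β (u v)) : S.s γ = u⁻¹ * S.s β * u := by
  obtain ⟨ha', hsm', hf', hb', hB'⟩ := S.isW_inv (S.isW_of_mem hu)
  apply Equiv.ext
  intro v
  rw [S.hs γ hγ v, S.coroot_conj hu hβ hγ he]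
  simp only [Equiv.Perm.mul_apply]
  rw [S.hs β hβ (u v), ← he v]
  rw [show u v - γ v • S.coroot β = u v + (-(γ v)) • S.coroot β by module]
  rw [show (u⁻¹ : Equiv.Perm V) (u v + (-(γ v)) • S.coroot β)
      = u⁻¹ (u v) + u⁻¹ ((-(γ v)) • S.coroot β) from ha' _ _]
  rw [hsm' (-(γ v)) (S.coroot β)]
  simp only [Equiv.Perm.inv_apply_self]
  module

/-! ### simple roots -/

/-- the set of positive roots as a finset -/
noncomputable def posFin : Finset (Module.Dual ℝ V) := (S.hfin.subset S.pos_sub).toFinset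

lemma mem_posFin {α : Module.Dual ℝ V} : α ∈ S.posFin ↔ α ∈ S.Pos :=
  Set.Finite.mem_toFinset _

/-- indecomposable positive roots -/
def Δ : Set (Module.Dual ℝ V) := {α ∈ S.Pos | ¬ ∃ β ∈ S.Pos, ∃ γ ∈ S.Pos, α = β + γ}

lemma Δ_sub_pos : S.Δ ⊆ S.Pos := Set.sep_subset _ _

lemma Δ_sub : S.Δ ⊆ S.Φ := fun α hα => S.pos_sub (S.Δ_sub_pos hα)

noncomputable def ΔFin : Finset (Module.Dual ℝ V) :=
  ((S.hfin.subset S.pos_sub).subset S.Δ_sub_pos).toFinset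

lemma mem_ΔFin {α : Module.Dual ℝ V} : α ∈ S.ΔFin ↔ α ∈ S.Δ :=
  Set.Finite.mem_toFinset _

/-- height-like measure -/
noncomputable def M (α : Module.Dual ℝ V) : ℕ :=
  (S.posFin.filter fun β => β S.v0 < α S.v0).card

lemma M_lt {α β : Module.Dual ℝ V} (hβ : β ∈ S.Pos) (h : β S.v0 < α S.v0) :
    S.M β < S.M α := by
  apply Finset.card_lt_card
  constructor
  · intro η hη
    rw [Finset.mem_filter] at hη ⊢
    exact ⟨hη.1, hη.2.trans h⟩
  · intro hcon
    have : β ∈ S.posFin.filter fun η => η S.v0 < α S.v0 :=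
      Finset.mem_filter.2 ⟨S.mem_posFin.2 hβ, h⟩
    have := hcon this
    rw [Finset.mem_filter] at this
    exact lt_irrefl _ this.2

lemma sum_apply_eval (t : Finset (Module.Dual ℝ V)) (c : Module.Dual ℝ V → ℝ) (v : V) :
    (∑ δ ∈ t, c δ • δ) v = ∑ δ ∈ t, c δ * δ v := by
  rw [LinearMap.sum_apply]
  exact Finset.sum_congr rfl fun δ _ => by simp

/-- every positive root is a nonnegative combination of simple roots -/
lemma decomp {α : Module.Dual ℝ V} (hα : α ∈ S.Pos) :
    ∃ c : Module.Dual ℝ V → ℝ, (∀ δ, 0 ≤ c δ) ∧ α = ∑ δ ∈ S.ΔFin, c δ • δ := by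
  generalize hn : S.M α = n
  induction n using Nat.strong_induction_on generalizing α with
  | _ n ih =>
  by_cases hdec : ∃ β ∈ S.Pos, ∃ γ ∈ S.Pos, α = β + γ
  · obtain ⟨β, hβ, γ, hγ, rfl⟩ := hdec
    have hβlt : β S.v0 < (β + γ) S.v0 := by
      have := S.pos_v0 hγ; simp only [LinearMap.add_apply]; linarith
    have hγlt : γ S.v0 < (β + γ) S.v0 := by
      have := S.pos_v0 hβ; simp only [LinearMap.add_apply]; linarith
    obtain ⟨cβ, hcβ, hβe⟩ := ih (S.M β) (hn ▸ S.M_lt hβ hβlt) hβ rfl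
    obtain ⟨cγ, hcγ, hγe⟩ := ih (S.M γ) (hn ▸ S.M_lt hγ hγlt) hγ rfl
    refine ⟨fun δ => cβ δ + cγ δ, fun δ => add_nonneg (hcβ δ) (hcγ δ), ?_⟩
    rw [hβe, hγe, ← Finset.sum_add_distrib]
    exact Finset.sum_congr rfl fun δ _ => by rw [add_smul]
  · have hΔ : α ∈ S.Δ := ⟨hα, hdec⟩
    refine ⟨fun δ => if δ = α then 1 else 0, fun δ => by by_cases h : δ = α <;> simp [h], ?_⟩
    rw [Finset.sum_eq_single α]
    · simp
    · intro δ _ hδ; simp [hδ]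
    · intro hcon; exact absurd (S.mem_ΔFin.2 hΔ) hcon

/-- a positive root distinct from a simple root `δ` has positive coefficient on some
other simple root -/
lemma support_ne {β δ : Module.Dual ℝ V} (hβ : β ∈ S.Pos) (hδ : δ ∈ S.Δ) (hne : β ≠ δ)
    (c : Module.Dual ℝ V → ℝ) (hc : ∀ η, 0 ≤ c η) (he : β = ∑ η ∈ S.ΔFin, c η • η) :
    ∃ δ' ∈ S.ΔFin, δ' ≠ δ ∧ 0 < c δ' := by
  by_contra hcon
  push_neg at hcon
  have hall : ∀ η ∈ S.ΔFin, η ≠ δ → c η = 0 := fun η h1 h2 =>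
    le_antisymm (hcon η h1 h2) (hc η)
  have hβe : β = c δ • δ := by
    rw [he, Finset.sum_eq_single δ]
    · intro η hη hne'; rw [hall η hη hne', zero_smul]
    · intro hcon'
      exact absurd (S.mem_ΔFin.2 hδ) hcon' 
  have hred := S.hred δ (S.Δ_sub hδ) (c δ) (hβe ▸ S.pos_sub hβ)
  rcases hred with h1 | h1
  · exact hne (by rw [hβe, h1, one_smul])
  · have := hc δ; rw [h1] at this; norm_num at this

lemma B_v0_coroot_pos {α : Module.Dual ℝ V} (hα : α ∈ S.Pos) :
    0 < S.B S.v0 (S.coroot α) := by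
  have hk := S.key (S.pos_sub hα) S.v0
  have h1 := S.pos_v0 hα
  have h2 := S.B_coroot_pos (S.pos_sub hα)
  nlinarith

/-- if `β(α^∨) > 0` and `β ≠ ±α` then `β − α` is a root -/
lemma root_sub {α β : Module.Dual ℝ V} (hα : α ∈ S.Φ) (hβ : β ∈ S.Φ)
    (hne : β ≠ α) (hpos : 0 < β (S.coroot α)) : β - α ∈ S.Φ := by
  set a := S.coroot α with hadef
  set b := S.coroot β with hbdef
  have hna : 0 < S.B a a := S.B_coroot_pos hα
  have hnb : 0 < S.B b b := S.B_coroot_pos hβ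
  have hkab : β a * S.B b b = 2 * S.B a b := S.key hβ a
  have hkba : α b * S.B a a = 2 * S.B a b := by
    have := S.key hα b; rw [S.B_comm b a] at this; linarith
  have hBab : 0 < S.B a b := by nlinarith
  have hq : 0 < α b := by nlinarith
  -- Cauchy-Schwarz
  have hcs := S.B_nonneg (S.B a a • b - S.B a b • a)
  simp only [S.B_sub_left, S.B_sub_right, S.B_smul_left, S.B_smul_right] at hcs
  rw [S.B_comm b a] at hcs
  have hcs' : 0 ≤ S.B a a * (S.B a a * S.B b b - S.B a b * S.B a b) := by linarith [hcs]
  have hCSineq : S.B a b * S.B a b ≤ S.B a a * S.B b b := by nlinarith [hcs', hna]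
  have e1 : β a * α b * (S.B a a * S.B b b) = 4 * (S.B a b * S.B a b) := by
    linear_combination (α b * S.B a a) * hkab + (2 * S.B a b) * hkba
  have hpq : β a * α b ≤ 4 := by nlinarith [e1, hCSineq, mul_pos hna hnb]
  obtain ⟨p, hp⟩ := S.hcrys α hα β hβ
  obtain ⟨q, hq'⟩ := S.hcrys β hβ α hα
  have hp1 : 1 ≤ p := by
    have : (0:ℝ) < p := hp ▸ hpos; exact_mod_cast this
  have hq1 : 1 ≤ q := by
    have : (0:ℝ) < q := hq' ▸ hq; exact_mod_cast this
  by_cases hpar : p = 2 ∧ q = 2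
  · -- equality in CS: contradiction with β ≠ α (and reducedness)
    exfalso
    have he4 : β a * α b = 4 := by rw [hp, hq', hpar.1, hpar.2]; norm_num
    have heq : S.B a b * S.B a b = S.B a a * S.B b b := by
      linear_combination (-(1:ℝ)/4) * e1 + (S.B a a * S.B b b / 4) * he4
    have hz : S.B a a • b - S.B a b • a = 0 := by
      apply S.eq_zero_of_B_self_eq_zero
      simp only [S.B_sub_left, S.B_sub_right, S.B_smul_left, S.B_smul_right]
      rw [S.B_comm b a]
      linear_combination (-(S.B a a)) * heq
    have hbt : S.B a a • b = S.B a b • a := by rwa [sub_eq_zero] at hz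
    have hβα : β = (S.B a b / S.B b b) • α := by
      apply LinearMap.ext
      intro v
      have h5 : S.B a a * S.B v b = S.B a b * S.B v a := by
        have := congrArg (S.B v) hbt
        rw [S.B_smul_right, S.B_smul_right] at this
        linarith
      have h6 : β v * S.B b b * S.B a a = S.B a b * α v * S.B a a := by
        linear_combination (S.B a a) * (S.key hβ v) + 2 * h5 - (S.B a b) * (S.key hα v)
      have h7 : β v * S.B b b = S.B a b * α v := mul_right_cancel₀ hna.ne' h6
      simp only [LinearMap.smul_apply, smul_eq_mul]
      rw [div_mul_eq_mul_div, eq_div_iff hnb.ne']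
      linarith
    have hc : (0:ℝ) < S.B a b / S.B b b := div_pos hBab hnb
    rcases S.hred α hα _ (hβα ▸ hβ) with h | h
    · exact hne (by rw [hβα, h, one_smul])
    · rw [h] at hc; norm_num at hc
  · -- p = 1 or q = 1
    have hple : p * q ≤ 4 := by
      have : (p : ℝ) * q ≤ 4 := by rw [← hp, ← hq']; linarith [hpq]
      exact_mod_cast this
    have hp1q1 : p = 1 ∨ q = 1 := by
      by_contra hcon
      push_neg at hcon
      have hp2 : 2 ≤ p := by omega
      have hq2 : 2 ≤ q := by omega
      have h4 : p * q = 4 := le_antisymm hple (by nlinarith)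
      exact hpar ⟨by nlinarith, by nlinarith⟩
    rcases hp1q1 with h | h
    · have h1 : β (S.coroot α) = 1 := by rw [hp, h]; norm_num
      have h2 := S.hrefl α hα β hβ
      rwa [h1, one_smul] at h2
    · have h1 : α (S.coroot β) = 1 := by rw [hq', h]; norm_num
      have h2 := S.hrefl β hβ α hα
      rw [h1, one_smul] at h2
      have h3 := S.neg_mem h2
      rwa [neg_sub] at h3

/-- distinct simple roots pair nonpositively -/
lemma simple_obtuse {δ δ' : Module.Dual ℝ V} (hδ : δ ∈ S.Δ) (hδ' : δ' ∈ S.Δ)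
    (hne : δ' ≠ δ) : δ' (S.coroot δ) ≤ 0 := by
  by_contra hcon
  push_neg at hcon
  have hsub := S.root_sub (S.Δ_sub hδ) (S.Δ_sub hδ') hne hcon
  rcases S.pos_or_neg hsub with h | h
  · -- δ' = δ + (δ' - δ) decomposable
    exact hδ'.2 ⟨δ, hδ.1, δ' - δ, h, by module⟩
  · -- δ = δ' + (δ - δ') decomposable
    rw [neg_sub] at h
    exact hδ.2 ⟨δ', hδ'.1, δ - δ', h, by module⟩

/-- pairing signs agree: `δ'(δ^∨) ≤ 0 ↔ B(δ^∨, δ'^∨) ≤ 0` -/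
lemma B_coroot_nonpos {δ δ' : Module.Dual ℝ V} (hδ : δ ∈ S.Δ) (hδ' : δ' ∈ S.Δ)
    (hne : δ' ≠ δ) : S.B (S.coroot δ) (S.coroot δ') ≤ 0 := by
  have h := S.simple_obtuse hδ hδ' hne
  have hk := S.key (S.Δ_sub hδ') (S.coroot δ)
  have hp := S.B_coroot_pos (S.Δ_sub hδ')
  nlinarith

lemma B_zero_left (w : V) : S.B 0 w = 0 := by
  have := S.B_smul_left 0 w w
  simpa using this

lemma B_sum_left {ι : Type*} (t : Finset ι) (f : ι → V) (w : V) :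
    S.B (∑ i ∈ t, f i) w = ∑ i ∈ t, S.B (f i) w := by
  classical
  induction t using Finset.cons_induction with
  | empty => simpa using S.B_zero_left w
  | cons a t ha ih => rw [Finset.sum_cons, S.B_add_left, ih, Finset.sum_cons]

lemma B_sum_right {ι : Type*} (t : Finset ι) (f : ι → V) (w : V) :
    S.B w (∑ i ∈ t, f i) = ∑ i ∈ t, S.B w (f i) := by
  rw [S.B_comm, S.B_sum_left]
  exact Finset.sum_congr rfl fun i _ => S.B_comm _ _

/-- a simple reflection permutes the positive roots other than itself -/
lemma simple_perm {δ β : Module.Dual ℝ V} (hδ : δ ∈ S.Δ) (hβ : β ∈ S.Pos) (hne : β ≠ δ) :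
    β - β (S.coroot δ) • δ ∈ S.Pos := by
  have hδΦ := S.Δ_sub hδ
  have hβΦ := S.pos_sub hβ
  have hγΦ : β - β (S.coroot δ) • δ ∈ S.Φ := S.hrefl δ hδΦ β hβΦ
  rcases S.pos_or_neg hγΦ with h | h
  · exact h
  exfalso
  obtain ⟨c, hc, hce⟩ := S.decomp hβ
  obtain ⟨d, hd, hde⟩ := S.decomp h
  obtain ⟨δ'0, hδ'0mem, hδ'0ne, hδ'0pos⟩ := S.support_ne hβ hδ hne c hc hce
  set k := β (S.coroot δ) with hkdef
  have hδmem : δ ∈ S.ΔFin := S.mem_ΔFin.2 hδ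
  have hid : ∑ η ∈ S.ΔFin, (c η + d η) • η = k • δ := by
    have h1 : (∑ η ∈ S.ΔFin, c η • η) + (∑ η ∈ S.ΔFin, d η • η) = k • δ := by
      rw [← hce, ← hde]; module
    rw [← h1, ← Finset.sum_add_distrib]
    exact Finset.sum_congr rfl fun η _ => by rw [add_smul]
  have heval : ∀ v : V, ∑ η ∈ S.ΔFin, (c η + d η) * η v = k * δ v := by
    intro v
    have := congrArg (fun φ : Module.Dual ℝ V => φ v) hid
    simpa only [sum_apply_eval, LinearMap.smul_apply, smul_eq_mul] using this
  -- evaluate at v0 : k > c δ + d δ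
  have hv0eval := heval S.v0
  rw [← Finset.add_sum_erase _ _ hδmem] at hv0eval
  have hδ'0mem' : δ'0 ∈ S.ΔFin.erase δ := Finset.mem_erase.2 ⟨hδ'0ne, hδ'0mem⟩
  have hterm0 : (c δ'0 + d δ'0) * δ'0 S.v0
      ≤ ∑ η ∈ S.ΔFin.erase δ, (c η + d η) * η S.v0 := by
    apply Finset.single_le_sum (fun η hη => ?_) hδ'0mem'
    have h1 := add_nonneg (hc η) (hd η)
    have h2 := S.pos_v0 (S.Δ_sub_pos (S.mem_ΔFin.1 (Finset.mem_of_mem_erase hη)))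
    positivity
  have hpos0 : 0 < (c δ'0 + d δ'0) * δ'0 S.v0 := by
    have h1 := S.pos_v0 (S.Δ_sub_pos (S.mem_ΔFin.1 hδ'0mem))
    have h2 := hd δ'0
    have : 0 < c δ'0 + d δ'0 := by linarith
    positivity
  have hδv0 := S.pos_v0 (S.Δ_sub_pos hδ)
  have hklt : c δ + d δ < k := by nlinarith [hv0eval, hterm0, hpos0, hδv0]
  -- evaluate at coroot δ : k ≤ c δ + d δ
  have hcδeval := heval (S.coroot δ)
  rw [← Finset.add_sum_erase _ _ hδmem, S.hpair δ hδΦ] at hcδeval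
  have hsum_np : ∑ η ∈ S.ΔFin.erase δ, (c η + d η) * η (S.coroot δ) ≤ 0 := by
    apply Finset.sum_nonpos
    intro η hη
    have h1 := add_nonneg (hc η) (hd η)
    have h2 := S.simple_obtuse hδ (S.mem_ΔFin.1 (Finset.mem_of_mem_erase hη))
      (Finset.mem_erase.1 hη).1
    exact mul_nonpos_of_nonneg_of_nonpos h1 h2
  linarith [hcδeval, hsum_np]

/-! ### generation by simple reflections -/

lemma sign_link {α η : Module.Dual ℝ V} (hα : α ∈ S.Φ) (hη : η ∈ S.Φ)
    (h : 0 < η (S.coroot α)) : 0 < α (S.coroot η) := by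
  have h1 := S.key hη (S.coroot α)
  have h2 := S.key hα (S.coroot η)
  have h3 := S.B_coroot_pos hα
  have h4 := S.B_coroot_pos hη
  have h5 := S.B_comm (S.coroot α) (S.coroot η)
  nlinarith

lemma s_mem_simple_closure_pos {α : Module.Dual ℝ V} (hα : α ∈ S.Pos) :
    S.s α ∈ Subgroup.closure (S.s '' S.Δ) := by
  generalize hn : S.M α = n
  induction n using Nat.strong_induction_on generalizing α with
  | _ n ih =>
  have hαΦ := S.pos_sub hα
  -- find a simple root pairing positively with coroot α
  obtain ⟨δ', hδ'Δ, hδ'pos⟩ : ∃ δ' ∈ S.Δ, 0 < δ' (S.coroot α) := by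
    by_contra hcon
    push_neg at hcon
    obtain ⟨c, hc, hce⟩ := S.decomp hα
    have h2 : α (S.coroot α) = ∑ η ∈ S.ΔFin, c η * η (S.coroot α) := by
      have := congrArg (fun φ : Module.Dual ℝ V => φ (S.coroot α)) hce
      simpa only [sum_apply_eval] using this
    have h3 : α (S.coroot α) ≤ 0 := by
      rw [h2]
      apply Finset.sum_nonpos
      intro η hη
      exact mul_nonpos_of_nonneg_of_nonpos (hc η) (hcon η (S.mem_ΔFin.1 hη))
    rw [S.hpair α hαΦ] at h3
    norm_num at h3
  have hδ'Φ := S.Δ_sub hδ'Δ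
  by_cases heq : α = δ'
  · exact Subgroup.subset_closure ⟨δ', hδ'Δ, by rw [heq]⟩
  · have hαδ' : 0 < α (S.coroot δ') := S.sign_link hαΦ hδ'Φ hδ'pos
    set β := α - α (S.coroot δ') • δ' with hβdef
    have hβPos : β ∈ S.Pos := S.simple_perm hδ'Δ hα heq
    have hβv0 : β S.v0 < α S.v0 := by
      have h1 := S.pos_v0 (S.Δ_sub_pos hδ'Δ)
      simp only [hβdef, LinearMap.sub_apply, LinearMap.smul_apply, smul_eq_mul]
      nlinarith
    have hM : S.M β < n := hn ▸ S.M_lt hβPos hβv0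
    have hsβ := ih (S.M β) hM hβPos rfl
    -- s β = (s δ')⁻¹ * s α * (s δ')
    have hconj : S.s β = (S.s δ')⁻¹ * S.s α * S.s δ' := by
      apply S.s_conj (Subgroup.subset_closure ⟨δ', hδ'Φ, rfl⟩) hαΦ (S.pos_sub hβPos)
      intro v
      rw [S.dual_s hδ'Φ v]
    have : S.s α = S.s δ' * S.s β * (S.s δ')⁻¹ := by
      rw [hconj]; group
    rw [this]
    have hδ'mem : S.s δ' ∈ Subgroup.closure (S.s '' S.Δ) :=
      Subgroup.subset_closure ⟨δ', hδ'Δ, rfl⟩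
    exact mul_mem (mul_mem hδ'mem hsβ) (inv_mem hδ'mem)

lemma s_mem_simple_closure {α : Module.Dual ℝ V} (hα : α ∈ S.Φ) :
    S.s α ∈ Subgroup.closure (S.s '' S.Δ) := by
  rcases S.pos_or_neg hα with hpos | hneg
  · exact S.s_mem_simple_closure_pos hpos
  · rw [← S.s_neg hα]
    exact S.s_mem_simple_closure_pos hneg

lemma closure_eq_simple :
    Subgroup.closure (S.s '' S.Φ) ≤ Subgroup.closure (S.s '' S.Δ) := by
  rw [Subgroup.closure_le]
  rintro g ⟨α, hα, rfl⟩
  exact S.s_mem_simple_closure hα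

/-- every element of the closure is a product of simple reflections -/
lemma exists_list {w : Equiv.Perm V} (hw : w ∈ Subgroup.closure (S.s '' S.Φ)) :
    ∃ l : List (Equiv.Perm V), (∀ g ∈ l, ∃ δ ∈ S.Δ, g = S.s δ) ∧ l.prod = w := by
  have hw' : w ∈ Subgroup.closure (S.s '' S.Δ) := S.closure_eq_simple hw
  clear hw
  induction hw' using Subgroup.closure_induction with
  | mem g hg =>
    refine ⟨[g], ?_, by simp⟩
    rintro g' hg'
    rw [List.mem_singleton] at hg'
    subst hg'
    obtain ⟨δ, hδ, rfl⟩ := hg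
    exact ⟨δ, hδ, rfl⟩
  | one => exact ⟨[], by simp, by simp⟩
  | mul a b _ _ ha hb =>
    obtain ⟨la, hla, hla'⟩ := ha
    obtain ⟨lb, hlb, hlb'⟩ := hb
    exact ⟨la ++ lb, fun g hg => (List.mem_append.1 hg).elim (hla g) (hlb g),
      by rw [List.prod_append, hla', hlb']⟩
  | inv a _ ha =>
    obtain ⟨la, hla, hla'⟩ := ha
    refine ⟨(la.map Inv.inv).reverse, ?_, ?_⟩
    · intro g hg
      rw [List.mem_reverse, List.mem_map] at hg
      obtain ⟨g', hg', rfl⟩ := hg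
      obtain ⟨δ, hδ, rfl⟩ := hla g' hg'
      exact ⟨δ, hδ, S.s_inv (S.Δ_sub hδ)⟩
    · rw [List.prod_reverse_noncomm]
      simp only [List.map_map]
      rw [show ((fun x => x⁻¹) ∘ Inv.inv) = (id : Equiv.Perm V → Equiv.Perm V) by
        funext x; simp, List.map_id, hla']

/-! ### trivial stabilizer of the fundamental chamber -/

lemma prod_simple_eq_one : ∀ (N : ℕ) (l : List (Equiv.Perm V)), l.length ≤ N →
    (∀ g ∈ l, ∃ δ ∈ S.Δ, g = S.s δ) →
    (∀ β ∈ S.Pos, ∀ γ ∈ S.Φ, (∀ v, γ v = β (l.prod v)) → γ ∈ S.Pos) →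
    l.prod = 1 := by
  intro N
  induction N with
  | zero =>
    intro l hlen _ _
    rw [List.length_eq_zero_iff.1 (Nat.le_zero.1 hlen)]
    rfl
  | succ N ihN =>
    intro l hlen hmem hstab
    cases l with
    | nil => rfl
    | cons a t =>
    set l : List (Equiv.Perm V) := a :: t with hldef
    have hlt : l.length = t.length + 1 := by rw [hldef]; rfl
    have hk1 : 1 ≤ l.length := by omega
    -- choose the simple roots
    have hchoice : ∀ m : ℕ, ∃ δ : Module.Dual ℝ V,
        (m < l.length → δ ∈ S.Δ) ∧ ∀ h : m < l.length, l[m]'h = S.s δ := by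
      intro m
      by_cases h : m < l.length
      · obtain ⟨δ, hδ, he⟩ := hmem (l[m]'h) (List.getElem_mem h)
        exact ⟨δ, fun _ => hδ, fun _ => he⟩
      · exact ⟨0, fun hc => absurd hc h, fun hc => absurd hc h⟩
    choose δ' hδ'Δ hδ'e using hchoice
    -- the root sequence
    set R : ℕ → Module.Dual ℝ V :=
      fun m => Nat.rec (δ' 0) (fun m Rm => Rm - Rm (S.coroot (δ' m)) • δ' m) m with hRdef
    have hR0 : R 0 = δ' 0 := rfl
    have hRsucc : ∀ m, R (m + 1) = R m - R m (S.coroot (δ' m)) • δ' m := fun m => rfl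
    have hδ'0Δ : δ' 0 ∈ S.Δ := hδ'Δ 0 (by omega)
    have hδ'0Φ : δ' 0 ∈ S.Φ := S.Δ_sub hδ'0Δ
    have hinv : ∀ m, m ≤ l.length → R m ∈ S.Φ ∧ ∀ v, R m v = (δ' 0) ((l.take m).prod v) := by
      intro m
      induction m with
      | zero =>
        intro _
        exact ⟨hδ'0Φ, fun v => by simp [hR0]⟩
      | succ m ihm =>
        intro hmk
        obtain ⟨hRΦ, hRe⟩ := ihm (by omega)
        have hδmΔ := hδ'Δ m (by omega)
        have hδmΦ := S.Δ_sub hδmΔ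
        constructor
        · rw [hRsucc]
          exact S.hrefl (δ' m) hδmΦ (R m) hRΦ
        · intro v
          have htake : (l.take (m+1)).prod = (l.take m).prod * (l[m]'(by omega)) :=
            List.prod_take_succ l m (by omega)
          rw [htake, Equiv.Perm.mul_apply, ← hRe, hδ'e m (by omega), S.hs (δ' m) hδmΦ v,
            hRsucc]
          simp only [map_sub, map_smul, LinearMap.sub_apply, LinearMap.smul_apply,
            smul_eq_mul]
          ring
    have hR1 : R 1 = -(δ' 0) := by
      have h01 : (1:ℕ) = 0 + 1 := rfl
      rw [h01, hRsucc 0, hR0, S.hpair (δ' 0) hδ'0Φ]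
      module
    have hRkPos : R l.length ∈ S.Pos := by
      apply hstab (δ' 0) (S.Δ_sub_pos hδ'0Δ) (R l.length) (hinv l.length le_rfl).1
      intro v
      have := (hinv l.length le_rfl).2 v
      rwa [List.take_length] at this
    rcases eq_or_lt_of_le hk1 with hk1' | hk2
    · exfalso
      rw [← hk1', hR1] at hRkPos
      exact S.not_pos_neg (S.Δ_sub_pos hδ'0Δ) hRkPos
    · -- take the largest index where R is negative
      have h1T : 1 ∈ (Finset.range l.length).filter (fun m => -(R m) ∈ S.Pos) := by
        rw [Finset.mem_filter, Finset.mem_range]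
        refine ⟨by omega, ?_⟩
        rw [hR1, neg_neg]
        exact S.Δ_sub_pos hδ'0Δ
      have hTne : ((Finset.range l.length).filter (fun m => -(R m) ∈ S.Pos)).Nonempty :=
        ⟨1, h1T⟩
      set j := ((Finset.range l.length).filter (fun m => -(R m) ∈ S.Pos)).max' hTne
        with hjdef
      have hjT := Finset.max'_mem _ hTne
      rw [← hjdef, Finset.mem_filter, Finset.mem_range] at hjT
      obtain ⟨hjk, hRjneg⟩ := hjT
      have hj1 : 1 ≤ j := Finset.le_max' _ 1 h1T
      have hRj1Pos : R (j+1) ∈ S.Pos := by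
        rcases eq_or_lt_of_le (by omega : j + 1 ≤ l.length) with h | h
        · rw [h]; exact hRkPos
        · have hnot : j + 1 ∉ (Finset.range l.length).filter (fun m => -(R m) ∈ S.Pos) := by
            intro hc
            have := Finset.le_max' _ (j+1) hc
            omega
          rw [Finset.mem_filter, Finset.mem_range] at hnot
          push_neg at hnot
          have hmem' := hnot (by omega)
          rcases S.pos_or_neg (hinv (j+1) (by omega)).1 with hp | hp
          · exact hp
          · exact absurd hp hmem'
      have hδjΔ := hδ'Δ j (by omega)
      have hδjΦ := S.Δ_sub hδjΔ
      have hRjeq : R j = -(δ' j) := by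
        by_contra hne
        have hne' : -(R j) ≠ δ' j := fun hc => hne (by rw [← hc]; module)
        have hperm := S.simple_perm hδjΔ hRjneg hne'
        have heq2 : -(R j) - (-(R j)) (S.coroot (δ' j)) • δ' j = -(R (j+1)) := by
          rw [hRsucc]; simp only [LinearMap.neg_apply]; module
        rw [heq2] at hperm
        exact S.not_pos_neg hRj1Pos hperm
      -- conjugation
      have hqmem : (l.take j).prod ∈ Subgroup.closure (S.s '' S.Φ) := by
        apply list_prod_mem
        intro g hg
        obtain ⟨δ, hδ, rfl⟩ := hmem g (List.mem_of_mem_take hg)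
        exact Subgroup.subset_closure ⟨δ, S.Δ_sub hδ, rfl⟩
      have hconj : S.s (R j) = ((l.take j).prod)⁻¹ * S.s (δ' 0) * (l.take j).prod := by
        apply S.s_conj hqmem hδ'0Φ (hinv j (by omega)).1
        exact (hinv j (by omega)).2
      have hgj : l[j]'(by omega) = ((l.take j).prod)⁻¹ * S.s (δ' 0) * (l.take j).prod := by
        rw [hδ'e j (by omega), ← S.s_neg hδjΦ, ← hRjeq, hconj]
      -- delete the two letters
      obtain ⟨i, hji⟩ : ∃ i, j = i + 1 := ⟨j - 1, by omega⟩
      have htakeji : l.take (i+1) = a :: t.take i := by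
        rw [hldef, List.take_succ_cons]
      have hdropji : l.drop (i+2) = t.drop (i+1) := by
        rw [hldef]; rfl
      have ha : a = S.s (δ' 0) := by
        have h := hδ'e 0 (by omega)
        simpa [hldef] using h
      have haa : a * a = 1 := by
        rw [ha]; exact S.s_mul_self hδ'0Φ
      have hq2 : (l.take (i+1)).prod = a * (t.take i).prod := by
        rw [htakeji, List.prod_cons]
      have h2 : (l.take (j+1)).prod = (l.take j).prod * (l[j]'(by omega)) :=
        List.prod_take_succ l j (by omega)
      have h3 : (l.take (j+1)).prod = (t.take i).prod := by
        rw [h2, hgj]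
        rw [show (l.take j).prod * (((l.take j).prod)⁻¹ * S.s (δ' 0) * (l.take j).prod)
          = S.s (δ' 0) * (l.take j).prod from by group]
        rw [← ha, hji, hq2, ← mul_assoc, haa, one_mul]
      have hdropji' : l.drop (i+1+1) = t.drop (i+1) := by
        rw [hldef]; rfl
      have hprod : l.prod = (t.take i ++ t.drop (i+1)).prod := by
        have h1 : l.prod = (l.take (j+1)).prod * (l.drop (j+1)).prod :=
          (List.prod_take_mul_prod_drop l (j+1)).symm
        rw [h1, h3, hji, hdropji', List.prod_append]
      have hlen' : (t.take i ++ t.drop (i+1)).length ≤ N := by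
        have h5 := List.length_take (i := i) (l := t)
        have h6 := List.length_drop (i := i+1) (l := t)
        have h7 : (t.take i ++ t.drop (i+1)).length
            = (t.take i).length + (t.drop (i+1)).length := List.length_append
        omega
      have hmem' : ∀ g ∈ t.take i ++ t.drop (i+1), ∃ δ ∈ S.Δ, g = S.s δ := by
        intro g hg
        rcases List.mem_append.1 hg with h | h
        · exact hmem g (List.mem_cons_of_mem a (List.mem_of_mem_take h))
        · exact hmem g (List.mem_cons_of_mem a (List.mem_of_mem_drop h))
      have hstab' : ∀ β ∈ S.Pos, ∀ γ ∈ S.Φ,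
          (∀ v, γ v = β ((t.take i ++ t.drop (i+1)).prod v)) → γ ∈ S.Pos := by
        intro β hβ γ hγ he
        refine hstab β hβ γ hγ ?_
        rw [hprod]
        exact he
      rw [hprod]
      exact ihN _ hlen' hmem' hstab'

/-! ### transitivity on chambers -/

lemma chamber_trans : ∀ (N : ℕ) (v : V), (S.posFin.filter fun α => α v < 0).card ≤ N →
    (∀ α ∈ S.Φ, α v ≠ 0) →
    ∃ w ∈ Subgroup.closure (S.s '' S.Φ), ∀ α ∈ S.Pos, 0 < α (w⁻¹ v) := by
  intro N
  induction N with
  | zero =>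
    intro v hcard hreg
    refine ⟨1, Subgroup.one_mem _, fun α hα => ?_⟩
    have hne : α ∉ S.posFin.filter fun α => α v < 0 := by
      rw [Finset.card_eq_zero.1 (Nat.le_zero.1 hcard)]
      exact Finset.notMem_empty _
    rw [Finset.mem_filter] at hne
    push_neg at hne
    have h1 := hne (S.mem_posFin.2 hα)
    have h2 := hreg α (S.pos_sub hα)
    simp only [inv_one, Equiv.Perm.one_apply]
    exact lt_of_le_of_ne h1 (Ne.symm h2)
  | succ N ihN =>
    intro v hcard hreg
    by_cases h0' : (S.posFin.filter fun α => α v < 0).card = 0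
    · exact ihN v (by omega) hreg
    obtain ⟨δ, hδΔ, hδv⟩ : ∃ δ ∈ S.Δ, δ v < 0 := by
      by_contra hcon
      push_neg at hcon
      apply h0'
      rw [Finset.card_eq_zero, Finset.filter_eq_empty_iff]
      intro α hα
      rw [S.mem_posFin] at hα
      obtain ⟨c, hc, hce⟩ := S.decomp hα
      have hαv : α v = ∑ η ∈ S.ΔFin, c η * η v := by
        have := congrArg (fun φ : Module.Dual ℝ V => φ v) hce
        simpa only [sum_apply_eval] using this
      rw [hαv]
      push_neg
      apply Finset.sum_nonneg
      intro η hη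
      exact mul_nonneg (hc η) (hcon η (S.mem_ΔFin.1 hη))
    have hδΦ := S.Δ_sub hδΔ
    have hδPos := S.Δ_sub_pos hδΔ
    set v' := S.s δ v with hv'def
    have hval : ∀ α : Module.Dual ℝ V, α v' = (α - α (S.coroot δ) • δ) v := fun α =>
      S.dual_s hδΦ v
    have hreg' : ∀ α ∈ S.Φ, α v' ≠ 0 := by
      intro α hα
      rw [hval α]
      exact hreg _ (S.hrefl δ hδΦ α hα)
    have hcount : (S.posFin.filter fun α => α v' < 0).card
        = ((S.posFin.filter fun α => α v < 0).erase δ).card := by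
      apply Finset.card_bij' (i := fun α _ => α - α (S.coroot δ) • δ)
        (j := fun α _ => α - α (S.coroot δ) • δ)
      · intro α hα
        rw [Finset.mem_filter] at hα
        obtain ⟨hαP, hαv⟩ := hα
        rw [S.mem_posFin] at hαP
        have hαδ : α ≠ δ := by
          intro hc
          rw [hc, hval δ] at hαv
          simp only [LinearMap.sub_apply, LinearMap.smul_apply, smul_eq_mul,
            S.hpair δ hδΦ] at hαv
          linarith
        have htP : α - α (S.coroot δ) • δ ∈ S.Pos := S.simple_perm hδΔ hαP hαδ
        have htδ : α - α (S.coroot δ) • δ ≠ δ := by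
          intro hc
          have h1 := S.dual_t_invol (α := δ) (β := α) hδΦ
          rw [hc, S.hpair δ hδΦ] at h1
          have h2 : α = -δ := by rw [← h1]; module
          rw [h2] at hαP
          exact S.not_pos_neg hδPos hαP
        rw [Finset.mem_erase, Finset.mem_filter]
        exact ⟨htδ, S.mem_posFin.2 htP, by rw [← hval α]; exact hαv⟩
      · intro β hβ
        rw [Finset.mem_erase, Finset.mem_filter] at hβ
        obtain ⟨hβδ, hβP, hβv⟩ := hβ
        rw [S.mem_posFin] at hβP
        have htP : β - β (S.coroot δ) • δ ∈ S.Pos := S.simple_perm hδΔ hβP hβδ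
        rw [Finset.mem_filter]
        refine ⟨S.mem_posFin.2 htP, ?_⟩
        rw [hval _, S.dual_t_invol hδΦ]
        exact hβv
      · intro α _
        exact S.dual_t_invol hδΦ
      · intro β _
        exact S.dual_t_invol hδΦ
    have hδmem : δ ∈ S.posFin.filter fun α => α v < 0 :=
      Finset.mem_filter.2 ⟨S.mem_posFin.2 hδPos, hδv⟩
    have hcard' : (S.posFin.filter fun α => α v' < 0).card ≤ N := by
      rw [hcount, Finset.card_erase_of_mem hδmem]
      omega
    obtain ⟨w', hw', hpos'⟩ := ihN v' hcard' hreg'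
    refine ⟨S.s δ * w', mul_mem (Subgroup.subset_closure ⟨δ, hδΦ, rfl⟩) hw', ?_⟩
    intro α hα
    have : (S.s δ * w')⁻¹ v = w'⁻¹ v' := by
      rw [mul_inv_rev, Equiv.Perm.mul_apply, S.s_inv hδΦ, hv'def]
    rw [this]
    exact hpos' α hα

/-- pairing of roots with the coroot lattice is integral -/
lemma int_pairing {α : Module.Dual ℝ V} (hα : α ∈ S.Φ) {ℓ : V}
    (hℓ : ℓ ∈ AddSubgroup.closure (S.coroot '' S.Φ)) : ∃ n : ℤ, α ℓ = (n : ℝ) := by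
  induction hℓ using AddSubgroup.closure_induction with
  | mem c hc =>
    obtain ⟨γ, hγ, rfl⟩ := hc
    exact S.hcrys γ hγ α hα
  | zero => exact ⟨0, by simp⟩
  | add a b _ _ ha hb =>
    obtain ⟨m, hm⟩ := ha
    obtain ⟨n, hn⟩ := hb
    exact ⟨m + n, by rw [map_add, hm, hn]; push_cast; ring⟩
  | neg a _ ha =>
    obtain ⟨m, hm⟩ := ha
    exact ⟨-m, by rw [map_neg, hm]; push_cast; ring⟩

end RSSetup

/-- Let `Φ ⊂ V*` be a finite reduced crystallographic root system spanning `V*`, with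
coroot lattice `Q` and finite Weyl group `W₀` generated by the reflections `s α`.  Fix a
positive system `Pos ⊆ Φ` with positive cone `D`, let `x ∈ V`, let `y ∈ V` be special,
and set `Υ_x = {w ∈ W₀ : wD ⊆ D_x}`.  Then `int(X_{x,y}^+)` is the union over `w ∈ Υ_x`
of the sets `X_{x,y}^+ ∩ (y − x + wD)`, and these sets are pairwise disjoint. -/
theorem stmt_2 (V : Type*) [AddCommGroup V] [Module ℝ V] [FiniteDimensional ℝ V]
    (Φ : Set (Module.Dual ℝ V)) (hfin : Φ.Finite) (h0 : (0 : Module.Dual ℝ V) ∉ Φ)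
    (hspan : Submodule.span ℝ Φ = ⊤)
    (coroot : Module.Dual ℝ V → V)
    (hpair : ∀ α ∈ Φ, α (coroot α) = 2)
    (hreflco : ∀ α ∈ Φ, ∀ β ∈ Φ, coroot β - α (coroot β) • coroot α ∈ coroot '' Φ)
    (hrefl : ∀ α ∈ Φ, ∀ β ∈ Φ, β - β (coroot α) • α ∈ Φ)
    (hcrys : ∀ α ∈ Φ, ∀ β ∈ Φ, ∃ n : ℤ, β (coroot α) = (n : ℝ))
    (hred : ∀ α ∈ Φ, ∀ c : ℝ, c • α ∈ Φ → c = 1 ∨ c = -1)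
    -- the linear reflections `s α : v ↦ v − α(v) α^∨` for `α ∈ Φ`
    (s : Module.Dual ℝ V → Equiv.Perm V)
    (hs : ∀ α ∈ Φ, ∀ v : V, s α v = v - α v • coroot α)
    -- a positive system `Pos = Φ^+ ⊆ Φ`
    (Pos : Set (Module.Dual ℝ V))
    (hPos : ∃ v0 : V, (∀ α ∈ Φ, α v0 ≠ 0) ∧ Pos = {α ∈ Φ | 0 < α v0})
    (x y : V)
    -- `y` is special
    (hy : ∀ α ∈ Φ, ∃ n : ℤ, α y = (n : ℝ)) :
    ({ℓ : V | ℓ ∈ AddSubgroup.closure (coroot '' Φ) ∧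
        ∀ α ∈ Pos, (∃ n : ℤ, α x = (n : ℝ)) → α (y - x) < α ℓ} =
      ⋃ w ∈ {w : Equiv.Perm V | w ∈ Subgroup.closure (s '' Φ) ∧
          ⇑w '' {v : V | ∀ α ∈ Pos, 0 < α v} ⊆
            {v : V | ∀ α ∈ Pos, (∃ n : ℤ, α x = (n : ℝ)) → 0 < α v}},
        ({ℓ : V | ℓ ∈ AddSubgroup.closure (coroot '' Φ) ∧
            ∀ α ∈ Pos, (∃ n : ℤ, α x = (n : ℝ)) → α (y - x) ≤ α ℓ} ∩
          {ℓ : V | ∃ d : V, (∀ α ∈ Pos, 0 < α d) ∧ ℓ = y - x + w d})) ∧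
    ∀ w ∈ {w : Equiv.Perm V | w ∈ Subgroup.closure (s '' Φ) ∧
          ⇑w '' {v : V | ∀ α ∈ Pos, 0 < α v} ⊆
            {v : V | ∀ α ∈ Pos, (∃ n : ℤ, α x = (n : ℝ)) → 0 < α v}},
      ∀ w' ∈ {w : Equiv.Perm V | w ∈ Subgroup.closure (s '' Φ) ∧
          ⇑w '' {v : V | ∀ α ∈ Pos, 0 < α v} ⊆
            {v : V | ∀ α ∈ Pos, (∃ n : ℤ, α x = (n : ℝ)) → 0 < α v}},
        w ≠ w' →
        Disjoint
          ({ℓ : V | ℓ ∈ AddSubgroup.closure (coroot '' Φ) ∧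
              ∀ α ∈ Pos, (∃ n : ℤ, α x = (n : ℝ)) → α (y - x) ≤ α ℓ} ∩
            {ℓ : V | ∃ d : V, (∀ α ∈ Pos, 0 < α d) ∧ ℓ = y - x + w d})
          ({ℓ : V | ℓ ∈ AddSubgroup.closure (coroot '' Φ) ∧
              ∀ α ∈ Pos, (∃ n : ℤ, α x = (n : ℝ)) → α (y - x) ≤ α ℓ} ∩
            {ℓ : V | ∃ d : V, (∀ α ∈ Pos, 0 < α d) ∧ ℓ = y - x + w' d}) := by

  obtain ⟨v0, hv0, hPosEq⟩ := hPos
  let S : RSSetup V :=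
    ⟨Φ, hfin, h0, hspan, coroot, hpair, hrefl, hcrys, hred, s, hs, v0, hv0, Pos, hPosEq⟩
  have hSΦ : S.Φ = Φ := rfl
  have hSPos : S.Pos = Pos := rfl
  constructor
  · -- the decomposition of the interior
    ext ℓ
    simp only [Set.mem_setOf_eq, Set.mem_iUnion, Set.mem_inter_iff]
    constructor
    · rintro ⟨hℓQ, hℓlt⟩
      set v := ℓ - (y - x) with hvdef
      have hvpos : ∀ α ∈ Pos, (∃ n : ℤ, α x = (n : ℝ)) → 0 < α v := by
        intro α hαP hint
        have := hℓlt α hαP hint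
        rw [hvdef, map_sub]
        linarith
      have hregP : ∀ α ∈ Pos, α v ≠ 0 := by
        intro α hαP
        by_cases hint : ∃ n : ℤ, α x = (n : ℝ)
        · exact (hvpos α hαP hint).ne'
        · obtain ⟨m, hm⟩ := S.int_pairing (S.pos_sub hαP) hℓQ
          obtain ⟨p, hp⟩ := hy α (S.pos_sub hαP)
          intro hcon
          rw [hvdef, map_sub, map_sub, sub_eq_zero] at hcon
          apply hint
          refine ⟨p - m, ?_⟩
          push_cast
          rw [← hp, ← hm]
          linarith [hcon]
      have hreg : ∀ α ∈ S.Φ, α v ≠ 0 := by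
        intro α hα
        rcases S.pos_or_neg hα with h | h
        · exact hregP α h
        · have := hregP (-α) h
          simp only [LinearMap.neg_apply] at this
          intro hc
          exact this (by rw [hc, neg_zero])
      obtain ⟨w, hwcl, hwD⟩ :=
        S.chamber_trans (S.posFin.filter fun α => α v < 0).card v le_rfl hreg
      have hwss : ⇑w '' {z : V | ∀ α ∈ Pos, 0 < α z} ⊆
          {z : V | ∀ α ∈ Pos, (∃ n : ℤ, α x = (n : ℝ)) → 0 < α z} := by
        rintro _ ⟨d, hd, rfl⟩ α hαP hint
        obtain ⟨γ, hγΦ, hγe⟩ := (S.isW_of_mem hwcl).2.2.1 α (S.pos_sub hαP)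
        have hγPos : γ ∈ S.Pos := by
          rcases S.pos_or_neg hγΦ with h | h
          · exact h
          · exfalso
            have h1 : γ (w⁻¹ v) = α v := by
              rw [hγe (w⁻¹ v), Equiv.Perm.apply_inv_self]
            have h2 := hwD (-γ) h
            simp only [LinearMap.neg_apply] at h2
            have h3 := hvpos α hαP hint
            linarith [h1, h2, h3]
        have hγd := hγe d
        rw [← hγd]
        exact hd γ hγPos
      refine ⟨w, ⟨hwcl, hwss⟩, ⟨⟨hℓQ, fun α hα hint => (hℓlt α hα hint).le⟩,
        ⟨w⁻¹ v, fun α hα => hwD α hα, ?_⟩⟩⟩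
      rw [Equiv.Perm.apply_inv_self, hvdef]
      abel
    · rintro ⟨w, ⟨hwcl, hwsub⟩, ⟨hℓQ, hℓle⟩, ⟨d, hd, hde⟩⟩
      refine ⟨hℓQ, fun α hαP hint => ?_⟩
      have h1 : w d ∈ {z : V | ∀ α ∈ Pos, (∃ n : ℤ, α x = (n : ℝ)) → 0 < α z} :=
        hwsub ⟨d, hd, rfl⟩
      have h2 := h1 α hαP hint
      rw [hde, map_add]
      linarith
  · -- disjointness
    rintro w ⟨hwcl, hwsub⟩ w' ⟨hw'cl, hw'sub⟩ hne
    rw [Set.disjoint_left]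
    rintro ℓ ⟨⟨hQ, hle⟩, ⟨d, hd, hde⟩⟩ ⟨⟨hQ', hle'⟩, ⟨d', hd', hde'⟩⟩
    have hz : w d = w' d' := by
      have := hde.symm.trans hde'
      exact add_left_cancel this
    have hucl : w⁻¹ * w' ∈ Subgroup.closure (s '' Φ) := mul_mem (inv_mem hwcl) hw'cl
    have hud' : (w⁻¹ * w') d' = d := by
      rw [Equiv.Perm.mul_apply, ← hz, Equiv.Perm.inv_apply_self]
    have hu1 : w⁻¹ * w' = 1 := by
      obtain ⟨lst, hlmem, hlprod⟩ := S.exists_list hucl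
      rw [← hlprod]
      apply S.prod_simple_eq_one lst.length lst le_rfl hlmem
      intro β hβP γ hγΦ he
      rcases S.pos_or_neg hγΦ with h | h
      · exact h
      · exfalso
        have h1 : γ d' = β d := by
          rw [he d', hlprod, hud']
        have h2 : 0 < β d := hd β hβP
        have h3 := hd' (-γ) h
        simp only [LinearMap.neg_apply] at h3
        linarith
    exact hne (inv_mul_eq_one.mp hu1)
end

section
/- For every x ∈ V and every real number r ≥ 0, the set {z ∈ V : |⟨α, x − z⟩| ≤ r for all α ∈ Φ^l} coincides with the set {z ∈ V : |⟨α, x − z⟩| ≤ r for all α ∈ Φ}. Equivalently, for every v ∈ V, if |⟨α, v⟩| ≤ r for all long roots α then |⟨β, v⟩| ≤ r for all roots β. -/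
open scoped RealInnerProductSpace

/-- Reflections preserve norms. -/
lemma refl_norm_eq {V : Type*} [NormedAddCommGroup V] [InnerProductSpace ℝ V]
    (α β : V) (hα : ⟪α, α⟫ ≠ 0) :
    ‖β - (2 * ⟪β, α⟫ / ⟪α, α⟫) • α‖ = ‖β‖ := by
  have h : ⟪β - (2 * ⟪β, α⟫ / ⟪α, α⟫) • α, β - (2 * ⟪β, α⟫ / ⟪α, α⟫) • α⟫ = ⟪β, β⟫ := by
    simp only [inner_sub_left, inner_sub_right, real_inner_smul_left, real_inner_smul_right,
      real_inner_comm β α]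
    field_simp
    ring
  have h2 : ‖β - (2 * ⟪β, α⟫ / ⟪α, α⟫) • α‖ ^ 2 = ‖β‖ ^ 2 := by
    rw [← real_inner_self_eq_norm_sq, ← real_inner_self_eq_norm_sq]
    exact h
  nlinarith [norm_nonneg (β - (2 * ⟪β, α⟫ / ⟪α, α⟫) • α), norm_nonneg β]

/-- Let `Φ` be a finite reduced crystallographic irreducible root system spanning a
finite-dimensional real inner product space `V`, and let
`Φ^l = {α ∈ Φ | ∀ β ∈ Φ, ‖β‖ ≤ ‖α‖}` be its long roots.  For every `x ∈ V` and `r ≥ 0`,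
the set `{z | ∀ α ∈ Φ^l, |⟨α, x−z⟩| ≤ r}` coincides with `{z | ∀ α ∈ Φ, |⟨α, x−z⟩| ≤ r}`;
equivalently, if `|⟨α, v⟩| ≤ r` for all long roots `α` then `|⟨β, v⟩| ≤ r` for all roots
`β`. -/
theorem stmt_4 (V : Type*) [NormedAddCommGroup V] [InnerProductSpace ℝ V]
    [FiniteDimensional ℝ V]
    (Φ : Set V) (hfin : Φ.Finite) (h0 : (0 : V) ∉ Φ)
    (hspan : Submodule.span ℝ Φ = ⊤)
    (hcrys : ∀ α ∈ Φ, ∀ β ∈ Φ, ∃ n : ℤ, 2 * ⟪β, α⟫ / ⟪α, α⟫ = (n : ℝ))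
    (hrefl : ∀ α ∈ Φ, ∀ β ∈ Φ, β - (2 * ⟪β, α⟫ / ⟪α, α⟫) • α ∈ Φ)
    (hred : ∀ α ∈ Φ, ∀ c : ℝ, c • α ∈ Φ → c = 1 ∨ c = -1)
    (hirr : ∀ Φ₁ Φ₂ : Set V, Φ₁.Nonempty → Φ₂.Nonempty → Φ₁ ∪ Φ₂ = Φ →
      (∀ a ∈ Φ₁, ∀ b ∈ Φ₂, ⟪a, b⟫ = 0) → False) :
    ∀ (x : V) (r : ℝ), 0 ≤ r →
      ({z : V | ∀ α ∈ {α ∈ Φ | ∀ β ∈ Φ, ‖β‖ ≤ ‖α‖}, |⟪α, x - z⟫| ≤ r} =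
        {z : V | ∀ α ∈ Φ, |⟪α, x - z⟫| ≤ r}) ∧
      ∀ v : V, (∀ α ∈ {α ∈ Φ | ∀ β ∈ Φ, ‖β‖ ≤ ‖α‖}, |⟪α, v⟫| ≤ r) →
        ∀ β ∈ Φ, |⟪β, v⟫| ≤ r := by
  have hnz : ∀ γ ∈ Φ, ⟪γ, γ⟫ ≠ 0 := by
    intro γ hγ h
    exact h0 ((inner_self_eq_zero.mp h) ▸ hγ)
  intro x r hr
  suffices key : ∀ v : V, (∀ α ∈ {α ∈ Φ | ∀ β ∈ Φ, ‖β‖ ≤ ‖α‖}, |⟪α, v⟫| ≤ r) →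
      ∀ β ∈ Φ, |⟪β, v⟫| ≤ r by
    refine ⟨?_, key⟩
    ext z
    simp only [Set.mem_setOf_eq]
    exact ⟨fun h => key _ h, fun h α hα => h α hα.1⟩
  intro v hv β hβ
  by_cases hβl : ∀ γ ∈ Φ, ‖γ‖ ≤ ‖β‖
  · exact hv β ⟨hβ, hβl⟩
  push_neg at hβl
  obtain ⟨γ₀, hγ₀, hβγ₀⟩ := hβl
  -- a root of maximal norm exists
  obtain ⟨μ, hμΦ, hμmax⟩ := Set.Finite.exists_maximalFor (fun γ => ‖γ‖) Φ hfin ⟨β, hβ⟩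
  have hμlong : ∀ δ ∈ Φ, ‖δ‖ ≤ ‖μ‖ := by
    intro δ hδ
    rcases le_total ‖δ‖ ‖μ‖ with h | h
    · exact h
    · exact hμmax hδ h
  -- there is a long root not orthogonal to β (irreducibility)
  have hexists : ∃ α ∈ Φ, (∀ δ ∈ Φ, ‖δ‖ ≤ ‖α‖) ∧ ⟪β, α⟫ ≠ 0 := by
    by_contra hcon
    push_neg at hcon
    set Φ₁ : Set V := {γ ∈ Φ | ∀ α ∈ Φ, (∀ δ ∈ Φ, ‖δ‖ ≤ ‖α‖) → ⟪γ, α⟫ = 0} with hΦ₁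
    have hβ₁ : β ∈ Φ₁ := ⟨hβ, fun α hα hαl => hcon α hα hαl⟩
    have hμ₂ : μ ∈ Φ \ Φ₁ := ⟨hμΦ, fun h => hnz μ hμΦ (h.2 μ hμΦ hμlong)⟩
    refine hirr Φ₁ (Φ \ Φ₁) ⟨β, hβ₁⟩ ⟨μ, hμ₂⟩
      (Set.union_diff_cancel (fun γ hγ => hγ.1)) ?_
    intro a ha b hb
    by_contra hab
    have hb' : ¬ (∀ α ∈ Φ, (∀ δ ∈ Φ, ‖δ‖ ≤ ‖α‖) → ⟪b, α⟫ = 0) := fun h => hb.2 ⟨hb.1, h⟩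
    push_neg at hb'
    obtain ⟨α, hαΦ, hαl, hbα⟩ := hb'
    have hα' : α - (2 * ⟪α, b⟫ / ⟪b, b⟫) • b ∈ Φ := hrefl b hb.1 α hαΦ
    have hcne : 2 * ⟪α, b⟫ / ⟪b, b⟫ ≠ 0 := by
      refine div_ne_zero (mul_ne_zero two_ne_zero ?_) (hnz b hb.1)
      rw [real_inner_comm]; exact hbα
    have hα'long : ∀ δ ∈ Φ, ‖δ‖ ≤ ‖α - (2 * ⟪α, b⟫ / ⟪b, b⟫) • b‖ := by
      intro δ hδ
      rw [refl_norm_eq b α (hnz b hb.1)]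
      exact hαl δ hδ
    have h1 : ⟪a, α - (2 * ⟪α, b⟫ / ⟪b, b⟫) • b⟫ = 0 := ha.2 _ hα' hα'long
    have h2 : ⟪a, α⟫ = 0 := ha.2 α hαΦ hαl
    rw [inner_sub_right, real_inner_smul_right, h2, zero_sub, neg_eq_zero] at h1
    rcases mul_eq_zero.mp h1 with h | h
    · exact hcne h
    · exact hab h
  obtain ⟨α₀, hα₀Φ, hα₀l, hα₀ne⟩ := hexists
  -- arrange ⟪β, α⟫ > 0 (replace α₀ by -α₀ if needed)
  obtain ⟨α, hαΦ, hαl, hαpos⟩ : ∃ α ∈ Φ, (∀ δ ∈ Φ, ‖δ‖ ≤ ‖α‖) ∧ 0 < ⟪β, α⟫ := by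
    rcases hα₀ne.lt_or_gt with hneg | hpos
    · refine ⟨-α₀, ?_, ?_, ?_⟩
      · have h := hrefl α₀ hα₀Φ α₀ hα₀Φ
        have h2 : 2 * ⟪α₀, α₀⟫ / ⟪α₀, α₀⟫ = 2 := by
          rw [mul_div_assoc, div_self (hnz α₀ hα₀Φ), mul_one]
        rw [h2] at h
        have h3 : α₀ - (2 : ℝ) • α₀ = -α₀ := by
          rw [two_smul]; abel
        rwa [h3] at h
      · intro δ hδ; rw [norm_neg]; exact hα₀l δ hδ
      · rw [inner_neg_right]; linarith
    · exact ⟨α₀, hα₀Φ, hα₀l, hpos⟩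
  -- β is strictly shorter than α
  have hβs : ‖β‖ < ‖α‖ := lt_of_lt_of_le hβγ₀ (hαl γ₀ hγ₀)
  have hαα : ⟪α, α⟫ = ‖α‖ ^ 2 := real_inner_self_eq_norm_sq α
  have hββ : ⟪β, β⟫ = ‖β‖ ^ 2 := real_inner_self_eq_norm_sq β
  have hβ0 : (0:ℝ) < ‖β‖ := by
    rw [norm_pos_iff]
    exact fun h => h0 (h ▸ hβ)
  have hα0 : (0:ℝ) < ‖α‖ := hβ0.trans hβs
  have hααpos : (0:ℝ) < ⟪α, α⟫ := by rw [hαα]; positivity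
  have hββpos : (0:ℝ) < ⟪β, β⟫ := by rw [hββ]; positivity
  -- the Cartan integer of β against α equals 1
  obtain ⟨n, hn⟩ := hcrys α hαΦ β hβ
  have hCS : ⟪β, α⟫ ≤ ‖β‖ * ‖α‖ := real_inner_le_norm β α
  have hnpos : (0:ℝ) < (n : ℝ) := by
    rw [← hn]
    exact div_pos (by linarith) hααpos
  have hnlt2 : ((n : ℝ)) < 2 := by
    rw [← hn, div_lt_iff₀ hααpos, hαα]
    nlinarith
  have hn1 : n = 1 := by
    have h1 : 0 < n := by exact_mod_cast hnpos
    have h2 : n < 2 := by exact_mod_cast hnlt2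
    omega
  have hβα : 2 * ⟪β, α⟫ = ⟪α, α⟫ := by
    rw [hn1] at hn
    push_cast at hn
    field_simp at hn
    linarith
  -- the Cartan integer of α against β is at least 2
  obtain ⟨m, hm⟩ := hcrys β hβ α hαΦ
  have hm1 : (1:ℝ) < (m : ℝ) := by
    rw [← hm, lt_div_iff₀ hββpos, one_mul, real_inner_comm β α, hβα, hαα, hββ]
    nlinarith
  have hm2 : (2:ℝ) ≤ (m : ℝ) := by
    have : 1 < m := by exact_mod_cast hm1
    exact_mod_cast this
  -- the reflection of α in β
  have hγΦ : α - (2 * ⟪α, β⟫ / ⟪β, β⟫) • β ∈ Φ := hrefl β hβ α hαΦ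
  have hγnorm : ‖α - (2 * ⟪α, β⟫ / ⟪β, β⟫) • β‖ = ‖α‖ := refl_norm_eq β α (hnz β hβ)
  rw [hm] at hγΦ hγnorm
  have hγlong : ∀ δ ∈ Φ, ‖δ‖ ≤ ‖α - ((m : ℝ)) • β‖ := by
    intro δ hδ
    rw [hγnorm]
    exact hαl δ hδ
  have hαv := hv α ⟨hαΦ, hαl⟩
  have hγv := hv _ ⟨hγΦ, hγlong⟩
  have hsplit : ((m : ℝ)) * ⟪β, v⟫ = ⟪α, v⟫ - ⟪α - ((m : ℝ)) • β, v⟫ := by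
    rw [inner_sub_left, real_inner_smul_left]
    ring
  have hbound : |((m : ℝ)) * ⟪β, v⟫| ≤ 2 * r := by
    rw [hsplit]
    calc |⟪α, v⟫ - ⟪α - ((m : ℝ)) • β, v⟫| ≤ |⟪α, v⟫| + |⟪α - ((m : ℝ)) • β, v⟫| :=
          abs_sub _ _
      _ ≤ 2 * r := by linarith
  rw [abs_mul, abs_of_pos (by linarith : (0:ℝ) < (m:ℝ))] at hbound
  nlinarith [abs_nonneg ⟪β, v⟫]
end

section
/- Let x ∈ V and set Υ_x = {w ∈ W₀ : wD ⊆ D_x}. Then the topological closure of D_x equals the union over w ∈ Υ_x of the sets w·(closure of D); that is, the closed dominant cone of the subsystem Φ_x^lin is the union of the closed Weyl chambers of Φ that it contains. -/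
open Module Set

section Aux

variable {V : Type*} [NormedAddCommGroup V] [NormedSpace ℝ V] [FiniteDimensional ℝ V]

/-- Elements of the Weyl group are linear and stabilize `Φ` under dual action
(in both directions). -/
def stmt9IsLin (Φ : Set (Module.Dual ℝ V)) (w : Equiv.Perm V) : Prop :=
  ∃ L : V ≃ₗ[ℝ] V, ⇑w = ⇑L ∧ (∀ α ∈ Φ, α ∘ₗ (L : V →ₗ[ℝ] V) ∈ Φ) ∧
    (∀ α ∈ Φ, α ∘ₗ (L.symm : V →ₗ[ℝ] V) ∈ Φ)

theorem stmt9_isLin (Φ : Set (Module.Dual ℝ V)) (coroot : Module.Dual ℝ V → V)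
    (hpair : ∀ α ∈ Φ, α (coroot α) = 2)
    (hrefl : ∀ α ∈ Φ, ∀ β ∈ Φ, β - β (coroot α) • α ∈ Φ)
    (s : Module.Dual ℝ V → Equiv.Perm V)
    (hs : ∀ α ∈ Φ, ∀ v : V, s α v = v - α v • coroot α) :
    ∀ w ∈ Subgroup.closure (s '' Φ), stmt9IsLin Φ w := by
  let H : Subgroup (Equiv.Perm V) :=
  { carrier := {w | stmt9IsLin Φ w}
    one_mem' := ⟨LinearEquiv.refl ℝ V, rfl, by simp, by simp⟩
    mul_mem' := by
      rintro a b ⟨La, hLa, ha1, ha2⟩ ⟨Lb, hLb, hb1, hb2⟩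
      refine ⟨Lb ≪≫ₗ La, ?_, ?_, ?_⟩
      · funext z
        show a (b z) = La (Lb z)
        rw [hLa, hLb]
      · intro α hα
        have : α ∘ₗ ((Lb ≪≫ₗ La : V ≃ₗ[ℝ] V) : V →ₗ[ℝ] V)
            = (α ∘ₗ (La : V →ₗ[ℝ] V)) ∘ₗ (Lb : V →ₗ[ℝ] V) := rfl
        rw [this]
        exact hb1 _ (ha1 α hα)
      · intro α hα
        have : α ∘ₗ (((Lb ≪≫ₗ La : V ≃ₗ[ℝ] V)).symm : V →ₗ[ℝ] V)
            = (α ∘ₗ (Lb.symm : V →ₗ[ℝ] V)) ∘ₗ (La.symm : V →ₗ[ℝ] V) := by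
          ext z; rfl
        rw [this]
        exact ha2 _ (hb2 α hα)
    inv_mem' := by
      rintro a ⟨L, hL, h1, h2⟩
      refine ⟨L.symm, ?_, h2, by simpa using h1⟩
      funext z
      show a⁻¹ z = L.symm z
      apply a.injective
      rw [Equiv.Perm.inv_def, Equiv.apply_symm_apply, hL]
      exact (L.apply_symm_apply z).symm }
  have hgen : s '' Φ ⊆ H := by
    rintro - ⟨α, hα, rfl⟩
    set c := coroot α with hc
    set f : V →ₗ[ℝ] V := LinearMap.id - LinearMap.smulRight α c with hf
    have hfapp : ∀ z, f z = z - α z • c := fun z => rfl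
    have hff : f ∘ₗ f = LinearMap.id := by
      ext z
      have h2 : α c = 2 := hpair α hα
      simp only [LinearMap.comp_apply, LinearMap.id_apply, hfapp, map_sub, map_smul,
        smul_eq_mul, h2]
      rw [sub_smul, mul_smul]
      module
    set L : V ≃ₗ[ℝ] V := LinearEquiv.ofLinear f f hff hff with hLdef
    have hLapp : ∀ z, L z = z - α z • c := fun z => rfl
    have hLsymm : ∀ z, L.symm z = z - α z • c := fun z => rfl
    refine ⟨L, ?_, ?_, ?_⟩
    · funext z; rw [hs α hα z, hLapp]
    · intro β hβ
      have : β ∘ₗ (L : V →ₗ[ℝ] V) = β - β c • α := by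
        ext z
        simp only [LinearMap.comp_apply, LinearMap.sub_apply, LinearMap.smul_apply,
          smul_eq_mul]
        rw [show (L : V →ₗ[ℝ] V) z = z - α z • c from rfl]
        simp only [map_sub, map_smul, smul_eq_mul]
        ring
      rw [this]
      exact hrefl α hα β hβ
    · intro β hβ
      have : β ∘ₗ (L.symm : V →ₗ[ℝ] V) = β - β c • α := by
        ext z
        simp only [LinearMap.comp_apply, LinearMap.sub_apply, LinearMap.smul_apply,
          smul_eq_mul]
        rw [show (L.symm : V →ₗ[ℝ] V) z = z - α z • c from rfl]
        simp only [map_sub, map_smul, smul_eq_mul]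
        ring
      rw [this]
      exact hrefl α hα β hβ
  intro w hw
  exact Subgroup.closure_le H |>.mpr hgen hw

variable {V : Type*} [NormedAddCommGroup V] [NormedSpace ℝ V] [FiniteDimensional ℝ V]

theorem stmt9_sep (Φ : Set (Module.Dual ℝ V)) (hspan : Submodule.span ℝ Φ = ⊤)
    (a b : V) (h : ∀ α ∈ Φ, α a = α b) : a = b := by
  rw [← sub_eq_zero, ← Module.forall_dual_apply_eq_zero_iff ℝ (a - b)]
  intro φ
  have hφ : φ ∈ Submodule.span ℝ Φ := by rw [hspan]; trivial
  refine Submodule.span_induction (p := fun f _ => f (a - b) = 0) ?_ ?_ ?_ ?_ hφ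
  · intro α hα; rw [map_sub, h α hα, sub_self]
  · rfl
  · intro f g _ _ hf hg; simp [hf, hg]
  · intro r f _ hf; simp [hf]

theorem stmt9_finite (Φ : Set (Module.Dual ℝ V)) (hfin : Φ.Finite)
    (hspan : Submodule.span ℝ Φ = ⊤) (G : Subgroup (Equiv.Perm V))
    (hlin : ∀ w ∈ G, stmt9IsLin Φ w) :
    Set.Finite {w : Equiv.Perm V | w ∈ G} := by
  have : Finite ↥Φ := hfin.to_subtype
  set F : Equiv.Perm V → (↥Φ → V → ℝ) := fun w a z => (a : Module.Dual ℝ V) (w z) with hF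
  have himg : F '' {w | w ∈ G} ⊆ Set.pi Set.univ
      (fun _ : ↥Φ => (fun β : Module.Dual ℝ V => ⇑β) '' Φ) := by
    rintro - ⟨w, hw, rfl⟩ a -
    obtain ⟨L, hL, h1, -⟩ := hlin w hw
    refine ⟨(a : Module.Dual ℝ V) ∘ₗ (L : V →ₗ[ℝ] V), h1 _ a.2, ?_⟩
    funext z
    show (a : Module.Dual ℝ V) (L z) = (a : Module.Dual ℝ V) (w z)
    rw [hL]
  have hT : (Set.pi Set.univ
      (fun _ : ↥Φ => (fun β : Module.Dual ℝ V => ⇑β) '' Φ)).Finite :=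
    Set.Finite.pi fun _ => hfin.image _
  refine Set.Finite.of_finite_image (hT.subset himg) ?_
  intro w hw w' hw' heq
  ext z
  refine stmt9_sep Φ hspan _ _ fun α hα => ?_
  exact congrFun (congrFun heq ⟨α, hα⟩) z

theorem stmt9_rho_pos (Φ : Set (Module.Dual ℝ V)) (hfin : Φ.Finite)
    (coroot : Module.Dual ℝ V → V)
    (hpair : ∀ α ∈ Φ, α (coroot α) = 2)
    (hrefl : ∀ α ∈ Φ, ∀ β ∈ Φ, β - β (coroot α) • α ∈ Φ)
    (v0 : V) (hreg : ∀ α ∈ Φ, α v0 ≠ 0)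
    {β : Module.Dual ℝ V} (hβ : β ∈ Φ) (hβ0 : 0 < β v0) :
    0 < ∑ α ∈ hfin.toFinset.filter (fun α => 0 < α v0), α (coroot β) := by
  classical
  set Φf := hfin.toFinset with hΦf
  set Posf := Φf.filter (fun α => 0 < α v0) with hPosf
  set σ : Module.Dual ℝ V → Module.Dual ℝ V := fun α => α - α (coroot β) • β with hσ
  have hβ2 : β (coroot β) = 2 := hpair β hβ
  have hσΦ : ∀ α ∈ Φf, σ α ∈ Φf := by
    intro α hα
    rw [hΦf, Set.Finite.mem_toFinset] at *
    exact hrefl β hβ α hα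
  have hσσ : ∀ α, σ (σ α) = α := by
    intro α
    have : (α - α (coroot β) • β) (coroot β) = -(α (coroot β)) := by
      simp [hβ2]; ring
    simp only [hσ, this]
    module
  have hσinj : Function.Injective σ := Function.LeftInverse.injective hσσ
  set A := Posf.image σ with hA
  have hβPosf : β ∈ Posf := by
    rw [hPosf, Finset.mem_filter, hΦf, Set.Finite.mem_toFinset]
    exact ⟨hβ, hβ0⟩
  have hσβ : σ β = -β := by
    simp only [hσ, hβ2]
    module
  have hnegβA : -β ∈ A := by
    rw [hA, Finset.mem_image]
    exact ⟨β, hβPosf, hσβ⟩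
  have h1 : ∑ γ ∈ A, γ v0 = ∑ α ∈ Posf, (σ α) v0 :=
    Finset.sum_image (fun a _ b _ h => hσinj h)
  have h2 : ∑ α ∈ Posf, (σ α) v0
      = (∑ α ∈ Posf, α v0) - (∑ α ∈ Posf, α (coroot β)) * β v0 := by
    rw [Finset.sum_mul, ← Finset.sum_sub_distrib]
    refine Finset.sum_congr rfl fun α _ => ?_
    simp only [hσ, LinearMap.sub_apply, LinearMap.smul_apply, smul_eq_mul]
  have hA_lt : ∑ γ ∈ A, γ v0 < ∑ α ∈ Posf, α v0 := by
    have hsplit := Finset.sum_filter_add_sum_filter_not A (fun γ => γ ∈ Posf)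
      (fun γ => γ v0)
    have hle : ∑ γ ∈ A.filter (fun γ => γ ∈ Posf), γ v0 ≤ ∑ α ∈ Posf, α v0 := by
      refine Finset.sum_le_sum_of_subset_of_nonneg (fun γ hγ => (Finset.mem_filter.mp hγ).2)
        fun γ hγ _ => ?_
      exact le_of_lt (Finset.mem_filter.mp hγ).2
    have hneg : ∑ γ ∈ A.filter (fun γ => ¬ γ ∈ Posf), γ v0 < 0 := by
      have hne : (A.filter (fun γ => ¬ γ ∈ Posf)).Nonempty := by
        refine ⟨-β, Finset.mem_filter.mpr ⟨hnegβA, ?_⟩⟩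
        rw [hPosf, Finset.mem_filter]
        rintro ⟨-, hlt⟩
        simp only [LinearMap.neg_apply] at hlt
        linarith
      have hall : ∀ γ ∈ A.filter (fun γ => ¬ γ ∈ Posf), γ v0 < 0 := by
        intro γ hγ
        rw [Finset.mem_filter] at hγ
        obtain ⟨hγA, hγnot⟩ := hγ
        have hγΦf : γ ∈ Φf := by
          rw [hA] at hγA
          obtain ⟨α, hα, rfl⟩ := Finset.mem_image.mp hγA
          exact hσΦ α (Finset.mem_filter.mp hα).1
        have hγΦ : γ ∈ Φ := by rwa [hΦf, Set.Finite.mem_toFinset] at hγΦf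
        have hne0 := hreg γ hγΦ
        have : ¬ (0 < γ v0) := fun h => hγnot (Finset.mem_filter.mpr ⟨hγΦf, h⟩)
        cases lt_or_gt_of_ne hne0 with
        | inl h => exact h
        | inr h => exact absurd h this
      calc ∑ γ ∈ A.filter (fun γ => ¬ γ ∈ Posf), γ v0
          < ∑ γ ∈ A.filter (fun γ => ¬ γ ∈ Posf), (0:ℝ) :=
            Finset.sum_lt_sum_of_nonempty hne hall
        _ = 0 := Finset.sum_const_zero
    linarith
  have hkey : 0 < (∑ α ∈ Posf, α (coroot β)) * β v0 := by
    rw [h1, h2] at hA_lt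
    linarith
  by_contra hc
  push_neg at hc
  nlinarith
theorem stmt9_dominant (Φ : Set (Module.Dual ℝ V)) (hfin : Φ.Finite)
    (hspan : Submodule.span ℝ Φ = ⊤)
    (coroot : Module.Dual ℝ V → V)
    (hpair : ∀ α ∈ Φ, α (coroot α) = 2)
    (hrefl : ∀ α ∈ Φ, ∀ β ∈ Φ, β - β (coroot α) • α ∈ Φ)
    (s : Module.Dual ℝ V → Equiv.Perm V)
    (hs : ∀ α ∈ Φ, ∀ v : V, s α v = v - α v • coroot α)
    (v0 : V) (hreg : ∀ α ∈ Φ, α v0 ≠ 0) (y : V) :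
    ∃ w ∈ Subgroup.closure (s '' Φ), ∀ α ∈ Φ, 0 < α v0 → 0 ≤ α (w y) := by
  classical
  set G := Subgroup.closure (s '' Φ) with hG
  have hGfin : Set.Finite {w : Equiv.Perm V | w ∈ G} :=
    stmt9_finite Φ hfin hspan G (stmt9_isLin Φ coroot hpair hrefl s hs)
  set Posf := hfin.toFinset.filter (fun α => 0 < α v0) with hPosf
  set O : Set V := (fun w : Equiv.Perm V => w y) '' {w | w ∈ G} with hO
  have hOfin : O.Finite := hGfin.image _
  have hOne : O.Nonempty := ⟨y, ⟨1, show (1:Equiv.Perm V) ∈ G from Subgroup.one_mem _, rfl⟩⟩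
  obtain ⟨u, huO, hmax⟩ := Set.exists_max_image O (fun u => ∑ α ∈ Posf, α u) hOfin hOne
  obtain ⟨w, hwG, rfl⟩ := huO
  refine ⟨w, hwG, ?_⟩
  intro β hβΦ hβv0
  by_contra hneg
  push_neg at hneg
  have hrc : 0 < ∑ α ∈ Posf, α (coroot β) :=
    stmt9_rho_pos Φ hfin coroot hpair hrefl v0 hreg hβΦ hβv0
  have hmemG : s β * w ∈ G := by
    exact Subgroup.mul_mem _ (Subgroup.subset_closure ⟨β, hβΦ, rfl⟩) hwG
  have hmem : (s β * w) y ∈ O := ⟨s β * w, hmemG, rfl⟩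
  have hval : ∑ α ∈ Posf, α ((s β * w) y)
      = (∑ α ∈ Posf, α (w y)) - β (w y) * ∑ α ∈ Posf, α (coroot β) := by
    rw [Finset.mul_sum, ← Finset.sum_sub_distrib]
    refine Finset.sum_congr rfl fun α _ => ?_
    rw [Equiv.Perm.mul_apply, hs β hβΦ]
    simp only [map_sub, map_smul, smul_eq_mul]
  have := hmax _ hmem
  rw [hval] at this
  nlinarith

end Aux


/-- Let `Φ ⊂ V*` be a finite reduced crystallographic root system spanning `V*`, with
finite Weyl group `W₀` generated by the reflections `s α`.  Fix a positive system
`Pos ⊆ Φ` with positive cone `D`, let `x ∈ V`, and set `Υ_x = {w ∈ W₀ : wD ⊆ D_x}`.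
Then the topological closure of `D_x` equals the union over `w ∈ Υ_x` of the sets
`w · (closure of D)`. -/
theorem stmt_9 (V : Type*) [NormedAddCommGroup V] [NormedSpace ℝ V]
    [FiniteDimensional ℝ V]
    (Φ : Set (Module.Dual ℝ V)) (hfin : Φ.Finite) (h0 : (0 : Module.Dual ℝ V) ∉ Φ)
    (hspan : Submodule.span ℝ Φ = ⊤)
    (coroot : Module.Dual ℝ V → V)
    (hpair : ∀ α ∈ Φ, α (coroot α) = 2)
    (hreflco : ∀ α ∈ Φ, ∀ β ∈ Φ, coroot β - α (coroot β) • coroot α ∈ coroot '' Φ)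
    (hrefl : ∀ α ∈ Φ, ∀ β ∈ Φ, β - β (coroot α) • α ∈ Φ)
    (hcrys : ∀ α ∈ Φ, ∀ β ∈ Φ, ∃ n : ℤ, β (coroot α) = (n : ℝ))
    (hred : ∀ α ∈ Φ, ∀ c : ℝ, c • α ∈ Φ → c = 1 ∨ c = -1)
    -- the linear reflections `s α : v ↦ v − α(v) α^∨` for `α ∈ Φ`
    (s : Module.Dual ℝ V → Equiv.Perm V)
    (hs : ∀ α ∈ Φ, ∀ v : V, s α v = v - α v • coroot α)
    -- a positive system `Pos = Φ^+ ⊆ Φ`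
    (Pos : Set (Module.Dual ℝ V))
    (hPos : ∃ v0 : V, (∀ α ∈ Φ, α v0 ≠ 0) ∧ Pos = {α ∈ Φ | 0 < α v0})
    (x : V) :
    closure {v : V | ∀ α ∈ Pos, (∃ n : ℤ, α x = (n : ℝ)) → 0 < α v} =
      ⋃ w ∈ {w : Equiv.Perm V | w ∈ Subgroup.closure (s '' Φ) ∧
          ⇑w '' {v : V | ∀ α ∈ Pos, 0 < α v} ⊆
            {v : V | ∀ α ∈ Pos, (∃ n : ℤ, α x = (n : ℝ)) → 0 < α v}},
        ⇑w '' closure {v : V | ∀ α ∈ Pos, 0 < α v} := by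
  classical
  obtain ⟨v0, hreg, hPosEq⟩ := hPos
  set D : Set V := {v : V | ∀ α ∈ Pos, 0 < α v} with hD
  set Dx : Set V := {v : V | ∀ α ∈ Pos, (∃ n : ℤ, α x = (n : ℝ)) → 0 < α v} with hDx
  have hPosmem : ∀ α, α ∈ Pos ↔ α ∈ Φ ∧ 0 < α v0 := by
    intro α; rw [hPosEq]; exact Set.mem_sep_iff
  have hlin := stmt9_isLin Φ coroot hpair hrefl s hs
  have hcontD : ∀ α : Module.Dual ℝ V, Continuous ⇑α := fun α =>
    α.continuous_of_finiteDimensional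
  refine Set.Subset.antisymm ?_ ?_
  · -- hard direction
    intro v hv
    have hDxv : ∀ α ∈ Pos, (∃ n : ℤ, α x = (n : ℝ)) → 0 ≤ α v := by
      intro α hα hint
      have hsub : Dx ⊆ {u | 0 ≤ α u} := fun u hu => le_of_lt (hu α hα hint)
      have hcl : IsClosed {u : V | 0 ≤ α u} := isClosed_le continuous_const (hcontD α)
      exact closure_minimal hsub hcl hv
    set g : ℝ → V := fun t => v + t • (v0 - v) with hg
    have hgcont : Continuous g := by
      exact continuous_const.add (continuous_id.smul continuous_const)
    have hgval : ∀ (α : Module.Dual ℝ V) (t : ℝ), α (g t) = α v + t * (α v0 - α v) := by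
      intro α t
      simp only [hg, map_add, map_smul, map_sub, smul_eq_mul]
    set U : Set V := ⋂ β ∈ Φ, {v' : V | (0 < β v → 0 < β v') ∧ (β v < 0 → β v' < 0)}
      with hU
    have hUopen : IsOpen U := by
      refine Set.Finite.isOpen_biInter hfin fun β _ => ?_
      have hsplit : {v' : V | (0 < β v → 0 < β v') ∧ (β v < 0 → β v' < 0)}
          = {v' : V | 0 < β v → 0 < β v'} ∩ {v' : V | β v < 0 → β v' < 0} := rfl
      rw [hsplit]
      refine IsOpen.inter ?_ ?_
      · by_cases h : 0 < β v
        · simp only [h, true_implies]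
          exact isOpen_lt continuous_const (hcontD β)
        · simp only [h, false_implies, Set.setOf_true]
          exact isOpen_univ
      · by_cases h : β v < 0
        · simp only [h, true_implies]
          exact isOpen_lt (hcontD β) continuous_const
        · simp only [h, false_implies, Set.setOf_true]
          exact isOpen_univ
    have hUprop : ∀ v', v' ∈ U → ∀ β ∈ Φ,
        (0 < β v → 0 < β v') ∧ (β v < 0 → β v' < 0) := by
      intro v' h β hβ
      exact Set.mem_iInter₂.mp h β hβ
    have hvU : v ∈ U := Set.mem_iInter₂.mpr fun β _ => ⟨fun h => h, fun h => h⟩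
    have hg0 : g 0 = v := by simp [hg]
    have hnhds : g ⁻¹' U ∈ nhds (0 : ℝ) := by
      have h1 : ContinuousAt g 0 := hgcont.continuousAt
      have h2 : U ∈ nhds (g 0) := hUopen.mem_nhds (by rw [hg0]; exact hvU)
      exact h1.preimage_mem_nhds h2
    obtain ⟨ε, hε, hball⟩ := Metric.mem_nhds_iff.mp hnhds
    have hballU : ∀ t : ℝ, |t| < ε → g t ∈ U := by
      intro t ht
      apply hball
      simpa [Real.dist_eq] using ht
    set t₀ : ℝ := min (ε / 2) (1 / 2) with ht₀
    have ht₀pos : 0 < t₀ := lt_min (by linarith) (by norm_num)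
    have ht₀ε : t₀ < ε := lt_of_le_of_lt (min_le_left _ _) (by linarith)
    have ht₀1 : t₀ < 1 := lt_of_le_of_lt (min_le_right _ _) (by norm_num)
    have ht₀absε : |t₀| < ε := by rw [abs_of_pos ht₀pos]; exact ht₀ε
    have hgDx : ∀ t : ℝ, 0 < t → t ≤ 1 → g t ∈ Dx := by
      intro t h1 h2 α hα hint
      have hαv := hDxv α hα hint
      have hαv0 : 0 < α v0 := ((hPosmem α).mp hα).2
      rw [hgval]
      nlinarith
    have hregU : ∀ t : ℝ, 0 < t → |t| < ε → ∀ γ ∈ Φ, γ (g t) ≠ 0 := by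
      intro t ht htε γ hγ
      rcases lt_trichotomy (γ v) 0 with h | h | h
      · exact ne_of_lt ((hUprop _ (hballU t htε) γ hγ).2 h)
      · rw [hgval, h]
        simp only [zero_add, sub_zero]
        exact mul_ne_zero (ne_of_gt ht) (hreg γ hγ)
      · exact ne_of_gt ((hUprop _ (hballU t htε) γ hγ).1 h)
    obtain ⟨w', hw'G, hdom⟩ :=
      stmt9_dominant Φ hfin hspan coroot hpair hrefl s hs v0 hreg (g t₀)
    obtain ⟨L, hL, hL1, hL2⟩ := hlin w' hw'G
    have hw'app : ∀ z, w' z = L z := fun z => by rw [hL]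
    have hdom' : ∀ α ∈ Φ, 0 < α v0 → 0 < α (w' (g t₀)) := by
      intro α hα hα0
      refine lt_of_le_of_ne (hdom α hα hα0) ?_
      have hcompval : α (w' (g t₀)) = (α ∘ₗ (L : V →ₗ[ℝ] V)) (g t₀) := by
        rw [LinearMap.comp_apply, LinearEquiv.coe_coe, hw'app]
      rw [hcompval]
      exact Ne.symm (hregU t₀ ht₀pos ht₀absε _ (hL1 α hα))
    have hw'D : ∀ t : ℝ, 0 < t → |t| < ε → w' (g t) ∈ D := by
      intro t ht htε α hα
      obtain ⟨hαΦ, hαv0⟩ := (hPosmem α).mp hα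
      set γ : Module.Dual ℝ V := α ∘ₗ (L : V →ₗ[ℝ] V) with hγdef
      have hγΦ : γ ∈ Φ := hL1 α hαΦ
      have hev : ∀ t', α (w' (g t')) = γ (g t') := by
        intro t'
        rw [hγdef, LinearMap.comp_apply, LinearEquiv.coe_coe, hw'app]
      show 0 < α (w' (g t))
      rw [hev]
      have hstar : 0 < γ (g t₀) := by rw [← hev]; exact hdom' α hαΦ hαv0
      rcases lt_trichotomy (γ v) 0 with h | h | h
      · exact absurd hstar
          (not_lt.mpr (le_of_lt ((hUprop _ (hballU t₀ ht₀absε) γ hγΦ).2 h)))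
      · have hz : ∀ t', γ (g t') = t' * γ v0 := by
          intro t'; rw [hgval, h]; ring
        have hγv0 : 0 < γ v0 := by
          have h' := hstar
          rw [hz] at h'
          nlinarith
        rw [hz]
        exact mul_pos ht hγv0
      · exact (hUprop _ (hballU t htε) γ hγΦ).1 h
    set w : Equiv.Perm V := w'⁻¹ with hwdef
    have hwG : w ∈ Subgroup.closure (s '' Φ) := Subgroup.inv_mem _ hw'G
    have hwapp : ∀ z, w z = L.symm z := by
      intro z
      apply w'.injective
      rw [hwdef, Equiv.Perm.inv_def, Equiv.apply_symm_apply, hw'app, L.apply_symm_apply]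
    have hwDsub : ⇑w '' D ⊆ Dx := by
      rintro - ⟨d, hd, rfl⟩ α hα hint
      obtain ⟨hαΦ, hαv0⟩ := (hPosmem α).mp hα
      set β : Module.Dual ℝ V := α ∘ₗ (L.symm : V →ₗ[ℝ] V) with hβdef
      have hβΦ : β ∈ Φ := hL2 α hαΦ
      have hev : ∀ z, α (w z) = β z := by
        intro z
        rw [hβdef, LinearMap.comp_apply, LinearEquiv.coe_coe, hwapp]
      show 0 < α (w d)
      rw [hev]
      have hβv0 : 0 < β v0 := by
        by_contra hc
        push_neg at hc
        have hβv0' : β v0 < 0 := lt_of_le_of_ne hc (hreg β hβΦ)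
        have hnegβ : -β ∈ Φ := by
          have h1 := hrefl β hβΦ β hβΦ
          rw [hpair β hβΦ] at h1
          have h2 : β - (2 : ℝ) • β = -β := by module
          rwa [h2] at h1
        have hneg0 : 0 < (-β) v0 := by
          rw [LinearMap.neg_apply]
          linarith
        have hcontra := hdom' (-β) hnegβ hneg0
        have hβval : β (w' (g t₀)) = α (g t₀) := by
          rw [hβdef, hw'app, LinearMap.comp_apply, LinearEquiv.coe_coe,
            L.symm_apply_apply]
        have hpos : 0 < α (g t₀) := hgDx t₀ ht₀pos (le_of_lt ht₀1) α hα hint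
        rw [LinearMap.neg_apply, hβval] at hcontra
        linarith
      exact hd β ((hPosmem β).mpr ⟨hβΦ, hβv0⟩)
    have hwmem : w ∈ {w : Equiv.Perm V | w ∈ Subgroup.closure (s '' Φ) ∧
        ⇑w '' D ⊆ Dx} := ⟨hwG, hwDsub⟩
    refine Set.mem_biUnion hwmem ?_
    refine ⟨w' v, ?_, ?_⟩
    · rw [Metric.mem_closure_iff]
      intro δ hδ
      set N : ℝ := ‖L (v0 - v)‖ with hN
      have hNpos : 0 ≤ N := norm_nonneg _
      set t : ℝ := min t₀ (δ / (N + 1)) with htdef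
      have htpos : 0 < t := lt_min ht₀pos (div_pos hδ (by linarith))
      have htε : |t| < ε := by
        rw [abs_of_pos htpos]
        exact lt_of_le_of_lt (min_le_left _ _) ht₀ε
      refine ⟨w' (g t), hw'D t htpos htε, ?_⟩
      rw [hw'app, hw'app]
      have hLg : L (g t) = L v + t • L (v0 - v) := by
        rw [hg]; simp only [map_add, map_smul]
      rw [hLg, dist_eq_norm]
      have hsimp : L v - (L v + t • L (v0 - v)) = -(t • L (v0 - v)) := by module
      rw [hsimp, norm_neg, norm_smul, Real.norm_eq_abs, abs_of_pos htpos]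
      have htle : t ≤ δ / (N + 1) := min_le_right _ _
      have h2 : t * (N + 1) ≤ δ := by
        rw [← le_div_iff₀ (by linarith : (0:ℝ) < N + 1)]
        exact htle
      nlinarith
    · rw [hwdef]; exact Equiv.symm_apply_apply w' v
  · -- easy direction
    refine Set.iUnion₂_subset ?_
    rintro w ⟨hwG, hwD⟩
    obtain ⟨L, hL, -, -⟩ := hlin w hwG
    have hwcont : Continuous ⇑w := by
      rw [hL]
      exact (L : V →ₗ[ℝ] V).continuous_of_finiteDimensional
    exact subset_trans (image_closure_subset_closure_image hwcont) (closure_mono hwD)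
end
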